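/- arXiv:1312.4163 — 12 statements merged into one kernel-verified Lean document; each statement's English description precedes it below -/
import Mathlib

section
/- Let A be a real m×n matrix and b ∈ ℝ^m. If x is the unique least ℓ1-norm nonnegative solution to the system Ax = b, then there exists a vector η ∈ ℝ^n in the range space R(Aᵀ) = {Aᵀu : u ∈ ℝ^m} such that ηᵢ = 1 for all i ∈ J₊ and ηᵢ < 1 for all i ∉ J₊, where J₊ = {i : xᵢ > 0}. -/
open Finset
open scoped RealInnerProductSpace

/-! ### Auxiliary material: Farkas' lemma for finitely generated cones -/

section FarkasTools

set_option linter.unusedSectionVars false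

variable {E : Type*} [NormedAddCommGroup E] [InnerProductSpace ℝ E] [FiniteDimensional ℝ E]
variable {ι : Type*} [Fintype ι] [DecidableEq ι]

/-- The cone generated by a finite family of vectors. -/
def coneOf (w : ι → E) : Set E :=
  {c | ∃ l : ι → ℝ, (∀ i, 0 ≤ l i) ∧ ∑ i, l i • w i = c}

lemma zero_mem_coneOf (w : ι → E) : (0 : E) ∈ coneOf w :=
  ⟨0, fun _ => le_refl 0, by simp⟩

lemma single_mem_coneOf (w : ι → E) (i : ι) : w i ∈ coneOf w := by
  refine ⟨fun j => if j = i then 1 else 0, fun j => by positivity, ?_⟩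
  simp [ite_smul, Finset.sum_ite_eq']

/-- Carathéodory-type reduction: a conic combination can be rewritten so that the support
is linearly independent. -/
lemma coneOf_caratheodory (w : ι → E) :
    ∀ (s : Finset ι) (l : ι → ℝ), (∀ i, 0 ≤ l i) → (∀ i ∉ s, l i = 0) →
      ∃ (s' : Finset ι) (l' : ι → ℝ), LinearIndependent ℝ (fun i : s' => w i) ∧
        (∀ i, 0 ≤ l' i) ∧ (∀ i ∉ s', l' i = 0) ∧ ∑ i, l' i • w i = ∑ i, l i • w i := by
  intro s
  induction s using Finset.strongInduction with
  | _ s ih =>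
    intro l hl hls
    by_cases hind : LinearIndependent ℝ (fun i : s => w i)
    · exact ⟨s, l, hind, hl, hls, rfl⟩
    · obtain ⟨g, hg0, i0, hi0⟩ := Fintype.not_linearIndependent_iff.mp hind
      set G : ι → ℝ := fun i => if h : i ∈ s then g ⟨i, h⟩ else 0 with hG
      have hGs : ∀ i ∉ s, G i = 0 := fun i hi => by simp [hG, hi]
      have hGsum : ∑ i, G i • w i = 0 := by
        rw [← Finset.sum_subset s.subset_univ (fun i _ hi => by rw [hGs i hi, zero_smul])]
        rw [← hg0, ← Finset.sum_attach s (fun i => G i • w i)]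
        exact Finset.sum_congr rfl fun i _ => by simp [hG, i.2]
      have hGne : ∃ i ∈ s, G i ≠ 0 := ⟨i0, i0.2, by simpa [hG, i0.2] using hi0⟩
      have key : ∀ G : ι → ℝ, (∀ i ∉ s, G i = 0) → ∑ i, G i • w i = 0 →
          (∃ i ∈ s, 0 < G i) →
          ∃ (s' : Finset ι) (l' : ι → ℝ), LinearIndependent ℝ (fun i : s' => w i) ∧
            (∀ i, 0 ≤ l' i) ∧ (∀ i ∉ s', l' i = 0) ∧ ∑ i, l' i • w i = ∑ i, l i • w i := by
        intro G hGs hGsum hpos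
        set T : Finset ι := s.filter (fun i => 0 < G i) with hT
        have hTne : T.Nonempty := by
          obtain ⟨i, hi, hGi⟩ := hpos; exact ⟨i, Finset.mem_filter.mpr ⟨hi, hGi⟩⟩
        obtain ⟨i₁, hi₁T, hi₁min⟩ := T.exists_min_image (fun i => l i / G i) hTne
        have hi₁s : i₁ ∈ s := (Finset.mem_filter.mp hi₁T).1
        have hGi₁ : 0 < G i₁ := (Finset.mem_filter.mp hi₁T).2
        set t : ℝ := l i₁ / G i₁ with ht
        have ht0 : 0 ≤ t := div_nonneg (hl i₁) hGi₁.le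
        set l' : ι → ℝ := fun i => l i - t * G i with hl'
        have hl'0 : ∀ i, 0 ≤ l' i := by
          intro i
          by_cases hGi : 0 < G i
          · by_cases his : i ∈ s
            · have h1 : t ≤ l i / G i := hi₁min i (Finset.mem_filter.mpr ⟨his, hGi⟩)
              have h2 : t * G i ≤ l i := (le_div_iff₀ hGi).mp h1
              simp only [hl']; linarith
            · exact absurd (hGs i his) hGi.ne'
          · have : t * G i ≤ 0 := mul_nonpos_of_nonneg_of_nonpos ht0 (not_lt.mp hGi)
            simp only [hl']; linarith [hl i]
        have hl'i₁ : l' i₁ = 0 := by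
          simp only [hl', ht]; rw [div_mul_cancel₀ _ hGi₁.ne', sub_self]
        have hl's : ∀ i ∉ s.erase i₁, l' i = 0 := by
          intro i hi
          by_cases hii : i = i₁
          · rw [hii]; exact hl'i₁
          · have h2 : i ∉ s := fun hs' => hi (Finset.mem_erase.mpr ⟨hii, hs'⟩)
            simp [hl', hls i h2, hGs i h2]
        have hsum' : ∑ i, l' i • w i = ∑ i, l i • w i := by
          simp only [hl', sub_smul, mul_smul, Finset.sum_sub_distrib, ← Finset.smul_sum,
            hGsum, smul_zero, sub_zero]
        obtain ⟨s'', l'', h1, h2, h3, h4⟩ :=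
          ih (s.erase i₁) (Finset.erase_ssubset hi₁s) l' hl'0 hl's
        exact ⟨s'', l'', h1, h2, h3, h4.trans hsum'⟩
      rcases hGne with ⟨i, his, hGi⟩
      rcases lt_or_gt_of_ne hGi with hneg | hpos
      · exact key (-G) (fun i hi => by simp [hGs i hi]) (by simpa using hGsum)
          ⟨i, his, by simpa using hneg⟩
      · exact key G hGs hGsum ⟨i, his, hpos⟩

/-- The linear map sending coefficients to their combination. -/
def comboMap (v : ι → E) : (ι → ℝ) →ₗ[ℝ] E where
  toFun l := ∑ i, l i • v i
  map_add' a b := by simp [add_smul, Finset.sum_add_distrib]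
  map_smul' r a := by simp [smul_smul, Finset.smul_sum]

lemma isClosed_coneOf (w : ι → E) : IsClosed (coneOf w) := by
  have key : coneOf w = ⋃ s ∈ {s : Finset ι | LinearIndependent ℝ (fun i : s => w i)},
      (comboMap (fun i : s => w i)) '' {l | ∀ i, 0 ≤ l i} := by
    ext c
    constructor
    · rintro ⟨l, hl, hsum⟩
      obtain ⟨s', l', hind, hl', hls', hsum'⟩ :=
        coneOf_caratheodory w Finset.univ l hl (by simp)
      refine Set.mem_biUnion hind ⟨fun i : s' => l' i, fun i => hl' i, ?_⟩
      show ∑ i : s', l' i.1 • w i.1 = c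
      rw [Finset.sum_coe_sort s' (fun i => l' i • w i)]
      rw [Finset.sum_subset s'.subset_univ (fun i _ hi => by rw [hls' i hi, zero_smul])]
      rw [hsum', hsum]
    · intro hc
      obtain ⟨s, hs, l, hl, hsum⟩ := Set.mem_iUnion₂.mp hc
      refine ⟨fun i => if h : i ∈ s then l ⟨i, h⟩ else 0, fun i => ?_, ?_⟩
      · by_cases h : i ∈ s
        · simpa [h] using hl ⟨i, h⟩
        · simp [h]
      · rw [← hsum]
        show _ = ∑ i : s, l i • w i.1
        rw [← Finset.sum_subset s.subset_univ (fun i _ hi => by simp [hi]),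
          ← Finset.sum_coe_sort s (fun i => (if h : i ∈ s then l ⟨i, h⟩ else 0) • w i)]
        exact Finset.sum_congr rfl fun i _ => by simp [i.2]
  rw [key]
  refine Set.Finite.isClosed_biUnion (Set.toFinite _) fun s hs => ?_
  have hker : LinearMap.ker (comboMap (fun i : s => w i)) = ⊥ := by
    rw [LinearMap.ker_eq_bot']
    intro l hl0
    exact funext (Fintype.linearIndependent_iff.mp hs l hl0)
  have hemb := LinearMap.isClosedEmbedding_of_injective (f := comboMap (fun i : s => w i)) hker
  refine hemb.isClosedMap _ ?_
  have : {l : s → ℝ | ∀ i, 0 ≤ l i} = ⋂ i : s, {l : s → ℝ | 0 ≤ l i} := by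
    ext l; simp [Set.mem_iInter]
  rw [this]
  exact isClosed_iInter fun i => isClosed_le continuous_const (continuous_apply i)

/-- Farkas' lemma. -/
lemma farkas (w : ι → E) (c : E) (hc : c ∉ coneOf w) :
    ∃ v : E, (∀ i, ⟪w i, v⟫ ≤ 0) ∧ 0 < ⟪c, v⟫ := by
  let K : ConvexCone ℝ E :=
    { carrier := coneOf w
      smul_mem' := by
        rintro r hr z ⟨l, hl, hsum⟩
        exact ⟨fun i => r * l i, fun i => mul_nonneg hr.le (hl i),
          by simp [mul_smul, ← Finset.smul_sum, hsum]⟩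
      add_mem' := by
        rintro z ⟨l, hl, hsum⟩ z' ⟨l', hl', hsum'⟩
        exact ⟨fun i => l i + l' i, fun i => add_nonneg (hl i) (hl' i),
          by simp [add_smul, Finset.sum_add_distrib, hsum, hsum']⟩ }
  let C : ProperCone ℝ E :=
    { carrier := coneOf w
      zero_mem' := zero_mem_coneOf w
      add_mem' := fun {a b} ha hb => K.add_mem' ha hb
      smul_mem' := by
        rintro r z ⟨l, hl, hsum⟩
        exact ⟨fun i => (r : ℝ) * l i, fun i => mul_nonneg r.2 (hl i),
          by simp [NNReal.smul_def, mul_smul, ← Finset.smul_sum, hsum]⟩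
      isClosed' := isClosed_coneOf w }
  obtain ⟨y, hy1, hy2⟩ : ∃ y, (∀ x ∈ K, 0 ≤ ⟪x, y⟫) ∧ ⟪y, c⟫ < 0 := by
    obtain ⟨y, h1, h2⟩ := ProperCone.hyperplane_separation' C hc
    exact ⟨y, h1, by rwa [real_inner_comm]⟩
  refine ⟨-y, fun i => ?_, ?_⟩
  · have := hy1 _ (single_mem_coneOf w i)
    rw [inner_neg_right]; linarith
  · rw [inner_neg_right, real_inner_comm]; linarith

end FarkasTools

/-! ### Auxiliary material specific to the problem -/

/-- Pack a vector in `ℝ^m` and a scalar into `ℝ^(m+1)` (Euclidean space). -/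
noncomputable def snocE {m : ℕ} (a : Fin m → ℝ) (r : ℝ) : EuclideanSpace ℝ (Fin (m+1)) :=
  (WithLp.equiv 2 (Fin (m+1) → ℝ)).symm (Fin.snoc a r)

lemma inner_snoc {m : ℕ} (a : Fin m → ℝ) (r : ℝ) (v : EuclideanSpace ℝ (Fin (m+1))) :
    (inner ℝ (snocE a r) v : ℝ)
      = (∑ i, a i * v (Fin.castSucc i)) + r * v (Fin.last m) := by
  simp [snocE, PiLp.inner_apply, RCLike.inner_apply, Fin.sum_univ_castSucc,
    starRingEnd_apply, WithLp.equiv_symm_apply, mul_comm]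

/-- Coordinates of a finite sum in Euclidean space. -/
lemma eucl_sum_apply {N : ℕ} {ι : Type*} [Fintype ι] (f : ι → EuclideanSpace ℝ (Fin N))
    (κ : Fin N) : (∑ i, f i) κ = ∑ i, f i κ :=
  (congrFun (map_sum (WithLp.linearEquiv 2 ℝ (Fin N → ℝ)) f Finset.univ) κ).trans
    (by rw [Finset.sum_apply]; rfl)

/-- The generator family used for the Farkas certificates. -/
noncomputable def Wgen {m n : ℕ} (A : Matrix (Fin m) (Fin n) ℝ) (x : Fin n → ℝ) :
    (Fin n ⊕ Fin n) ⊕ Unit → EuclideanSpace ℝ (Fin (m+1)) := fun i =>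
  match i with
  | .inl (.inl j) => snocE (fun i => A i j) (-1)
  | .inl (.inr j) => if 0 < x j then snocE (fun i => -(A i j)) 1 else 0
  | .inr _ => snocE (0 : Fin m → ℝ) (-1)

/-- Structure of a certificate that a vector lies in the cone generated by `Wgen`. -/
lemma cert {m n : ℕ} (A : Matrix (Fin m) (Fin n) ℝ) (x : Fin n → ℝ)
    (cv : Fin m → ℝ) (cr : ℝ) (hc : snocE cv cr ∈ coneOf (Wgen A x)) :
    ∃ lam mu : Fin n → ℝ, ∃ nu : ℝ, (∀ j, 0 ≤ lam j) ∧ (∀ j, 0 ≤ mu j) ∧ 0 ≤ nu ∧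
      (∀ j, ¬ 0 < x j → mu j = 0) ∧
      (∀ i, ∑ j, (lam j - mu j) * A i j = cv i) ∧
      (∑ j, (lam j - mu j)) = -cr - nu := by
  classical
  obtain ⟨l, hl, hsum⟩ := hc
  set F := WithLp.linearEquiv 2 ℝ (Fin (m+1) → ℝ) with hF
  have hsum' : ∑ i, l i • F (Wgen A x i) = Fin.snoc cv cr := by
    have h2 := congrArg F hsum
    rw [map_sum] at h2
    simp only [_root_.map_smul] at h2
    rw [h2]
    simp [hF, snocE]
  have hG : ∀ κ : Fin (m+1), ∑ i, l i * F (Wgen A x i) κ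
      = (Fin.snoc cv cr : Fin (m+1) → ℝ) κ := by
    intro κ
    have h3 := congrFun hsum' κ
    simpa [Finset.sum_apply] using h3
  have hW1 : ∀ j : Fin n, F (Wgen A x (.inl (.inl j)))
      = Fin.snoc (fun i => A i j) (-1 : ℝ) := by
    intro j; simp [hF, Wgen, snocE]
  have hW2 : ∀ j : Fin n, F (Wgen A x (.inl (.inr j)))
      = if 0 < x j then Fin.snoc (fun i => -(A i j)) (1 : ℝ) else (0 : Fin (m+1) → ℝ) := by
    intro j
    simp only [hF, Wgen, apply_ite, map_zero, snocE]
    split <;> simp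
  have hW3 : F (Wgen A x (.inr ())) = Fin.snoc (0 : Fin m → ℝ) (-1 : ℝ) := by
    simp [hF, Wgen, snocE]
  set lam : Fin n → ℝ := fun j => l (.inl (.inl j)) with hlam
  set mu : Fin n → ℝ := fun j => if 0 < x j then l (.inl (.inr j)) else 0 with hmu
  refine ⟨lam, mu, l (.inr ()), fun j => hl _, fun j => ?_, hl _,
    fun j hj => by simp [hmu, hj], ?_, ?_⟩
  · simp only [hmu]; split
    · exact hl _
    · exact le_refl 0
  · intro i
    have h4 := hG (Fin.castSucc i)
    rw [Fintype.sum_sum_type, Fintype.sum_sum_type] at h4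
    simp only [hW1, hW2, hW3, Fin.snoc_castSucc] at h4
    have h5 : ∀ j : Fin n, l (Sum.inl (Sum.inr j)) *
        (if 0 < x j then Fin.snoc (fun i => -(A i j)) (1:ℝ)
          else (0 : Fin (m+1) → ℝ)) (Fin.castSucc i)
        = -(mu j * A i j) := by
      intro j
      simp only [hmu]
      split
      · simp [Fin.snoc_castSucc]
      · simp
    rw [Finset.sum_congr rfl (fun j _ => h5 j)] at h4
    simp only [Pi.zero_apply, mul_zero, Finset.univ_unique, Finset.sum_singleton,
      Finset.sum_const, smul_eq_mul] at h4
    rw [← h4]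
    simp only [smul_zero, add_zero, mul_zero]
    rw [← Finset.sum_add_distrib]
    refine Finset.sum_congr rfl fun j _ => ?_
    simp only [hlam]
    ring
  · have h4 := hG (Fin.last m)
    rw [Fintype.sum_sum_type, Fintype.sum_sum_type] at h4
    simp only [hW1, hW2, hW3, Fin.snoc_last] at h4
    have h5 : ∀ j : Fin n, l (Sum.inl (Sum.inr j)) *
        (if 0 < x j then Fin.snoc (fun i => -(A i j)) (1:ℝ)
          else (0 : Fin (m+1) → ℝ)) (Fin.last m)
        = mu j := by
      intro j
      simp only [hmu]
      split <;> simp [Fin.snoc_last]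
    rw [Finset.sum_congr rfl (fun j _ => h5 j)] at h4
    simp only [Fin.snoc_last, Finset.univ_unique, Finset.sum_singleton, mul_neg_one] at h4
    rw [Finset.sum_neg_distrib] at h4
    have h6 : ∑ j, (lam j - mu j) = ∑ j, lam j - ∑ j, mu j := Finset.sum_sub_distrib _ _
    have h7 : ∑ j, lam j = ∑ j, l (Sum.inl (Sum.inl j)) := rfl
    rw [h6, h7]
    linarith [h4]

open Matrix

/-- `x` is the unique least ℓ1-norm nonnegative solution to the system `A x = b`. -/
def uniqueLeastL1 {m n : ℕ} (A : Matrix (Fin m) (Fin n) ℝ) (b : Fin m → ℝ)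
    (x : Fin n → ℝ) : Prop :=
  A.mulVec x = b ∧ 0 ≤ x ∧
    ∀ w : Fin n → ℝ, A.mulVec w = b → 0 ≤ w → w ≠ x → ∑ i, |x i| < ∑ i, |w i|

/-- No nonzero descent direction exists for the unique least ℓ1-norm solution. -/
lemma no_descent {m n : ℕ} {A : Matrix (Fin m) (Fin n) ℝ} {b : Fin m → ℝ}
    {x : Fin n → ℝ} (h : uniqueLeastL1 A b x) (d : Fin n → ℝ)
    (hAd : A.mulVec d = 0) (hdnn : ∀ j, ¬ 0 < x j → 0 ≤ d j)
    (hsum : ∑ j, d j ≤ 0) (hd : d ≠ 0) : False := by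
  obtain ⟨hAx, hx0, hmin⟩ := h
  set s : Finset ℝ := insert (1:ℝ)
    (Finset.univ.image fun j => if d j < 0 then x j / (-d j) else 1) with hs
  have hsne : s.Nonempty := ⟨1, Finset.mem_insert_self 1 _⟩
  set t : ℝ := s.min' hsne with htdef
  have hts : t ∈ s := s.min'_mem hsne
  have ht0 : 0 < t := by
    apply lt_of_lt_of_le ?_ (le_refl t)
    rcases Finset.mem_insert.mp hts with h1 | h2
    · rw [h1]; norm_num
    · obtain ⟨j, _, hj⟩ := Finset.mem_image.mp h2
      rw [← hj]
      by_cases hdj : d j < 0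
      · have hxj : 0 < x j := by
          by_contra hxj
          exact absurd (hdnn j hxj) (not_le.mpr hdj)
        simp only [hdj, if_true]
        exact div_pos hxj (by linarith)
      · simp [hdj]
  set w : Fin n → ℝ := fun j => x j + t * d j with hw
  have hw0 : 0 ≤ w := by
    intro j
    by_cases hdj : d j < 0
    · have : t ≤ x j / (-d j) := by
        apply s.min'_le
        apply Finset.mem_insert_of_mem
        exact Finset.mem_image.mpr ⟨j, Finset.mem_univ j, by simp [hdj]⟩
      have h2 : t * (-d j) ≤ x j := (le_div_iff₀ (by linarith)).mp this
      show (0:ℝ) ≤ x j + t * d j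
      nlinarith
    · push_neg at hdj
      have h1 : (0:ℝ) ≤ x j := by simpa using hx0 j
      have h2 : 0 ≤ t * d j := mul_nonneg ht0.le hdj
      show (0:ℝ) ≤ x j + t * d j
      linarith
  have hAw : A.mulVec w = b := by
    have : w = x + t • d := by funext j; simp [hw, smul_eq_mul]
    rw [this, A.mulVec_add, A.mulVec_smul, hAd, hAx]
    simp
  have hwx : w ≠ x := by
    intro hcon
    obtain ⟨j, hj⟩ := Function.ne_iff.mp hd
    have := congrFun hcon j
    simp only [hw] at this
    have : t * d j = 0 := by linarith
    rcases mul_eq_zero.mp this with h1 | h2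
    · exact ht0.ne' h1
    · exact hj h2
  have hlt := hmin w hAw hw0 hwx
  have h1 : ∑ i, |x i| = ∑ i, x i := Finset.sum_congr rfl fun i _ => abs_of_nonneg (hx0 i)
  have h2 : ∑ i, |w i| = ∑ i, w i := Finset.sum_congr rfl fun i _ => abs_of_nonneg (hw0 i)
  rw [h1, h2] at hlt
  have h3 : ∑ i, w i = ∑ i, x i + t * ∑ i, d i := by
    simp [hw, Finset.sum_add_distrib, Finset.mul_sum]
  nlinarith

theorem stmt_1 {m n : ℕ} (A : Matrix (Fin m) (Fin n) ℝ) (b : Fin m → ℝ)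
    (x : Fin n → ℝ) (h : uniqueLeastL1 A b x) :
    ∃ η : Fin n → ℝ, (∃ u : Fin m → ℝ, A.transpose.mulVec u = η) ∧
      (∀ i, 0 < x i → η i = 1) ∧ (∀ i, ¬ 0 < x i → η i < 1) := by
  classical
  -- Claim 1: the "homogenization direction" certificate is not in the cone.
  have claim1 : snocE (0 : Fin m → ℝ) 1 ∉ coneOf (Wgen A x) := by
    intro hc
    obtain ⟨lam, mu, nu, hlam, hmu, hnu, hmu0, hrow, hsum⟩ := cert A x _ _ hc
    refine no_descent h (fun j => lam j - mu j) ?_ ?_ ?_ ?_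
    · funext i
      show ∑ j, A i j * (lam j - mu j) = (0 : Fin m → ℝ) i
      rw [← hrow i]
      exact Finset.sum_congr rfl fun j _ => mul_comm _ _
    · intro j hj
      have := hmu0 j hj
      have := hlam j
      show 0 ≤ lam j - mu j
      linarith [hlam j, hmu0 j hj]
    · rw [hsum]; linarith
    · intro h0
      have hz : ∀ j, lam j - mu j = 0 := fun j => by simpa using congrFun h0 j
      have hzz : ∑ j, (lam j - mu j) = 0 := Finset.sum_eq_zero fun j _ => hz j
      rw [hsum] at hzz
      linarith
  -- Claim 2: per inactive coordinate.
  have claim2 : ∀ j0 : Fin n, ¬ 0 < x j0 →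
      snocE (fun i => -(A i j0)) 1 ∉ coneOf (Wgen A x) := by
    intro j0 hj0 hc
    obtain ⟨lam, mu, nu, hlam, hmu, hnu, hmu0, hrow, hsum⟩ := cert A x _ _ hc
    set d : Fin n → ℝ := fun j => lam j - mu j + (if j = j0 then 1 else 0) with hd
    refine no_descent h d ?_ ?_ ?_ ?_
    · funext i
      show ∑ j, A i j * d j = (0 : Fin m → ℝ) i
      have : ∑ j, A i j * d j
          = ∑ j, (lam j - mu j) * A i j + ∑ j, A i j * (if j = j0 then 1 else 0) := by
        rw [← Finset.sum_add_distrib]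
        exact Finset.sum_congr rfl fun j _ => by
          by_cases hjj : j = j0 <;> simp [hd, hjj] <;> ring
      rw [this, hrow i]
      simp [Finset.sum_ite_eq']
    · intro j hj
      have h1 := hmu0 j hj
      have h2 := hlam j
      simp only [hd, h1]
      split <;> linarith
    · have : ∑ j, d j = ∑ j, (lam j - mu j) + ∑ j, (if j = j0 then (1:ℝ) else 0) := by
        rw [← Finset.sum_add_distrib]
      rw [this, hsum]
      simp [Finset.sum_ite_eq']
      linarith
    · intro h0
      have h1 : d j0 = 0 := by simpa using congrFun h0 j0
      have h2 : d j0 = lam j0 + 1 := by simp [hd, hmu0 j0 hj0]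
      linarith [hlam j0, h1.symm.trans h2]
  -- Farkas applications
  obtain ⟨v₁, hv₁a, hv₁b⟩ := farkas (Wgen A x) _ claim1
  have h2 : ∀ j : Fin n, ∃ v : EuclideanSpace ℝ (Fin (m+1)),
      (∀ i, ⟪Wgen A x i, v⟫ ≤ 0) ∧
      (¬ 0 < x j → 0 < ⟪snocE (fun i => -(A i j)) 1, v⟫) := by
    intro j
    by_cases hj : 0 < x j
    · exact ⟨0, fun i => by simp, fun hc => absurd hj hc⟩
    · obtain ⟨v, hva, hvb⟩ := farkas (Wgen A x) _ (claim2 j hj)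
      exact ⟨v, hva, fun _ => hvb⟩
  choose v₂ hv₂a hv₂b using h2
  set v : EuclideanSpace ℝ (Fin (m+1)) := v₁ + ∑ j, v₂ j with hv
  -- coordinates
  have hcoord : ∀ κ, v κ = v₁ κ + ∑ j, v₂ j κ := by
    intro κ
    rw [hv, PiLp.add_apply, eucl_sum_apply]
  -- the scalar S z j
  set S : EuclideanSpace ℝ (Fin (m+1)) → Fin n → ℝ :=
    fun z j => ∑ i, A i j * z (Fin.castSucc i) with hS
  set T : EuclideanSpace ℝ (Fin (m+1)) → ℝ := fun z => z (Fin.last m) with hT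
  -- constraints per piece
  have conA : ∀ z, (∀ i, ⟪Wgen A x i, z⟫ ≤ 0) → ∀ j, S z j ≤ T z := by
    intro z hz j
    have := hz (.inl (.inl j))
    rw [show Wgen A x (.inl (.inl j)) = snocE (fun i => A i j) (-1) from rfl,
      inner_snoc] at this
    simp only [hS, hT]
    linarith
  have conB : ∀ z, (∀ i, ⟪Wgen A x i, z⟫ ≤ 0) → ∀ j, 0 < x j → T z ≤ S z j := by
    intro z hz j hj
    have := hz (.inl (.inr j))
    rw [show Wgen A x (.inl (.inr j)) = snocE (fun i => -(A i j)) 1 by simp [Wgen, hj],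
      inner_snoc] at this
    simp only [hS, hT]
    have h4 : ∑ i, -(A i j) * z (Fin.castSucc i) = -∑ i, A i j * z (Fin.castSucc i) := by
      rw [← Finset.sum_neg_distrib]
      exact Finset.sum_congr rfl fun i _ => by ring
    rw [h4] at this
    linarith
  have conC : ∀ z, (∀ i, ⟪Wgen A x i, z⟫ ≤ 0) → 0 ≤ T z := by
    intro z hz
    have := hz (.inr ())
    rw [show Wgen A x (.inr ()) = snocE (0 : Fin m → ℝ) (-1) from rfl, inner_snoc] at this
    simp only [hT]
    simp only [Pi.zero_apply, zero_mul, Finset.sum_const_zero, zero_add] at this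
    linarith
  -- positivity of T v₁
  have hTv₁ : 0 < T v₁ := by
    rw [inner_snoc] at hv₁b
    simp only [Pi.zero_apply, zero_mul, Finset.sum_const_zero, zero_add, one_mul] at hv₁b
    exact hv₁b
  -- S and T are additive over our decomposition of v
  have hSv : ∀ j, S v j = S v₁ j + ∑ j', S (v₂ j') j := by
    intro j
    simp only [hS]
    have hswap : ∑ j' : Fin n, ∑ i : Fin m, A i j * v₂ j' (Fin.castSucc i)
        = ∑ i : Fin m, ∑ j' : Fin n, A i j * v₂ j' (Fin.castSucc i) := Finset.sum_comm
    rw [hswap, ← Finset.sum_add_distrib]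
    refine Finset.sum_congr rfl fun i _ => ?_
    rw [hcoord (Fin.castSucc i), mul_add, Finset.mul_sum]
  have hTv : T v = T v₁ + ∑ j', T (v₂ j') := by
    simp only [hT]
    rw [hcoord]
  have hTpos : 0 < T v := by
    rw [hTv]
    have h5 : 0 ≤ ∑ j', T (v₂ j') :=
      Finset.sum_nonneg fun j' _ => conC _ (hv₂a j')
    linarith
  -- active coordinates: S v j = T v
  have hactive : ∀ j, 0 < x j → S v j = T v := by
    intro j hj
    rw [hSv j, hTv]
    have e1 : S v₁ j = T v₁ := le_antisymm (conA v₁ hv₁a j) (conB v₁ hv₁a j hj)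
    have e2 : ∀ j', S (v₂ j') j = T (v₂ j') := fun j' =>
      le_antisymm (conA _ (hv₂a j') j) (conB _ (hv₂a j') j hj)
    rw [e1]
    congr 1
    exact Finset.sum_congr rfl fun j' _ => e2 j'
  -- inactive coordinates: S v j < T v
  have hinactive : ∀ j, ¬ 0 < x j → S v j < T v := by
    intro j hj
    rw [hSv j, hTv]
    have e1 : S v₁ j ≤ T v₁ := conA v₁ hv₁a j
    have e2 : ∑ j', S (v₂ j') j < ∑ j', T (v₂ j') := by
      refine Finset.sum_lt_sum (fun j' _ => conA _ (hv₂a j') j) ⟨j, Finset.mem_univ j, ?_⟩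
      have := hv₂b j hj
      rw [inner_snoc] at this
      have h4 : ∑ i, -(A i j) * v₂ j (Fin.castSucc i)
          = -∑ i, A i j * v₂ j (Fin.castSucc i) := by
        rw [← Finset.sum_neg_distrib]
        exact Finset.sum_congr rfl fun i _ => by ring
      rw [h4] at this
      simp only [hS, hT]
      linarith
    linarith
  -- final construction
  refine ⟨fun j => (T v)⁻¹ * S v j, ⟨fun i => (T v)⁻¹ * v (Fin.castSucc i), ?_⟩, ?_, ?_⟩
  · funext j
    show ∑ i, A.transpose j i * ((T v)⁻¹ * v (Fin.castSucc i)) = _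
    rw [Finset.mul_sum]
    exact Finset.sum_congr rfl fun i _ => by rw [Matrix.transpose_apply]; ring
  · intro j hj
    show (T v)⁻¹ * S v j = 1
    rw [hactive j hj]
    exact inv_mul_cancel₀ hTpos.ne'
  · intro j hj
    show (T v)⁻¹ * S v j < 1
    have := hinactive j hj
    have h6 : (T v)⁻¹ * S v j < (T v)⁻¹ * T v :=
      mul_lt_mul_of_pos_left this (inv_pos.mpr hTpos)
    rw [inv_mul_cancel₀ hTpos.ne'] at h6
    exact h6
end

section
/- Let A be a real m×n matrix and b ∈ ℝ^m. If x is the unique least ℓ1-norm nonnegative solution to the system Ax = b, then the (m+1)×|J₊| matrix M obtained by appending the row e_{J₊}ᵀ (all ones) below the column submatrix A_{J₊} has full column rank, where J₊ = {i : xᵢ > 0}. -/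
open Matrix

/-- The (m+1)×|J₊| matrix `M` obtained by appending the all-ones row below the
column submatrix `A_{J₊}` has full column rank, i.e. its columns (indexed by
`J₊ = {i : x i > 0}`) are linearly independent. -/
theorem stmt_2 {m n : ℕ} (A : Matrix (Fin m) (Fin n) ℝ) (b : Fin m → ℝ)
    (x : Fin n → ℝ) (h : uniqueLeastL1 A b x) :
    LinearIndependent ℝ (fun j : {i : Fin n // 0 < x i} =>
      (Sum.elim (fun k : Fin m => A k j.1) (fun _ : Unit => (1 : ℝ)) :
        Fin m ⊕ Unit → ℝ)) := by
  obtain ⟨hAx, hx0, hmin⟩ := h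
  rw [Fintype.linearIndependent_iff]
  intro g hg
  set c : Fin n → ℝ := fun i => if hi : 0 < x i then g ⟨i, hi⟩ else 0 with hc
  have hcx : ∀ i, c i ≠ 0 → 0 < x i := by
    intro i hi
    by_contra hxi
    simp [hc, hxi] at hi
  have key : ∀ f : Fin n → ℝ, ∑ i, c i * f i = ∑ j : {i : Fin n // 0 < x i}, g j * f j.1 := by
    intro f
    rw [← Finset.sum_filter_of_ne (p := fun i => 0 < x i)
      (f := fun i => c i * f i)
      (by intro i _ hne; exact hcx i (fun h0 => hne (by simp [h0])))]
    rw [Finset.sum_subtype (p := fun i => 0 < x i) _ (by simp)]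
    refine Finset.sum_congr rfl ?_
    intro j _
    simp [hc, j.2]
  have heq1 : ∀ k, ∑ i, c i * A k i = 0 := by
    intro k
    have h1 := congrFun hg (Sum.inl k)
    rw [key (fun i => A k i)]
    simpa [Finset.sum_apply] using h1
  have heq2 : ∑ i, c i = 0 := by
    have h1 := congrFun hg (Sum.inr ())
    have := key (fun _ => 1)
    simp only [mul_one] at this
    rw [this]
    simpa [Finset.sum_apply] using h1
  have hczero : ∀ i, c i = 0 := by
    by_contra hne
    push_neg at hne
    obtain ⟨i0, hi0⟩ := hne
    set S := Finset.univ.filter (fun i => c i ≠ 0) with hS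
    have hSne : S.Nonempty := ⟨i0, by simp [hS, hi0]⟩
    set ε := S.inf' hSne (fun i => x i / |c i|) with hε
    have hεpos : 0 < ε := by
      rw [hε, Finset.lt_inf'_iff]
      intro i hi
      have hci : c i ≠ 0 := by simpa [hS] using hi
      exact div_pos (hcx i hci) (abs_pos.mpr hci)
    have hεle : ∀ i, ε * |c i| ≤ x i := by
      intro i
      by_cases hci : c i = 0
      · simpa [hci] using hx0 i
      · have hmem : i ∈ S := by simp [hS, hci]
        have hle := Finset.inf'_le (fun i => x i / |c i|) hmem
        calc ε * |c i| ≤ (x i / |c i|) * |c i| :=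
              mul_le_mul_of_nonneg_right hle (abs_nonneg _)
          _ = x i := div_mul_cancel₀ _ (abs_ne_zero.mpr hci)
    set w : Fin n → ℝ := fun i => x i - ε * c i with hw
    have hw0 : 0 ≤ w := by
      intro i
      have h1 : ε * c i ≤ ε * |c i| :=
        mul_le_mul_of_nonneg_left (le_abs_self _) hεpos.le
      have := hεle i
      simp only [hw, Pi.zero_apply]
      linarith
    have hAw : A.mulVec w = b := by
      funext k
      have hA0 : ∑ i, c i * A k i = 0 := heq1 k
      have : ∑ i, A k i * w i = ∑ i, A k i * x i := by
        simp only [hw, mul_sub, Finset.sum_sub_distrib]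
        have : ∑ i, A k i * (ε * c i) = ε * ∑ i, c i * A k i := by
          rw [Finset.mul_sum]; congr 1; funext i; ring
        rw [this, hA0]
        ring
      have hb := congrFun hAx k
      simp only [Matrix.mulVec, dotProduct] at hb ⊢
      rw [this, hb]
    have hsum : ∑ i, w i = ∑ i, x i := by
      simp only [hw, Finset.sum_sub_distrib, ← Finset.mul_sum, heq2]
      ring
    have hwne : w ≠ x := by
      intro hwx
      have h1 := congrFun hwx i0
      simp only [hw] at h1
      have : ε * c i0 = 0 := by linarith
      rcases mul_eq_zero.mp this with h2 | h2
      · exact absurd h2 (ne_of_gt hεpos)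
      · exact hi0 h2
    have hlt := hmin w hAw hw0 hwne
    have e1 : ∑ i, |x i| = ∑ i, x i :=
      Finset.sum_congr rfl (fun i _ => abs_of_nonneg (hx0 i))
    have e2 : ∑ i, |w i| = ∑ i, w i :=
      Finset.sum_congr rfl (fun i _ => abs_of_nonneg (hw0 i))
    rw [e1, e2, hsum] at hlt
    exact lt_irrefl _ hlt
  intro j
  have := hczero j.1
  simpa [hc, j.2] using this
end

section
/- Let A be a real m×n matrix, b ∈ ℝ^m, and let x ≥ 0 be a nonnegative solution to Ax = b with J₊ = {i : xᵢ > 0}. If there exists η ∈ R(Aᵀ) with ηᵢ = 1 for all i ∈ J₊ and ηᵢ < 1 for all i ∉ J₊, and the matrix M obtained by appending the all-ones row e_{J₊}ᵀ below A_{J₊} has full column rank, then x is the unique least ℓ1-norm nonnegative solution to the system Ax = b. -/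
open Matrix

theorem stmt_3 {m n : ℕ} (A : Matrix (Fin m) (Fin n) ℝ) (b : Fin m → ℝ)
    (x : Fin n → ℝ) (hAx : A.mulVec x = b) (hx : 0 ≤ x)
    (hRSP : ∃ η : Fin n → ℝ, (∃ u : Fin m → ℝ, A.transpose.mulVec u = η) ∧
      (∀ i, 0 < x i → η i = 1) ∧ (∀ i, ¬ 0 < x i → η i < 1))
    (hM : LinearIndependent ℝ (fun j : {i : Fin n // 0 < x i} =>
      (Sum.elim (fun k : Fin m => A k j.1) (fun _ : Unit => (1 : ℝ)) :
        Fin m ⊕ Unit → ℝ))) :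
    uniqueLeastL1 A b x := by
  unfold uniqueLeastL1
  obtain ⟨η, ⟨u, hu⟩, hη1, hη2⟩ := hRSP
  refine ⟨hAx, hx, ?_⟩
  intro w hAw hw hwx
  have hx0 : ∀ i, ¬ 0 < x i → x i = 0 := fun i h => le_antisymm (not_lt.mp h) (hx i)
  simp only [fun i => abs_of_nonneg (hx i), fun i => abs_of_nonneg (hw i)]
  have hdot : η ⬝ᵥ x = η ⬝ᵥ w := by
    rw [← hu, Matrix.mulVec_transpose, ← Matrix.dotProduct_mulVec,
      ← Matrix.dotProduct_mulVec, hAx, hAw]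
  have hsx : ∑ i, x i = η ⬝ᵥ w := by
    rw [← hdot]
    unfold dotProduct
    apply Finset.sum_congr rfl
    intro i _
    by_cases h : 0 < x i
    · rw [hη1 i h, one_mul]
    · simp [hx0 i h]
  have hterm : ∀ i ∈ Finset.univ, η i * w i ≤ w i := by
    intro i _
    by_cases h : 0 < x i
    · rw [hη1 i h, one_mul]
    · calc η i * w i ≤ 1 * w i := mul_le_mul_of_nonneg_right (hη2 i h).le (hw i)
        _ = w i := one_mul _
  have hle : η ⬝ᵥ w ≤ ∑ i, w i := Finset.sum_le_sum hterm
  rcases lt_or_eq_of_le hle with h | h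
  · calc ∑ i, x i = η ⬝ᵥ w := hsx
      _ < ∑ i, w i := h
  · exfalso
    apply hwx
    have heq : ∀ i ∈ Finset.univ, η i * w i = w i :=
      fun i hi => (Finset.sum_eq_sum_iff_of_le hterm).mp h i hi
    have hwz : ∀ i, ¬ 0 < x i → w i = 0 := by
      intro i hi
      by_contra hne
      have hwi : 0 < w i := lt_of_le_of_ne (hw i) (Ne.symm hne)
      have := heq i (Finset.mem_univ i)
      nlinarith [hη2 i hi]
    have hext : ∀ (f : Fin n → ℝ),
        ∑ j : {i : Fin n // 0 < x i}, (w j.1 - x j.1) * f j.1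
          = ∑ i, (w i - x i) * f i := by
      intro f
      rw [← Finset.sum_subtype (Finset.univ.filter (fun i => 0 < x i))
        (by simp) (fun i => (w i - x i) * f i)]
      apply Finset.sum_filter_of_ne
      intro i _ hne
      by_contra hc
      exact hne (by rw [hwz i hc, hx0 i hc]; ring)
    have hsw : ∑ i, x i = ∑ i, w i := hsx.trans h
    have key := Fintype.linearIndependent_iff.mp hM (fun j => w j.1 - x j.1)
    have hzero : ∀ j : {i : Fin n // 0 < x i}, w j.1 - x j.1 = 0 := by
      apply key
      funext k
      cases k with
      | inl k =>
        simp only [Finset.sum_apply, Pi.smul_apply, Sum.elim_inl, smul_eq_mul, Pi.zero_apply]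
        rw [hext (fun i => A k i)]
        have hAk : A.mulVec w k = A.mulVec x k := by rw [hAx, hAw]
        simp only [Matrix.mulVec, dotProduct] at hAk
        have := sub_eq_zero_of_eq hAk
        rw [← Finset.sum_sub_distrib] at this
        rw [← this]
        apply Finset.sum_congr rfl
        intro i _; ring
      | inr k =>
        simp only [Finset.sum_apply, Pi.smul_apply, Sum.elim_inr, smul_eq_mul, mul_one,
          Pi.zero_apply]
        have h1 := hext (fun _ => 1)
        simp only [mul_one] at h1
        rw [h1, Finset.sum_sub_distrib, hsw, sub_self]
    funext i
    by_cases h : 0 < x i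
    · have := hzero ⟨i, h⟩
      linarith [sub_eq_zero.mp this]
    · rw [hwz i h, hx0 i h]
end

section
/- Let A be a real m×n matrix, b ∈ ℝ^m, and let x be a nonnegative solution to Ax = b with J₊ = {i : xᵢ > 0}. Then x is the unique least ℓ1-norm nonnegative solution to the system Ax = b if and only if (i) there exists η ∈ R(Aᵀ) with ηᵢ = 1 for all i ∈ J₊ and ηᵢ < 1 for all i ∉ J₊, and (ii) the matrix M obtained by appending the all-ones row e_{J₊}ᵀ below A_{J₊} has full column rank. -/
open Matrix RealInnerProductSpace

section FarkasMachinery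

variable {E : Type*} [NormedAddCommGroup E] [InnerProductSpace ℝ E]

/-- membership in the cone generated by a list of vectors, recursively. -/
def inCone : List E → E → Prop
  | [], g => g = 0
  | p :: L, g => ∃ t : ℝ, 0 ≤ t ∧ inCone L (g - t • p)

lemma inCone_of_tail {L : List E} {p g : E} (h : inCone L g) : inCone (p :: L) g :=
  ⟨0, le_refl 0, by simpa using h⟩

lemma inCone_shift (p : E) (lam : E → ℝ) :
    ∀ (L : List E) (h : E), (∀ q ∈ L, lam q ≤ 0) →
      inCone (L.map (fun q => q - lam q • p)) h →
      ∃ s : ℝ, s ≤ 0 ∧ inCone L (h + s • p) := by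
  intro L
  induction L with
  | nil =>
      intro h _ hc
      exact ⟨0, le_refl 0, by simpa [inCone] using hc⟩
  | cons q L ih =>
      intro h hneg hc
      obtain ⟨t, ht, hc'⟩ := hc
      obtain ⟨s', hs', hcs⟩ := ih (h - t • (q - lam q • p))
        (fun r hr => hneg r (List.mem_cons_of_mem _ hr)) hc'
      refine ⟨t * lam q + s', ?_, ?_⟩
      · have : t * lam q ≤ 0 :=
          mul_nonpos_iff.2 (Or.inl ⟨ht, hneg q (List.mem_cons_self)⟩)
        linarith
      · refine ⟨t, ht, ?_⟩
        have : h + (t * lam q + s') • p - t • q = h - t • (q - lam q • p) + s' • p := by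
          module
        rw [this]; exact hcs

theorem farkas_aux : ∀ (N : ℕ) (L : List E), L.length = N → ∀ g : E, ¬ inCone L g →
    ∃ d : E, (∀ q ∈ L, 0 ≤ ⟪q, d⟫) ∧ ⟪g, d⟫ < 0 := by
  intro N
  induction N with
  | zero =>
      intro L hL g hg
      rw [List.length_eq_zero_iff] at hL
      subst hL
      refine ⟨-g, by simp, ?_⟩
      have hg0 : g ≠ 0 := hg
      have h1 : (0:ℝ) < ⟪g, g⟫ :=
        lt_of_le_of_ne real_inner_self_nonneg
          (Ne.symm (inner_self_ne_zero.mpr hg0))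
      simpa [inner_neg_right] using neg_lt_zero.mpr h1
  | succ N ih =>
      intro L hL g hg
      match L, hL with
      | p :: L, hL =>
        have hLlen : L.length = N := by simpa using hL
        have hgL : ¬ inCone L g := fun h => hg (inCone_of_tail h)
        obtain ⟨d, hd1, hd2⟩ := ih L hLlen g hgL
        by_cases hpd : 0 ≤ ⟪p, d⟫
        · refine ⟨d, ?_, hd2⟩
          intro q hq
          rcases List.mem_cons.mp hq with rfl | hq
          · exact hpd
          · exact hd1 q hq
        push_neg at hpd
        set lam : E → ℝ := fun z => ⟪z, d⟫ / ⟪p, d⟫ with hlam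
        set f : E → E := fun z => z - lam z • p with hf
        have hlamneg : ∀ q ∈ L, lam q ≤ 0 := fun q hq =>
          div_nonpos_of_nonneg_of_nonpos (hd1 q hq) hpd.le
        have hghat : ¬ inCone (L.map f) (f g) := by
          intro hc
          obtain ⟨s, hs, hcs⟩ := inCone_shift p lam L (f g) hlamneg hc
          apply hg
          refine ⟨lam g - s, ?_, ?_⟩
          · have hlg : 0 < lam g := div_pos_of_neg_of_neg hd2 hpd
            linarith
          · have : g - (lam g - s) • p = f g + s • p := by simp only [hf]; module
            rw [this]; exact hcs
        obtain ⟨d', hd1', hd2'⟩ := ih (L.map f) (by simpa using hLlen) (f g) hghat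
        refine ⟨d' - (⟪p, d'⟫ / ⟪p, d⟫) • d, ?_, ?_⟩
        · intro q hq
          rcases List.mem_cons.mp hq with rfl | hq
          · have hne : ⟪q, d⟫ ≠ 0 := ne_of_lt hpd
            have : ⟪q, d' - (⟪q, d'⟫ / ⟪q, d⟫) • d⟫ = 0 := by
              rw [inner_sub_right, real_inner_smul_right]
              field_simp
              ring
            rw [this]
          · have := hd1' (f q) (List.mem_map_of_mem (f := f) hq)
            have heq : ⟪q, d' - (⟪p, d'⟫ / ⟪p, d⟫) • d⟫ = ⟪f q, d'⟫ := by
              simp only [hf, hlam, inner_sub_right, inner_sub_left,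
                real_inner_smul_right, real_inner_smul_left]
              field_simp
            rw [heq]; exact this
        · have heq : ⟪g, d' - (⟪p, d'⟫ / ⟪p, d⟫) • d⟫ = ⟪f g, d'⟫ := by
            simp only [hf, hlam, inner_sub_right, inner_sub_left,
              real_inner_smul_right, real_inner_smul_left]
            field_simp
          rw [heq]; exact hd2'

theorem farkas_s4 (L : List E) (g : E) (hg : ¬ inCone L g) :
    ∃ d : E, (∀ q ∈ L, 0 ≤ ⟪q, d⟫) ∧ ⟪g, d⟫ < 0 :=
  farkas_aux L.length L rfl g hg

lemma proj_inner_eq (N : Submodule ℝ E) [N.HasOrthogonalProjection] {d : E} (hd : d ∈ N)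
    (v : E) : ⟪((N.orthogonalProjectionOnto v : N) : E), d⟫ = ⟪v, d⟫ := by
  have hperp : v - (N.orthogonalProjectionOnto v : E) ∈ Nᗮ :=
    Submodule.sub_starProjection_mem_orthogonal (K := N) v
  have h0 : ⟪v - (N.orthogonalProjectionOnto v : E), d⟫ = 0 := by
    have := (Submodule.mem_orthogonal N _).1 hperp d hd
    rw [real_inner_comm]
    exact this
  rw [inner_sub_left] at h0
  linarith

lemma coneA [FiniteDimensional ℝ E] (N : Submodule ℝ E) (L : List E)
    (hL : ∀ q ∈ L, q ∈ N) (g : E) (hg : g ∈ N)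
    (hpos : ∀ d ∈ N, (∀ q ∈ L, 0 ≤ ⟪q, d⟫) → 0 ≤ ⟪g, d⟫) : inCone L g := by
  by_contra hc
  obtain ⟨d, hd1, hd2⟩ := farkas_s4 L g hc
  set d' : E := (N.orthogonalProjectionOnto d : E) with hd'
  have hmem : d' ∈ N := (N.orthogonalProjectionOnto d).2
  have hperp : d - d' ∈ Nᗮ := Submodule.sub_starProjection_mem_orthogonal (K := N) d
  have key : ∀ z ∈ N, ⟪z, d'⟫ = ⟪z, d⟫ := by
    intro z hz
    have h0 : ⟪z, d - d'⟫ = 0 := (Submodule.mem_orthogonal N _).1 hperp z hz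
    rw [inner_sub_right] at h0
    linarith
  have hge := hpos d' hmem (fun q hq => (key q (hL q hq)) ▸ hd1 q hq)
  rw [key g hg] at hge
  linarith

lemma inCone_rep {ι : Type*} [Fintype ι] [DecidableEq ι] (F : ι → E) :
    ∀ (J : List ι) (h : E), inCone (J.map F) h →
      ∃ c : ι → ℝ, (∀ i, 0 ≤ c i) ∧ (∀ i, i ∉ J → c i = 0) ∧ h = ∑ i, c i • F i := by
  intro J
  induction J with
  | nil =>
      intro h hh
      refine ⟨0, fun i => le_refl 0, fun i _ => rfl, ?_⟩
      have : h = 0 := hh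
      simp [this]
  | cons j J ih =>
      intro h hh
      obtain ⟨t, ht, hc⟩ := hh
      obtain ⟨c, hc0, hsupp, hrep⟩ := ih _ hc
      refine ⟨fun i => c i + (if i = j then t else 0), ?_, ?_, ?_⟩
      · intro i
        by_cases hij : i = j
        · subst hij; simpa using add_nonneg (hc0 i) ht
        · simpa [hij] using hc0 i
      · intro i hi
        have h1 : i ∉ J := fun hmem => hi (List.mem_cons_of_mem _ hmem)
        have h2 : i ≠ j := fun hij => hi (hij ▸ List.mem_cons_self)
        simp [hsupp i h1, h2]
      · have hsum : ∑ i, (c i + (if i = j then t else 0)) • F i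
            = (∑ i, c i • F i) + ∑ i, (if i = j then t else 0) • F i := by
          rw [← Finset.sum_add_distrib]
          congr 1
          funext i
          rw [add_smul]
        rw [hsum, ← hrep]
        have : ∑ i, (if i = j then t else 0) • F i = t • F j := by
          rw [Finset.sum_eq_single j]
          · simp
          · intro i _ hij; simp [hij]
          · intro hj; exact absurd (Finset.mem_univ j) hj
        rw [this]
        abel

end FarkasMachinery

section RangeLemma

lemma exists_transpose_mulVec {m n : ℕ} (A : Matrix (Fin m) (Fin n) ℝ) (η : Fin n → ℝ)
    (hη : ∀ d : Fin n → ℝ, A.mulVec d = 0 → ∑ i, η i * d i = 0) :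
    ∃ u : Fin m → ℝ, A.transpose.mulVec u = η := by
  classical
  let lm : (Fin m → ℝ) →ₗ[ℝ] EuclideanSpace ℝ (Fin n) :=
    { toFun := fun u => WithLp.toLp 2 (A.transpose.mulVec u)
      map_add' := fun u v => by simp [Matrix.mulVec_add]
      map_smul' := fun c u => by simp [Matrix.mulVec_smul] }
  let W : Submodule ℝ (EuclideanSpace ℝ (Fin n)) := LinearMap.range lm
  have hinner : ∀ (a b : EuclideanSpace ℝ (Fin n)), ⟪a, b⟫ = ∑ i, a i * b i := by
    intro a b
    simp [PiLp.inner_apply, RCLike.inner_apply, mul_comm]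
  have hmem : (WithLp.toLp 2 η : EuclideanSpace ℝ (Fin n)) ∈ Wᗮᗮ := by
    intro z hz
    have hAz : A.mulVec z = 0 := by
      have h1 := hz (lm (A.mulVec z)) (LinearMap.mem_range_self lm (A.mulVec z))
      have h2 : ⟪lm (A.mulVec z), (z : EuclideanSpace ℝ (Fin n))⟫
          = dotProduct (A.mulVec z) (A.mulVec z) := by
        rw [hinner]
        show ∑ i, (A.transpose.mulVec (A.mulVec z)) i * z i = _
        rw [show ∑ i, (A.transpose.mulVec (A.mulVec z)) i * z i
            = dotProduct (A.transpose.mulVec (A.mulVec z)) z from rfl]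
        rw [Matrix.mulVec_transpose, ← dotProduct_mulVec]
      rw [h1] at h2
      exact dotProduct_self_eq_zero.mp h2.symm
    have := hη z hAz
    rw [real_inner_comm, hinner]
    simpa using this
  rw [Submodule.orthogonal_orthogonal] at hmem
  obtain ⟨u, hu⟩ := hmem
  exact ⟨u, congrArg WithLp.ofLp hu⟩

end RangeLemma

section Helpers

lemma euclid_inner {n : ℕ} (a b : EuclideanSpace ℝ (Fin n)) : ⟪a, b⟫ = ∑ i, a i * b i := by
  simp [PiLp.inner_apply, RCLike.inner_apply, mul_comm]

lemma euclid_single_inner {n : ℕ} (j : Fin n) (d : EuclideanSpace ℝ (Fin n)) :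
    ⟪EuclideanSpace.single j (1:ℝ), d⟫ = d j := by
  simp [EuclideanSpace.inner_single_left]

lemma euclid_coord_le_norm {n : ℕ} (d : EuclideanSpace ℝ (Fin n)) (j : Fin n) :
    |d j| ≤ ‖d‖ := by
  have h := abs_real_inner_le_norm (EuclideanSpace.single j (1:ℝ)) d
  rwa [euclid_single_inner, EuclideanSpace.norm_single, norm_one, one_mul] at h

lemma euclid_coord_continuous {n : ℕ} (j : Fin n) :
    Continuous (fun d : EuclideanSpace ℝ (Fin n) => d j) :=
  LinearMap.continuous_of_finiteDimensional
    ({ toFun := fun d => d j, map_add' := fun _ _ => rfl, map_smul' := fun _ _ => rfl } :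
      EuclideanSpace ℝ (Fin n) →ₗ[ℝ] ℝ)

lemma euclid_sum_continuous {n : ℕ} :
    Continuous (fun d : EuclideanSpace ℝ (Fin n) => ∑ i, d i) :=
  continuous_finset_sum _ (fun j _ => euclid_coord_continuous j)

lemma euclid_mulVec_continuous {m n : ℕ} (A : Matrix (Fin m) (Fin n) ℝ) :
    Continuous (fun d : EuclideanSpace ℝ (Fin n) => A.mulVec d) :=
  LinearMap.continuous_of_finiteDimensional
    ({ toFun := fun d => A.mulVec d,
       map_add' := fun a c => Matrix.mulVec_add A a c,
       map_smul' := fun r a => Matrix.mulVec_smul A r a } :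
      EuclideanSpace ℝ (Fin n) →ₗ[ℝ] (Fin m → ℝ))

lemma sum_subtype_ext {n : ℕ} (p : Fin n → Prop) [DecidablePred p] (g : Fin n → ℝ)
    (hg : ∀ i, ¬ p i → g i = 0) : ∑ j : {i : Fin n // p i}, g j.1 = ∑ i, g i := by
  classical
  have h2 : ∑ i ∈ Finset.univ.filter p, g i = ∑ j : {i : Fin n // p i}, g j.1 :=
    Finset.sum_subtype (Finset.univ.filter p) (fun i => by simp) g
  rw [← h2]
  apply Finset.sum_subset (Finset.filter_subset _ _)
  intro i _ hi
  exact hg i (by simpa using hi)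

end Helpers

theorem stmt_4 {m n : ℕ} (A : Matrix (Fin m) (Fin n) ℝ) (b : Fin m → ℝ)
    (x : Fin n → ℝ) (hAx : A.mulVec x = b) (hx : 0 ≤ x) :
    uniqueLeastL1 A b x ↔
      ((∃ η : Fin n → ℝ, (∃ u : Fin m → ℝ, A.transpose.mulVec u = η) ∧
        (∀ i, 0 < x i → η i = 1) ∧ (∀ i, ¬ 0 < x i → η i < 1)) ∧
       LinearIndependent ℝ (fun j : {i : Fin n // 0 < x i} =>
        (Sum.elim (fun k : Fin m => A k j.1) (fun _ : Unit => (1 : ℝ)) :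
          Fin m ⊕ Unit → ℝ))) := by
  classical
  have hx' : ∀ i, (0:ℝ) ≤ x i := fun i => hx i
  constructor
  · rintro ⟨-, -, hmin⟩
    -- the key consequence of minimality
    have Hpos : ∀ d : Fin n → ℝ, A.mulVec d = 0 → (∀ j, ¬ 0 < x j → 0 ≤ d j) →
        d ≠ 0 → 0 < ∑ i, d i := by
      intro d hd hdP hdne
      obtain ⟨t, ht, htw⟩ : ∃ t : ℝ, 0 < t ∧ ∀ i, 0 ≤ x i + t * d i := by
        by_cases hs : (Finset.univ.filter (fun i => d i < 0)).Nonempty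
        · set s := Finset.univ.filter (fun i => d i < 0) with hsdef
          set t := s.inf' hs (fun i => x i / (-(d i))) with htdef
          have ht : 0 < t := by
            rw [htdef, Finset.lt_inf'_iff]
            intro i hi
            rw [hsdef, Finset.mem_filter] at hi
            have hdi : d i < 0 := hi.2
            have hxi : 0 < x i := by
              rcases lt_or_ge 0 (x i) with h | h
              · exact h
              · exact absurd (hdP i (not_lt.mpr h)) (not_le.mpr hdi)
            exact div_pos hxi (by linarith)
          refine ⟨t, ht, ?_⟩
          intro i
          by_cases hdi : d i < 0
          · have hle : t ≤ x i / (-(d i)) := by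
              rw [htdef]
              exact Finset.inf'_le _ (by simp [hsdef, hdi])
            have h2 : t * (-(d i)) ≤ x i := (le_div_iff₀ (by linarith)).mp hle
            nlinarith
          · push_neg at hdi
            nlinarith [mul_nonneg ht.le hdi, hx' i]
        · refine ⟨1, one_pos, fun i => ?_⟩
          have hdi : 0 ≤ d i := by
            by_contra h
            exact hs ⟨i, Finset.mem_filter.mpr ⟨Finset.mem_univ i, not_le.mp h⟩⟩
          nlinarith [hx' i]
      set w : Fin n → ℝ := fun i => x i + t * d i with hwdef
      have hwb : A.mulVec w = b := by
        have hw : w = x + t • d := by funext i; simp [hwdef, smul_eq_mul]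
        rw [hw, Matrix.mulVec_add, Matrix.mulVec_smul, hAx, hd, smul_zero, add_zero]
      have hw0 : (0:Fin n → ℝ) ≤ w := fun i => htw i
      have hwne : w ≠ x := by
        obtain ⟨i, hi⟩ := Function.ne_iff.mp hdne
        intro hcontra
        have h1 := congrFun hcontra i
        simp only [hwdef] at h1
        have h2 : t * d i = 0 := by linarith
        rcases mul_eq_zero.mp h2 with h | h
        · exact absurd h (ne_of_gt ht)
        · exact hi (by simpa using h)
      have hlt := hmin w hwb hw0 hwne
      have hxabs : ∑ i, |x i| = ∑ i, x i :=
        Finset.sum_congr rfl (fun i _ => abs_of_nonneg (hx' i))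
      have hwabs : ∑ i, |w i| = ∑ i, w i :=
        Finset.sum_congr rfl (fun i _ => abs_of_nonneg (htw i))
      rw [hxabs, hwabs] at hlt
      have hsum : ∑ i, w i = ∑ i, x i + t * ∑ i, d i := by
        simp only [hwdef]
        rw [Finset.sum_add_distrib, Finset.mul_sum]
      rw [hsum] at hlt
      by_contra hcon
      push_neg at hcon
      nlinarith [mul_nonpos_of_nonneg_of_nonpos ht.le hcon]
    constructor
    · -- the dual certificate
      set E := EuclideanSpace ℝ (Fin n) with hEdef
      set P : Finset (Fin n) := Finset.univ.filter (fun j => ¬ 0 < x j) with hPdef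
      set N : Submodule ℝ E :=
        { carrier := {d : E | A.mulVec d = 0}
          add_mem' := fun {a c} (ha : A.mulVec a = 0) (hc : A.mulVec c = 0) =>
            show A.mulVec (a + c) = 0 by rw [Matrix.mulVec_add, ha, hc, add_zero]
          zero_mem' := show A.mulVec 0 = 0 from Matrix.mulVec_zero A
          smul_mem' := fun r {a} (ha : A.mulVec a = 0) =>
            show A.mulVec (r • a) = 0 by rw [Matrix.mulVec_smul, ha, smul_zero] } with hNdef
      have hNmem : ∀ d : E, d ∈ N ↔ A.mulVec d = 0 := fun d => Iff.rfl
      set pr : E → E := fun v => ((N.orthogonalProjectionOnto v : N) : E) with hprdef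
      have hprN : ∀ v : E, pr v ∈ N := fun v => (N.orthogonalProjectionOnto v).2
      set pvec : Fin n → E := fun j => pr (EuclideanSpace.single j 1) with hpvecdef
      set ones : E := WithLp.toLp 2 (fun _ => (1:ℝ) : Fin n → ℝ) with honesdef
      set onesP : E := WithLp.toLp 2 (fun i => if 0 < x i then (0:ℝ) else 1 : Fin n → ℝ) with honesPdef
      -- uniform margin
      obtain ⟨δ, hδpos, hδ⟩ : ∃ δ : ℝ, 0 < δ ∧ ∀ d : E,
          A.mulVec d = 0 → (∀ j, ¬ 0 < x j → 0 ≤ d j) → δ * ‖d‖ ≤ ∑ i, d i := by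
        set C : Set E := {d : E | A.mulVec d = 0 ∧ ∀ j, ¬ 0 < x j → 0 ≤ d j} with hCdef
        have hCclosed : IsClosed C := by
          have h1 : IsClosed {d : E | A.mulVec d = 0} :=
            isClosed_eq (euclid_mulVec_continuous A) continuous_const
          have h2 : IsClosed {d : E | ∀ j, ¬ 0 < x j → 0 ≤ d j} := by
            have he : {d : E | ∀ j, ¬ 0 < x j → 0 ≤ d j}
                = ⋂ j, {d : E | ¬ 0 < x j → 0 ≤ d j} := by
              ext d; simp
            rw [he]
            refine isClosed_iInter (fun j => ?_)
            by_cases hj : 0 < x j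
            · have : {d : E | ¬ 0 < x j → 0 ≤ d j} = Set.univ := by
                ext d; simp [hj]
              rw [this]; exact isClosed_univ
            · have : {d : E | ¬ 0 < x j → 0 ≤ d j} = {d : E | 0 ≤ d j} := by
                ext d; simp [hj]
              rw [this]
              exact isClosed_le continuous_const (euclid_coord_continuous j)
          exact h1.inter h2
        have hscale : ∀ d : E, d ∈ C → d ≠ 0 → (‖d‖⁻¹ • d) ∈ C ∧ ‖(‖d‖⁻¹ • d)‖ = 1 := by
          intro d hd hd0
          have hn : (0:ℝ) < ‖d‖ := norm_pos_iff.mpr hd0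
          constructor
          · constructor
            · show A.mulVec (‖d‖⁻¹ • d) = 0
              rw [Matrix.mulVec_smul, hd.1, smul_zero]
            · intro j hj
              have : (‖d‖⁻¹ • d) j = ‖d‖⁻¹ * d j := rfl
              rw [this]
              exact mul_nonneg (inv_nonneg.mpr hn.le) (hd.2 j hj)
          · rw [norm_smul, norm_inv, norm_norm, inv_mul_cancel₀ (ne_of_gt hn)]
        set S : Set E := Metric.sphere 0 1 ∩ C with hSdef
        have hScompact : IsCompact S := (isCompact_sphere 0 1).inter_right hCclosed
        by_cases hSne : S.Nonempty
        · obtain ⟨d₀, hd₀S, hd₀min⟩ :=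
            hScompact.exists_isMinOn hSne euclid_sum_continuous.continuousOn
          have hd₀C : d₀ ∈ C := hd₀S.2
          have hd₀n : ‖d₀‖ = 1 := mem_sphere_zero_iff_norm.mp hd₀S.1
          have hd₀ne : d₀ ≠ 0 := fun h => by simp [h] at hd₀n
          refine ⟨∑ i, d₀ i, Hpos d₀ hd₀C.1 hd₀C.2 (fun h => hd₀ne (by simpa using h)), ?_⟩
          intro d hd1 hd2
          by_cases hd0 : d = 0
          · have hz : ∀ i : Fin n, (0:E) i = 0 := fun i => rfl
            simp [hd0, hz]
          · have hn : (0:ℝ) < ‖d‖ := norm_pos_iff.mpr hd0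
            obtain ⟨huC, hun⟩ := hscale d ⟨hd1, hd2⟩ hd0
            have hle := (isMinOn_iff.mp hd₀min) _ ⟨mem_sphere_zero_iff_norm.mpr hun, huC⟩
            have hsum : ∑ i, (‖d‖⁻¹ • d) i = ‖d‖⁻¹ * ∑ i, d i := by
              rw [Finset.mul_sum]
              exact Finset.sum_congr rfl (fun i _ => rfl)
            rw [hsum] at hle
            calc (∑ i, d₀ i) * ‖d‖ ≤ (‖d‖⁻¹ * ∑ i, d i) * ‖d‖ :=
                  mul_le_mul_of_nonneg_right hle hn.le
              _ = ∑ i, d i := by field_simp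
        · refine ⟨1, one_pos, ?_⟩
          intro d hd1 hd2
          by_cases hd0 : d = 0
          · have hz : ∀ i : Fin n, (0:E) i = 0 := fun i => rfl
            simp [hd0, hz]
          · exfalso
            obtain ⟨huC, hun⟩ := hscale d ⟨hd1, hd2⟩ hd0
            exact hSne ⟨_, mem_sphere_zero_iff_norm.mpr hun, huC⟩
      set t : ℝ := δ / ((n:ℝ) + 1) with htdef
      have hn1 : (0:ℝ) < (n:ℝ) + 1 := by positivity
      have htpos : 0 < t := div_pos hδpos hn1
      have htn : t * ((n:ℝ) + 1) = δ := div_mul_cancel₀ δ (ne_of_gt hn1)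
      set tgt : E := pr ones - t • pr onesP with htgtdef
      set L : List E := P.toList.map pvec with hLdef
      have hprinner : ∀ v (d : E), d ∈ N → ⟪pr v, d⟫ = ⟪v, d⟫ := fun v d hd =>
        proj_inner_eq N hd v
      have hLmem : ∀ z ∈ L, z ∈ N := by
        intro z hz
        rw [hLdef, List.mem_map] at hz
        obtain ⟨j, _, rfl⟩ := hz
        exact hprN _
      have htgtN : tgt ∈ N := N.sub_mem (hprN _) (N.smul_mem _ (hprN _))
      -- the cone membership
      have hcone : inCone L tgt := by
        apply coneA N L hLmem tgt htgtN
        intro d hdN hdL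
        have hdP : ∀ j, ¬ 0 < x j → 0 ≤ d j := by
          intro j hj
          have hmem : pvec j ∈ L := by
            rw [hLdef]
            exact List.mem_map_of_mem (f := pvec)
              (Finset.mem_toList.mpr (Finset.mem_filter.mpr ⟨Finset.mem_univ j, hj⟩))
          have h1 := hdL _ hmem
          rw [hpvecdef, hprinner _ _ hdN, euclid_single_inner] at h1
          exact h1
        have hdC := hδ d ((hNmem d).mp hdN) hdP
        have h1 : ⟪tgt, d⟫ = (∑ i, d i) - t * ∑ j ∈ P, d j := by
          rw [htgtdef, inner_sub_left, real_inner_smul_left,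
            hprinner _ _ hdN, hprinner _ _ hdN, euclid_inner, euclid_inner]
          congr 1
          · exact Finset.sum_congr rfl (fun i _ => one_mul (d i))
          · congr 1
            rw [hPdef, Finset.sum_filter]
            refine Finset.sum_congr rfl (fun i _ => ?_)
            simp only [honesPdef]
            by_cases hi : 0 < x i
            · rw [if_pos hi, if_neg (not_not_intro hi), zero_mul]
            · rw [if_neg hi, if_pos hi, one_mul]
        have hbound : ∑ j ∈ P, d j ≤ (n:ℝ) * ‖d‖ := by
          calc ∑ j ∈ P, d j ≤ ∑ j ∈ P, ‖d‖ :=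
                Finset.sum_le_sum (fun j _ => le_trans (le_abs_self _) (euclid_coord_le_norm d j))
            _ = (P.card : ℝ) * ‖d‖ := by rw [Finset.sum_const, nsmul_eq_mul]
            _ ≤ (n:ℝ) * ‖d‖ := by
                apply mul_le_mul_of_nonneg_right _ (norm_nonneg d)
                have := Finset.card_filter_le Finset.univ (fun j => ¬ 0 < x j)
                simp only [hPdef]
                exact_mod_cast le_trans (Nat.cast_le.mpr this) (by simp)
        rw [h1]
        have heq : δ * ‖d‖ = t * ((n:ℝ) * ‖d‖) + t * ‖d‖ := by rw [← htn]; ring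
        have h3 : t * ∑ j ∈ P, d j ≤ t * ((n:ℝ) * ‖d‖) :=
          mul_le_mul_of_nonneg_left hbound htpos.le
        linarith [hdC, h3, heq, mul_nonneg htpos.le (norm_nonneg d)]
      -- extract the representation
      obtain ⟨c, hc0, hcsupp, hcrep⟩ := inCone_rep pvec P.toList tgt hcone
      set cstar : Fin n → ℝ := fun i => c i + (if 0 < x i then 0 else t) with hcstardef
      refine ⟨fun i => 1 - cstar i, ?_, ?_, ?_⟩
      · apply exists_transpose_mulVec
        intro d hd
        have hdN : (WithLp.toLp 2 d : E) ∈ N := hd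
        have h1 : ⟪tgt, WithLp.toLp 2 d⟫ = (∑ i, d i) - t * ∑ i, onesP i * d i := by
          rw [htgtdef, inner_sub_left, real_inner_smul_left,
            hprinner _ _ hdN, hprinner _ _ hdN, euclid_inner, euclid_inner]
          congr 1
          exact Finset.sum_congr rfl (fun i _ => one_mul (d i))
        have h2 : ⟪tgt, WithLp.toLp 2 d⟫ = ∑ i, c i * d i := by
          rw [hcrep, sum_inner]
          apply Finset.sum_congr rfl
          intro i _
          rw [real_inner_smul_left, hpvecdef, hprinner _ _ hdN, euclid_single_inner]
        have h3 : ∑ i, (1 - cstar i) * d i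
            = (∑ i, d i) - (∑ i, c i * d i) - t * ∑ i, onesP i * d i := by
          rw [Finset.mul_sum, ← Finset.sum_sub_distrib, ← Finset.sum_sub_distrib]
          apply Finset.sum_congr rfl
          intro i _
          simp only [hcstardef, honesPdef]
          by_cases hi : 0 < x i
          · rw [if_pos hi, if_pos hi]; ring
          · rw [if_neg hi, if_neg hi]; ring
        rw [h3]
        rw [h1] at h2
        linarith
      · intro i hi
        have hiP : i ∉ P.toList := by
          rw [Finset.mem_toList, hPdef]
          simp [hi]
        simp [hcstardef, hcsupp i hiP, hi]
      · intro i hi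
        have h1 : t ≤ cstar i := by
          simp only [hcstardef, if_neg hi]
          linarith [hc0 i]
        show (1:ℝ) - cstar i < 1
        linarith [htpos, h1]
    · -- linear independence
      rw [Fintype.linearIndependent_iff]
      intro c hc j
      set d : Fin n → ℝ := fun i => if h : 0 < x i then c ⟨i, h⟩ else 0 with hddef
      have hdsupp : ∀ i, ¬ 0 < x i → d i = 0 := fun i hi => dif_neg hi
      have hsub : ∀ f : Fin n → ℝ,
          ∑ i, d i * f i = ∑ j : {i : Fin n // 0 < x i}, c j * f j.1 := by
        intro f
        rw [← sum_subtype_ext (fun i => 0 < x i) (fun i => d i * f i)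
          (fun i hi => by show d i * f i = 0; rw [hdsupp i hi, zero_mul])]
        apply Finset.sum_congr rfl
        intro j _
        congr 1
        simp only [hddef]
        rw [dif_pos j.2]
      have hAd : A.mulVec d = 0 := by
        funext k
        have h1 := congrFun hc (Sum.inl k)
        simp only [Finset.sum_apply, Pi.smul_apply, Sum.elim_inl, smul_eq_mul,
          Pi.zero_apply] at h1
        show dotProduct (A k) d = 0
        rw [dotProduct]
        rw [show ∑ i, A k i * d i = ∑ i, d i * (A k i) from
          Finset.sum_congr rfl (fun i _ => mul_comm _ _)]
        rw [hsub (fun i => A k i)]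
        exact h1
      have hdsum : ∑ i, d i = 0 := by
        have h1 := congrFun hc (Sum.inr ())
        simp only [Finset.sum_apply, Pi.smul_apply, Sum.elim_inr, smul_eq_mul,
          Pi.zero_apply, mul_one] at h1
        rw [show ∑ i, d i = ∑ i, d i * 1 from
          Finset.sum_congr rfl (fun i _ => (mul_one _).symm)]
        rw [hsub (fun _ => 1)]
        simpa using h1
      have hd0 : d = 0 := by
        by_contra hdne
        have := Hpos d hAd (fun i hi => le_of_eq (hdsupp i hi).symm) hdne
        rw [hdsum] at this
        exact lt_irrefl 0 this
      have := congrFun hd0 j.1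
      simp only [hddef, Pi.zero_apply] at this
      rw [dif_pos j.2] at this
      simpa using this
  · rintro ⟨⟨η, ⟨u, hu⟩, hη1, hη2⟩, hli⟩
    refine ⟨hAx, hx, ?_⟩
    intro w hw hw0 hwx
    have hw' : ∀ i, (0:ℝ) ≤ w i := fun i => hw0 i
    have key : ∀ v : Fin n → ℝ, A.mulVec v = b →
        ∑ i, η i * v i = dotProduct u b := by
      intro v hv
      calc ∑ i, η i * v i = dotProduct η v := rfl
        _ = dotProduct (A.transpose.mulVec u) v := by rw [hu]
        _ = dotProduct (Matrix.vecMul u A) v := by rw [Matrix.mulVec_transpose]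
        _ = dotProduct u (A.mulVec v) := (dotProduct_mulVec u A v).symm
        _ = dotProduct u b := by rw [hv]
    have hXsum : ∑ i, x i = ∑ i, η i * x i := by
      apply Finset.sum_congr rfl
      intro i _
      by_cases h : 0 < x i
      · rw [hη1 i h, one_mul]
      · have hxi : x i = 0 := le_antisymm (not_lt.mp h) (hx' i)
        rw [hxi, mul_zero]
    have hWle : ∑ i, η i * w i ≤ ∑ i, w i := by
      apply Finset.sum_le_sum
      intro i _
      by_cases h : 0 < x i
      · rw [hη1 i h, one_mul]
      · nlinarith [hη2 i h, hw' i]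
    have hle : ∑ i, x i ≤ ∑ i, w i := by
      calc ∑ i, x i = ∑ i, η i * x i := hXsum
        _ = dotProduct u b := key x hAx
        _ = ∑ i, η i * w i := (key w hw).symm
        _ ≤ ∑ i, w i := hWle
    have hne : ∑ i, x i ≠ ∑ i, w i := by
      intro heq
      have hEq : ∑ i, η i * w i = ∑ i, w i := by
        have h1 : ∑ i, η i * w i = ∑ i, x i := by
          rw [key w hw, ← key x hAx, ← hXsum]
        linarith
      have hzero : ∀ i, ¬ 0 < x i → w i = 0 := by
        have hsz : ∑ i, (1 - η i) * w i = 0 := by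
          have : ∑ i, (1 - η i) * w i = (∑ i, w i) - ∑ i, η i * w i := by
            rw [← Finset.sum_sub_distrib]
            exact Finset.sum_congr rfl (fun i _ => by ring)
          rw [this, hEq, sub_self]
        have hnn : ∀ i ∈ Finset.univ, (0:ℝ) ≤ (1 - η i) * w i := by
          intro i _
          by_cases h : 0 < x i
          · rw [hη1 i h]; simp
          · exact mul_nonneg (by linarith [hη2 i h]) (hw' i)
        have hall := (Finset.sum_eq_zero_iff_of_nonneg hnn).mp hsz
        intro i hi
        have h0 := hall i (Finset.mem_univ i)
        have h1 : (0:ℝ) < 1 - η i := by linarith [hη2 i hi]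
        rcases mul_eq_zero.mp h0 with h | h
        · linarith
        · exact h
      have hsupp : ∀ i, ¬ 0 < x i → w i - x i = 0 := by
        intro i hi
        rw [hzero i hi, le_antisymm (not_lt.mp hi) (hx' i), sub_zero]
      rw [Fintype.linearIndependent_iff] at hli
      have hcz := hli (fun j => w j.1 - x j.1) ?_
      · apply hwx
        funext i
        by_cases h : 0 < x i
        · have := hcz ⟨i, h⟩
          simpa using by linarith [this]
        · rw [hzero i h, le_antisymm (not_lt.mp h) (hx' i)]
      · funext z
        cases z with
        | inl k =>
          simp only [Finset.sum_apply, Pi.smul_apply, Sum.elim_inl, smul_eq_mul,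
            Pi.zero_apply]
          rw [sum_subtype_ext (fun i => 0 < x i) (fun i => (w i - x i) * A k i)
            (fun i hi => by show (w i - x i) * A k i = 0; rw [hsupp i hi, zero_mul])]
          have h1 : ∑ i, (w i - x i) * A k i
              = dotProduct (A k) w - dotProduct (A k) x := by
            rw [dotProduct, dotProduct, ← Finset.sum_sub_distrib]
            exact Finset.sum_congr rfl (fun i _ => by ring)
          rw [h1]
          have h2 : dotProduct (A k) w = b k := congrFun hw k
          have h3 : dotProduct (A k) x = b k := congrFun hAx k
          rw [h2, h3, sub_self]
        | inr u =>
          simp only [Finset.sum_apply, Pi.smul_apply, Sum.elim_inr, smul_eq_mul,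
            Pi.zero_apply, mul_one]
          have hext := sum_subtype_ext (fun i => 0 < x i) (fun i => w i - x i) hsupp
          rw [hext, Finset.sum_sub_distrib, heq, sub_self]
    rw [Finset.sum_congr rfl (fun i (_ : i ∈ Finset.univ) => abs_of_nonneg (hx' i)),
      Finset.sum_congr rfl (fun i (_ : i ∈ Finset.univ) => abs_of_nonneg (hw' i))]
    exact lt_of_le_of_ne hle hne
end

section
/- Let A be a real m×n matrix, b ∈ ℝ^m, and let x be a nonnegative solution to Ax = b with J₊ = {i : xᵢ > 0}. Then x is the unique least ℓ1-norm nonnegative solution to the system Ax = b if and only if (i) there exists η ∈ R(Aᵀ) with ηᵢ = 1 for all i ∈ J₊ and ηᵢ < 1 for all i ∉ J₊, and (ii) the column submatrix A_{J₊} has full column rank. -/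
open Matrix Finset

open scoped InnerProductSpace

section Cones

variable {H : Type*} [NormedAddCommGroup H] [InnerProductSpace ℝ H] [FiniteDimensional ℝ H]

lemma cone_isClosed : ∀ (k : ℕ) (v : Fin k → H),
    IsClosed {z : H | ∃ y : Fin k → ℝ, (∀ i, 0 ≤ y i) ∧ ∑ i, y i • v i = z} := by
  intro k
  induction k using Nat.strong_induction_on with
  | _ k IH =>
  intro v
  by_cases hv : LinearIndependent ℝ v
  · have hker : LinearMap.ker (Fintype.linearCombination ℝ v) = ⊥ := by
      rw [LinearMap.ker_eq_bot']
      intro g hg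
      have := Fintype.linearIndependent_iff.1 hv g (by
        simpa [Fintype.linearCombination_apply] using hg)
      funext i; exact this i
    have hc : IsClosed {y : Fin k → ℝ | ∀ i, 0 ≤ y i} := by
      have : {y : Fin k → ℝ | ∀ i, 0 ≤ y i} = ⋂ i, {y : Fin k → ℝ | 0 ≤ y i} := by
        ext y; simp
      rw [this]
      exact isClosed_iInter fun i => isClosed_le continuous_const (continuous_apply i)
    have hEq : {z : H | ∃ y : Fin k → ℝ, (∀ i, 0 ≤ y i) ∧ ∑ i, y i • v i = z}
        = (Fintype.linearCombination ℝ v) '' {y : Fin k → ℝ | ∀ i, 0 ≤ y i} := by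
      ext z
      constructor
      · rintro ⟨y, h1, h2⟩
        exact ⟨y, h1, by simpa [Fintype.linearCombination_apply] using h2⟩
      · rintro ⟨y, h1, h2⟩
        exact ⟨y, h1, by simpa [Fintype.linearCombination_apply] using h2⟩
    rw [hEq]
    exact ((Fintype.linearCombination ℝ v).isClosedEmbedding_of_injective hker).isClosedMap
      _ hc
  · rcases k with - | k'
    · exact absurd linearIndependent_empty_type hv
    obtain ⟨g, hg0, i₁, hi₁⟩ := Fintype.not_linearIndependent_iff.1 hv
    have key : ∃ c : Fin (k' + 1) → ℝ, (∑ i, c i • v i = 0) ∧ ∃ i, c i < 0 := by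
      by_cases hneg : ∃ i, g i < 0
      · exact ⟨g, hg0, hneg⟩
      · push_neg at hneg
        refine ⟨-g, by simpa using hg0, i₁, ?_⟩
        have := (hneg i₁).lt_of_ne' hi₁
        simpa using this
    obtain ⟨c, hc0, hcneg⟩ := key
    have hDclosed : ∀ i : Fin (k' + 1),
        IsClosed {z : H | ∃ y' : Fin k' → ℝ, (∀ l, 0 ≤ y' l) ∧
          ∑ l, y' l • v (i.succAbove l) = z} :=
      fun i => IH k' (Nat.lt_succ_self k') (fun l => v (i.succAbove l))
    have hset : {z : H | ∃ y : Fin (k' + 1) → ℝ, (∀ i, 0 ≤ y i) ∧ ∑ i, y i • v i = z}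
        = ⋃ i : {i : Fin (k' + 1) // c i < 0}, {z : H | ∃ y' : Fin k' → ℝ,
            (∀ l, 0 ≤ y' l) ∧ ∑ l, y' l • v (i.1.succAbove l) = z} := by
      ext z
      simp only [Set.mem_setOf_eq, Set.mem_iUnion]
      constructor
      · rintro ⟨y, hy0, hyz⟩
        set T : Finset (Fin (k' + 1)) := univ.filter (fun i => c i < 0) with hT
        have hTne : T.Nonempty := by
          obtain ⟨i, hi⟩ := hcneg
          exact ⟨i, by simp [hT, hi]⟩
        set t : ℝ := T.inf' hTne (fun i => y i / (-c i)) with ht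
        obtain ⟨i₀, hi₀T, hi₀eq⟩ := T.exists_mem_eq_inf' hTne (fun i => y i / (-c i))
        have hci₀ : c i₀ < 0 := by simpa [hT] using hi₀T
        have htnn : 0 ≤ t := by
          rw [ht, hi₀eq]
          exact div_nonneg (hy0 i₀) (by linarith)
        have hle : ∀ l, c l < 0 → t ≤ y l / (-c l) := fun l hl =>
          Finset.inf'_le _ (by simp [hT, hl])
        set y₁ : Fin (k' + 1) → ℝ := fun l => y l + t * c l with hy₁
        have hy₁0 : ∀ l, 0 ≤ y₁ l := by
          intro l
          rcases le_or_gt 0 (c l) with h | h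
          · exact add_nonneg (hy0 l) (mul_nonneg htnn h)
          · have := hle l h
            rw [le_div_iff₀ (by linarith : (0:ℝ) < -c l)] at this
            simp only [hy₁]; nlinarith
        have hci₀' : c i₀ ≠ 0 := ne_of_lt hci₀
        have hy₁i₀ : y₁ i₀ = 0 := by
          show y i₀ + t * c i₀ = 0
          rw [ht, hi₀eq, div_mul_eq_mul_div, div_neg, mul_div_assoc,
            div_self hci₀', mul_one, add_neg_cancel]
        have hy₁sum : ∑ l, y₁ l • v l = z := by
          simp only [hy₁, add_smul, mul_smul]
          rw [Finset.sum_add_distrib, ← Finset.smul_sum, hc0, smul_zero, add_zero, hyz]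
        refine ⟨⟨i₀, hci₀⟩, fun l => y₁ (i₀.succAbove l), fun l => hy₁0 _, ?_⟩
        have := Fin.sum_univ_succAbove (fun l => y₁ l • v l) i₀
        rw [this, hy₁i₀, zero_smul, zero_add] at hy₁sum
        exact hy₁sum
      · rintro ⟨⟨i, hi⟩, y', hy'0, hy'z⟩
        set Y : Fin (k' + 1) → ℝ := Fin.insertNth i (0 : ℝ) y' with hY
        refine ⟨Y, ?_, ?_⟩
        · intro l
          refine i.succAboveCases ?_ ?_ l
          · simp [hY]
          · intro j; simpa [hY] using hy'0 j
        · rw [Fin.sum_univ_succAbove (fun l => Y l • v l) i]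
          simp [hY, hy'z]
    rw [hset]
    exact isClosed_iUnion_of_finite fun i => hDclosed i.1

lemma farkas_s6 (k : ℕ) (v : Fin k → H) (c : H) :
    (∃ y : Fin k → ℝ, (∀ i, 0 ≤ y i) ∧ ∑ i, y i • v i = c) ∨
      (∃ u : H, (∀ i, ⟪v i, u⟫_ℝ ≤ 0) ∧ 0 < ⟪c, u⟫_ℝ) := by
  classical
  by_cases hc : ∃ y : Fin k → ℝ, (∀ i, 0 ≤ y i) ∧ ∑ i, y i • v i = c
  · exact Or.inl hc
  · right
    set K : ConvexCone ℝ H :=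
      { carrier := {z : H | ∃ y : Fin k → ℝ, (∀ i, 0 ≤ y i) ∧ ∑ i, y i • v i = z}
        smul_mem' := by
          rintro r hr z ⟨y, hy0, rfl⟩
          exact ⟨fun i => r * y i, fun i => mul_nonneg hr.le (hy0 i), by
            simp [Finset.smul_sum, mul_smul]⟩
        add_mem' := by
          rintro z ⟨y, hy0, rfl⟩ z' ⟨y', hy'0, rfl⟩
          exact ⟨fun i => y i + y' i, fun i => add_nonneg (hy0 i) (hy'0 i), by
            simp [add_smul, Finset.sum_add_distrib]⟩ } with hK
    have hne : (K : Set H).Nonempty := ⟨0, ⟨fun _ => 0, fun i => le_rfl, by simp⟩⟩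
    have hcl : IsClosed (K : Set H) := cone_isClosed k v
    have hnm : c ∉ K := fun h => hc h
    obtain ⟨y₀, hy₀, hy₀c⟩ : ∃ y : H, (∀ z ∈ K, 0 ≤ ⟪z, y⟫_ℝ) ∧ ⟪y, c⟫_ℝ < 0 := by
      let P : ProperCone ℝ H :=
        { carrier := (K : Set H)
          add_mem' := fun ha hb => K.add_mem ha hb
          zero_mem' := ⟨fun _ => 0, fun _ => le_rfl, by simp⟩
          smul_mem' := by
            rintro r z ⟨y, hy0, rfl⟩
            exact ⟨fun i => r * y i, fun i => mul_nonneg r.2 (hy0 i), by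
              simp [NNReal.smul_def, Finset.smul_sum, mul_smul]⟩
          isClosed' := hcl }
      obtain ⟨y, hy, hyc⟩ := ProperCone.hyperplane_separation' P (show c ∉ P from hnm)
      exact ⟨y, hy, by rw [real_inner_comm]; exact hyc⟩
    refine ⟨-y₀, fun i => ?_, ?_⟩
    · have hvi : v i ∈ K := by
        refine ⟨fun l => if l = i then 1 else 0, fun l => by positivity, ?_⟩
        simp [ite_smul]
      have := hy₀ (v i) hvi
      rw [inner_neg_right]
      linarith
    · rw [inner_neg_right, ← real_inner_comm]
      linarith

lemma farkas' {ι : Type*} [Fintype ι] (v : ι → H) (c : H) :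
    (∃ y : ι → ℝ, (∀ i, 0 ≤ y i) ∧ ∑ i, y i • v i = c) ∨
      (∃ u : H, (∀ i, ⟪v i, u⟫_ℝ ≤ 0) ∧ 0 < ⟪c, u⟫_ℝ) := by
  obtain e := Fintype.equivFin ι
  rcases farkas_s6 (Fintype.card ι) (v ∘ e.symm) c with ⟨y, hy0, hyc⟩ | ⟨u, hu1, hu2⟩
  · left
    refine ⟨y ∘ e, fun i => hy0 _, ?_⟩
    rw [← hyc]
    exact Fintype.sum_equiv e _ _ (fun i => by simp)
  · right
    exact ⟨u, fun i => by simpa using hu1 (e i), hu2⟩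

end Cones

section Helpers

lemma sum_subtype_eq' {n : ℕ} (P : Fin n → Prop) [DecidablePred P] (f : Fin n → ℝ)
    (hf : ∀ i, ¬ P i → f i = 0) : ∑ i, f i = ∑ l : {i // P i}, f l.1 := by
  classical
  rw [← Finset.sum_subtype (Finset.univ.filter P) (fun i => by simp) f]
  exact (Finset.sum_subset (Finset.filter_subset _ _)
    (fun i _ hi => hf i (by simpa using hi))).symm

lemma no_descent' {m n : ℕ} (A : Matrix (Fin m) (Fin n) ℝ) (b : Fin m → ℝ)
    (x : Fin n → ℝ) (hx : 0 ≤ x)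
    (hmin : ∀ w : Fin n → ℝ, A.mulVec w = b → 0 ≤ w → w ≠ x → ∑ i, |x i| < ∑ i, |w i|)
    (hAx : A.mulVec x = b)
    (v : Fin n → ℝ) (hv0 : A.mulVec v = 0) (hvJ : ∀ i, ¬ 0 < x i → 0 ≤ v i)
    (hvne : v ≠ 0) (hsum : ∑ i, v i ≤ 0) : False := by
  classical
  obtain ⟨i₀, hi₀⟩ : ∃ i, v i ≠ 0 := by
    by_contra h; push_neg at h; exact hvne (funext h)
  have hne : (univ : Finset (Fin n)).Nonempty := ⟨i₀, mem_univ _⟩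
  set t : ℝ := univ.inf' hne (fun i => if v i < 0 then x i / (-v i) else 1) with ht
  have htpos : 0 < t := by
    rw [ht, Finset.lt_inf'_iff]
    intro i _
    split_ifs with h
    · have hxi : 0 < x i := by
        by_contra hxi
        exact absurd (hvJ i hxi) (not_le.2 h)
      exact div_pos hxi (by linarith)
    · norm_num
  have hkey : ∀ i, v i < 0 → t * (-v i) ≤ x i := by
    intro i hi
    have h1 : t ≤ x i / (-v i) := by
      have h2 := Finset.inf'_le (f := fun i => if v i < 0 then x i / (-v i) else 1)
        (mem_univ i)
      rwa [if_pos hi] at h2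
    rw [← le_div_iff₀ (by linarith : (0:ℝ) < -v i)]
    exact h1
  set w : Fin n → ℝ := fun i => x i + t * v i with hw
  have hw0 : 0 ≤ w := by
    intro i
    rcases lt_or_ge (v i) 0 with h | h
    · have := hkey i h
      show 0 ≤ x i + t * v i
      nlinarith
    · have h1 : 0 ≤ t * v i := mul_nonneg htpos.le h
      have h2 : (0:ℝ) ≤ x i := hx i
      show 0 ≤ x i + t * v i
      linarith
  have hAw : A.mulVec w = b := by
    have hwe : w = x + t • v := rfl
    rw [hwe, Matrix.mulVec_add, Matrix.mulVec_smul, hv0, smul_zero, add_zero, hAx]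
  have hwx : w ≠ x := by
    intro h
    have h1 := congrFun h i₀
    have h2 : t * v i₀ = 0 := by
      simp only [hw] at h1; linarith
    rcases mul_eq_zero.1 h2 with h' | h'
    exacts [absurd h' (ne_of_gt htpos), hi₀ h']
  have hlt := hmin w hAw hw0 hwx
  have hxs : ∑ i, |x i| = ∑ i, x i := Finset.sum_congr rfl fun i _ => abs_of_nonneg (hx i)
  have hws : ∑ i, |w i| = ∑ i, w i := Finset.sum_congr rfl fun i _ => abs_of_nonneg (hw0 i)
  rw [hxs, hws] at hlt
  have hsw : ∑ i, w i = ∑ i, x i + t * ∑ i, v i := by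
    simp only [hw]
    rw [Finset.sum_add_distrib, Finset.mul_sum]
  nlinarith [mul_nonpos_of_nonneg_of_nonpos htpos.le hsum]

end Helpers

section Dual

lemma dual_cert' {m n : ℕ} (A : Matrix (Fin m) (Fin n) ℝ) (b : Fin m → ℝ)
    (x : Fin n → ℝ) (hx : 0 ≤ x) (hAx : A.mulVec x = b)
    (hmin : ∀ w : Fin n → ℝ, A.mulVec w = b → 0 ≤ w → w ≠ x → ∑ i, |x i| < ∑ i, |w i|)
    (j : Fin n) (hj : ¬ 0 < x j) :
    ∃ u : Fin m → ℝ, (∀ i, 0 < x i → A.transpose.mulVec u i = 1) ∧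
      (∀ i, A.transpose.mulVec u i ≤ 1) ∧ A.transpose.mulVec u j < 1 := by
  classical
  set G : (Fin n ⊕ Fin n) ⊕ Fin 3 → EuclideanSpace ℝ (Fin m ⊕ Bool) :=
    Sum.elim
      (Sum.elim
        (fun i => WithLp.toLp 2 (Sum.elim (fun k => A k i) (fun s => if s then 0 else -1) : Fin m ⊕ Bool → ℝ))
        (fun i => if 0 < x i then
            WithLp.toLp 2 (Sum.elim (fun k => -A k i) (fun s => if s then 0 else 1) : Fin m ⊕ Bool → ℝ)
          else 0))
      (fun r => if r = 0 then WithLp.toLp 2 (Sum.elim (fun k => A k j) (fun _ => -1) : Fin m ⊕ Bool → ℝ)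
        else if r = 1 then WithLp.toLp 2 (Sum.elim 0 (fun _ => -1) : Fin m ⊕ Bool → ℝ)
        else WithLp.toLp 2 (Sum.elim 0 (fun s => if s then 1 else 0) : Fin m ⊕ Bool → ℝ)) with hG
  set cstar : EuclideanSpace ℝ (Fin m ⊕ Bool) :=
    WithLp.toLp 2 (Sum.elim 0 (fun s => if s then -1 else 0) : Fin m ⊕ Bool → ℝ) with hcstar
  rcases farkas' G cstar with ⟨y, hy0, hyc⟩ | ⟨ustar, hust, hcu⟩
  · -- impossible: build a descent direction
    exfalso
    have hcoord : ∀ z, ∑ g, y g * G g z = cstar z := by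
      intro z
      have := congrArg (fun w : EuclideanSpace ℝ (Fin m ⊕ Bool) => WithLp.ofLp w z) hyc
      rw [WithLp.ofLp_sum, Finset.sum_apply] at this
      simpa using this
    set yP : Fin n → ℝ := fun i => y (Sum.inl (Sum.inl i)) with hyP
    set yN : Fin n → ℝ := fun i => y (Sum.inl (Sum.inr i)) with hyN
    set α : ℝ := y (Sum.inr 0) with hα
    set β : ℝ := y (Sum.inr 1) with hβ
    set γ : ℝ := y (Sum.inr 2) with hγ
    have hcu : ∀ k : Fin m, ∑ i, yP i * A k i
        + ∑ i, yN i * (if 0 < x i then -A k i else 0) + α * A k j = 0 := by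
      intro k
      have := hcoord (Sum.inl k)
      rw [Fintype.sum_sum_type, Fintype.sum_sum_type, Fin.sum_univ_three] at this
      simpa [hG, hcstar, apply_ite (fun f : EuclideanSpace ℝ (Fin m ⊕ Bool) => f.ofLp (Sum.inl k))] using this
    have hcs : (- ∑ i, yP i) + ∑ i, (if 0 < x i then yN i else 0) - α - β = 0 := by
      have := hcoord (Sum.inr false)
      rw [Fintype.sum_sum_type, Fintype.sum_sum_type, Fin.sum_univ_three] at this
      have h2 : ∑ i, yP i * (-1)
          + ∑ i, yN i * (if 0 < x i then 1 else 0) + (α * (-1) + β * (-1) + γ * 0) = 0 := by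
        simpa [hG, hcstar, apply_ite (fun f : EuclideanSpace ℝ (Fin m ⊕ Bool) => f.ofLp (Sum.inr false))] using this
      have h3 : ∑ i, yP i * (-1) = - ∑ i, yP i := by
        rw [← Finset.sum_neg_distrib]; exact Finset.sum_congr rfl fun i _ => by ring
      have h4 : ∑ i, yN i * (if 0 < x i then 1 else 0)
          = ∑ i, (if 0 < x i then yN i else 0) := by
        exact Finset.sum_congr rfl fun i _ => by split_ifs <;> ring
      rw [h3, h4] at h2
      linarith
    have hct : α + β = 1 + γ := by
      have := hcoord (Sum.inr true)
      rw [Fintype.sum_sum_type, Fintype.sum_sum_type, Fin.sum_univ_three] at this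
      have h2 : (0:ℝ) + 0 + (α * (-1) + β * (-1) + γ * 1) = -1 := by
        simpa [hG, hcstar, apply_ite (fun f : EuclideanSpace ℝ (Fin m ⊕ Bool) => f.ofLp (Sum.inr true))] using this
      linarith
    set v : Fin n → ℝ :=
      fun i => yP i - (if 0 < x i then yN i else 0) + (if i = j then α else 0) with hv
    have hAv : A.mulVec v = 0 := by
      funext k
      show ∑ i, A k i * v i = 0
      have hexp : ∑ i, A k i * v i
          = ∑ i, yP i * A k i + ∑ i, yN i * (if 0 < x i then -A k i else 0)
            + α * A k j := by
        have h1 : ∀ i, A k i * v i = yP i * A k i + yN i * (if 0 < x i then -A k i else 0)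
            + (if i = j then α * A k i else 0) := by
          intro i
          simp only [hv]
          split_ifs <;> ring
        rw [Finset.sum_congr rfl (fun i _ => h1 i), Finset.sum_add_distrib,
          Finset.sum_add_distrib, Finset.sum_ite_eq' univ j (fun i => α * A k i)]
        simp
      rw [hexp, hcu k]
    have hsumv : ∑ i, v i = -β := by
      simp only [hv]
      rw [Finset.sum_add_distrib, Finset.sum_sub_distrib,
        Finset.sum_ite_eq' univ j (fun _ => α)]
      simp only [mem_univ, if_pos]
      linarith
    have hγ0 : 0 ≤ γ := hy0 _
    have hβ0 : 0 ≤ β := hy0 _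
    have hvJ : ∀ i, ¬ 0 < x i → 0 ≤ v i := by
      intro i hi
      simp only [hv, if_neg hi]
      have := hy0 (Sum.inl (Sum.inl i))
      split_ifs <;> simp only [sub_zero] <;> [linarith [hy0 (Sum.inr (0 : Fin 3))]; linarith]
    rcases eq_or_lt_of_le hβ0 with hβe | hβp
    · -- β = 0, α ≥ 1, v j > 0
      have hα1 : 1 ≤ α := by linarith
      have hvj : 0 < v j := by
        have h0 : (0:ℝ) ≤ yP j := hy0 (Sum.inl (Sum.inl j))
        have hvje : v j = yP j + α := by simp [hv, hj]
        rw [hvje]; linarith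
      exact no_descent' A b x hx hmin hAx v hAv hvJ
        (fun h => by rw [h] at hvj; simp at hvj)
        (by rw [hsumv]; linarith)
    · -- β > 0
      have hvne : v ≠ 0 := by
        intro h
        rw [h] at hsumv
        simp at hsumv
        linarith
      exact no_descent' A b x hx hmin hAx v hAv hvJ hvne (by rw [hsumv]; linarith)
  · -- extract the dual vector
    set u₀ : Fin m → ℝ := fun k => ustar (Sum.inl k) with hu₀
    set s₀ : ℝ := ustar (Sum.inr false) with hs₀
    set r : ℝ := ustar (Sum.inr true) with hr
    have hinner : ∀ a : EuclideanSpace ℝ (Fin m ⊕ Bool),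
        ⟪a, ustar⟫_ℝ = (∑ k, a (Sum.inl k) * u₀ k)
          + (a (Sum.inr false) * s₀ + a (Sum.inr true) * r) := by
      intro a
      rw [PiLp.inner_apply]
      rw [Fintype.sum_sum_type]
      simp [RCLike.inner_apply, hu₀, hs₀, hr]
      rw [Finset.sum_congr rfl fun k _ => mul_comm (ustar.ofLp (Sum.inl k)) (a.ofLp (Sum.inl k))]
      ring
    have hrneg : r < 0 := by
      have := hcu
      rw [hinner] at this
      simp [hcstar] at this
      linarith
    have hD : -s₀ - r ≤ 0 := by
      have := hust (Sum.inr 1)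
      rw [hinner] at this
      simpa [hG] using this
    have hs₀pos : 0 < s₀ := by linarith
    have hP : ∀ i, ∑ k, A k i * u₀ k ≤ s₀ := by
      intro i
      have := hust (Sum.inl (Sum.inl i))
      rw [hinner] at this
      simp only [hG, Sum.elim_inl, Sum.elim_inr] at this
      simp at this
      linarith
    have hN : ∀ i, 0 < x i → s₀ ≤ ∑ k, A k i * u₀ k := by
      intro i hi
      have := hust (Sum.inl (Sum.inr i))
      rw [hinner] at this
      simp only [hG, Sum.elim_inl, Sum.elim_inr, if_pos hi] at this
      simp at this
      exact this
    have hC : ∑ k, A k j * u₀ k ≤ s₀ + r := by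
      have := hust (Sum.inr 0)
      rw [hinner] at this
      simp only [hG] at this
      simp at this
      linarith
    refine ⟨fun k => u₀ k / s₀, ?_, ?_, ?_⟩
    · intro i hi
      have hmv : A.transpose.mulVec (fun k => u₀ k / s₀) i
          = (∑ k, A k i * u₀ k) / s₀ := by
        simp only [Matrix.mulVec, dotProduct, Matrix.transpose_apply, Finset.sum_mul,
          div_eq_mul_inv]
        exact Finset.sum_congr rfl fun k _ => by ring
      rw [hmv, div_eq_one_iff_eq (ne_of_gt hs₀pos)]
      exact le_antisymm (hP i) (hN i hi)
    · intro i
      have hmv : A.transpose.mulVec (fun k => u₀ k / s₀) i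
          = (∑ k, A k i * u₀ k) / s₀ := by
        simp only [Matrix.mulVec, dotProduct, Matrix.transpose_apply, Finset.sum_mul,
          div_eq_mul_inv]
        exact Finset.sum_congr rfl fun k _ => by ring
      rw [hmv, div_le_one hs₀pos]
      exact hP i
    · have hmv : A.transpose.mulVec (fun k => u₀ k / s₀) j
          = (∑ k, A k j * u₀ k) / s₀ := by
        simp only [Matrix.mulVec, dotProduct, Matrix.transpose_apply, Finset.sum_mul,
          div_eq_mul_inv]
        exact Finset.sum_congr rfl fun k _ => by ring
      rw [hmv, div_lt_one hs₀pos]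
      linarith

end Dual


theorem stmt_6 {m n : ℕ} (A : Matrix (Fin m) (Fin n) ℝ) (b : Fin m → ℝ)
    (x : Fin n → ℝ) (hAx : A.mulVec x = b) (hx : 0 ≤ x) :
    uniqueLeastL1 A b x ↔
      ((∃ η : Fin n → ℝ, (∃ u : Fin m → ℝ, A.transpose.mulVec u = η) ∧
        (∀ i, 0 < x i → η i = 1) ∧ (∀ i, ¬ 0 < x i → η i < 1)) ∧
       LinearIndependent ℝ (fun j : {i : Fin n // 0 < x i} =>
        fun k : Fin m => A k j.1)) := by
  classical
  constructor
  · rintro ⟨hAx', hx', hmin⟩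
    constructor
    · -- dual certificate η
      by_cases hall : ∀ i, 0 < x i
      · -- all coordinates positive: need Aᵀu = 1 exactly
        have hex : ∃ u : Fin m → ℝ, A.transpose.mulVec u = fun _ => (1:ℝ) := by
          by_contra hno
          push_neg at hno
          set T : (Fin m → ℝ) →ₗ[ℝ] EuclideanSpace ℝ (Fin n) :=
            { toFun := fun u => WithLp.toLp 2 (A.transpose.mulVec u)
              map_add' := fun a c => by simp [Matrix.mulVec_add]
              map_smul' := fun c a => by simp [Matrix.mulVec_smul] } with hT
          set R := LinearMap.range T with hR
          set one : EuclideanSpace ℝ (Fin n) := WithLp.toLp 2 (fun _ => (1:ℝ)) with hone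
          have h1 : one ∉ R := by
            rintro ⟨u, hu⟩
            exact hno u (congrArg WithLp.ofLp hu)
          obtain ⟨p, hp, vperp, hvperp, hdecomp⟩ := R.exists_add_mem_mem_orthogonal one
          have hvne : vperp ≠ 0 := by
            intro h
            rw [h, add_zero] at hdecomp
            exact h1 (hdecomp ▸ hp)
          have hin : ⟪one, vperp⟫_ℝ = ‖vperp‖ ^ 2 := by
            rw [hdecomp, inner_add_left,
              (Submodule.mem_orthogonal R vperp).1 hvperp p hp, zero_add,
              real_inner_self_eq_norm_sq]
          have hsumv : ∑ i, vperp i = ‖vperp‖ ^ 2 := by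
            rw [← hin, PiLp.inner_apply]
            simp [RCLike.inner_apply, hone]
          have hnpos : 0 < ‖vperp‖ ^ 2 := pow_pos (norm_pos_iff.mpr hvne) 2
          have hAv : A.mulVec vperp = 0 := by
            funext k
            show ∑ i, A k i * vperp i = 0
            have hrow : T (Pi.single k 1) ∈ R := ⟨_, rfl⟩
            have h2 := (Submodule.mem_orthogonal R vperp).1 hvperp _ hrow
            have hrowval : ∀ i, (T (Pi.single k 1) : Fin n → ℝ) i = A k i := by
              intro i
              show (A.transpose.mulVec (Pi.single k 1)) i = A k i
              simp [Matrix.mulVec, dotProduct, Pi.single_apply, mul_ite]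
            rw [PiLp.inner_apply] at h2
            simp only [RCLike.inner_apply, conj_trivial] at h2
            rw [← h2]
            exact Finset.sum_congr rfl fun i _ => by rw [hrowval i, mul_comm]
          refine no_descent' A b x hx hmin hAx (fun i => -vperp i) ?_ ?_ ?_ ?_
          · funext k
            have h : ∑ i, A k i * vperp i = (0:ℝ) := congrFun hAv k
            show ∑ i, A k i * (-vperp i) = 0
            simp only [mul_neg, Finset.sum_neg_distrib, h, neg_zero]
          · intro i hi; exact absurd (hall i) hi
          · intro h
            apply hvne
            ext i
            have := congrFun h i
            simpa using this
          · show ∑ i, -vperp i ≤ 0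
            rw [Finset.sum_neg_distrib, hsumv]
            linarith
        obtain ⟨u, hu⟩ := hex
        exact ⟨fun _ => 1, ⟨u, hu⟩, fun i _ => rfl, fun i hi => absurd (hall i) hi⟩
      · -- some coordinate vanishes
        push_neg at hall
        obtain ⟨j₀, hj₀⟩ := hall
        have hj₀' : ¬ 0 < x j₀ := not_lt.2 hj₀
        have hS : Nonempty {j : Fin n // ¬ 0 < x j} := ⟨⟨j₀, hj₀'⟩⟩
        choose U hU1 hU2 hU3 using
          fun j : {j : Fin n // ¬ 0 < x j} => dual_cert' A b x hx hAx hmin j.1 j.2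
        set N : ℕ := Fintype.card {j : Fin n // ¬ 0 < x j} with hN
        have hNpos : 0 < N := Fintype.card_pos
        have hNR : (0:ℝ) < (N:ℝ) := by exact_mod_cast hNpos
        set u : Fin m → ℝ := (N : ℝ)⁻¹ • ∑ j : {j : Fin n // ¬ 0 < x j}, U j with hu
        have hηsum : ∀ i, A.transpose.mulVec u i
            = (N:ℝ)⁻¹ * ∑ j : {j : Fin n // ¬ 0 < x j}, A.transpose.mulVec (U j) i := by
          intro i
          show ∑ k, A.transpose i k * u k = _
          have huk : ∀ k, u k = (N:ℝ)⁻¹ * ∑ j : {j : Fin n // ¬ 0 < x j}, U j k := by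
            intro k
            simp [hu, Finset.sum_apply]
          calc ∑ k, A.transpose i k * u k
              = ∑ k, (N:ℝ)⁻¹ * ∑ j : {j : Fin n // ¬ 0 < x j}, A.transpose i k * U j k := by
                refine Finset.sum_congr rfl fun k _ => ?_
                rw [huk k, Finset.mul_sum, Finset.mul_sum, Finset.mul_sum]
                exact Finset.sum_congr rfl fun j _ => by ring
            _ = (N:ℝ)⁻¹ * ∑ k, ∑ j : {j : Fin n // ¬ 0 < x j}, A.transpose i k * U j k := by
                rw [Finset.mul_sum]
            _ = (N:ℝ)⁻¹ * ∑ j : {j : Fin n // ¬ 0 < x j}, ∑ k, A.transpose i k * U j k := by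
                rw [Finset.sum_comm]
            _ = (N:ℝ)⁻¹ * ∑ j : {j : Fin n // ¬ 0 < x j}, A.transpose.mulVec (U j) i := rfl
        refine ⟨A.transpose.mulVec u, ⟨u, rfl⟩, ?_, ?_⟩
        · intro i hi
          rw [hηsum i]
          have : ∑ j : {j : Fin n // ¬ 0 < x j}, A.transpose.mulVec (U j) i = (N:ℝ) := by
            rw [Finset.sum_congr rfl fun j _ => hU1 j i hi]
            simp [hN]
          rw [this, inv_mul_cancel₀ (ne_of_gt hNR)]
        · intro i hi
          rw [hηsum i]
          have hlt : ∑ j : {j : Fin n // ¬ 0 < x j}, A.transpose.mulVec (U j) i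
              < (N:ℝ) := by
            have h1 : ∑ j : {j : Fin n // ¬ 0 < x j}, A.transpose.mulVec (U j) i
                < ∑ _j : {j : Fin n // ¬ 0 < x j}, (1:ℝ) := by
              refine Finset.sum_lt_sum (fun j _ => hU2 j i) ⟨⟨i, hi⟩, mem_univ _, ?_⟩
              exact hU3 ⟨i, hi⟩
            simpa [hN] using h1
          calc (N:ℝ)⁻¹ * ∑ j : {j : Fin n // ¬ 0 < x j}, A.transpose.mulVec (U j) i
              < (N:ℝ)⁻¹ * (N:ℝ) := by
                exact mul_lt_mul_of_pos_left hlt (inv_pos.2 hNR)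
            _ = 1 := inv_mul_cancel₀ (ne_of_gt hNR)
    · -- linear independence
      by_contra hli
      obtain ⟨g, hg0, l₀, hl₀⟩ := Fintype.not_linearIndependent_iff.1 hli
      set v : Fin n → ℝ := fun i => if h : 0 < x i then g ⟨i, h⟩ else 0 with hv
      have hAv : A.mulVec v = 0 := by
        funext k
        show ∑ i, A k i * v i = 0
        have h1 : ∑ i, A k i * v i = ∑ l : {i : Fin n // 0 < x i}, A k l.1 * v l.1 :=
          sum_subtype_eq' (fun i => 0 < x i) (fun i => A k i * v i)
            (fun i hi => by simp [hv, hi])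
        have h2 := congrFun hg0 k
        rw [Finset.sum_apply] at h2
        simp only [Pi.smul_apply, smul_eq_mul, Pi.zero_apply] at h2
        have h3 : ∑ l : {i : Fin n // 0 < x i}, A k l.1 * v l.1
            = ∑ l : {i : Fin n // 0 < x i}, g l * A k l.1 := by
          refine Finset.sum_congr rfl fun l _ => ?_
          simp [hv, l.2, mul_comm]
        rw [h1, h3]
        exact h2
      have hvJ : ∀ i, ¬ 0 < x i → 0 ≤ v i := fun i hi => by simp [hv, hi]
      have hvne : v ≠ 0 := by
        intro h
        apply hl₀
        have := congrFun h l₀.1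
        simpa [hv, l₀.2] using this
      rcases le_or_gt (∑ i, v i) 0 with hs | hs
      · exact no_descent' A b x hx hmin hAx v hAv hvJ hvne hs
      · refine no_descent' A b x hx hmin hAx (fun i => -v i) ?_ ?_ ?_ ?_
        · funext k
          have h : ∑ i, A k i * v i = (0:ℝ) := congrFun hAv k
          show ∑ i, A k i * (-v i) = 0
          simp only [mul_neg, Finset.sum_neg_distrib, h, neg_zero]
        · intro i hi; simp [hv, hi]
        · intro h
          apply hvne
          funext i
          have := congrFun h i
          simpa using this
        · show ∑ i, -v i ≤ 0
          rw [Finset.sum_neg_distrib]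
          linarith
  · rintro ⟨⟨η, ⟨u, huη⟩, hη1, hη2⟩, hli⟩
    refine ⟨hAx, hx, ?_⟩
    intro w hAw hw0 hwx
    have hηval : ∀ i, η i = ∑ k, A k i * u k := by
      intro i
      rw [← huη]
      show (A.transpose.mulVec u) i = _
      simp [Matrix.mulVec, dotProduct, Matrix.transpose_apply]
    have hkey : ∀ z : Fin n → ℝ, A.mulVec z = b → ∑ i, η i * z i = ∑ k, u k * b k := by
      intro z hz
      calc ∑ i, η i * z i = ∑ i, ∑ k, A k i * u k * z i := by
            refine Finset.sum_congr rfl fun i _ => ?_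
            rw [hηval i, Finset.sum_mul]
        _ = ∑ k, ∑ i, A k i * u k * z i := Finset.sum_comm
        _ = ∑ k, u k * (A.mulVec z) k := by
            refine Finset.sum_congr rfl fun k _ => ?_
            show _ = u k * ∑ i, A k i * z i
            rw [Finset.mul_sum]
            exact Finset.sum_congr rfl fun i _ => by ring
        _ = ∑ k, u k * b k := by rw [hz]
    have hxe : ∀ i, η i * x i = x i := by
      intro i
      by_cases hi : 0 < x i
      · rw [hη1 i hi, one_mul]
      · have : x i = 0 := le_antisymm (not_lt.1 hi) (hx i)
        rw [this, mul_zero]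
    have hwle : ∀ i, η i * w i ≤ w i := by
      intro i
      by_cases hi : 0 < x i
      · rw [hη1 i hi, one_mul]
      · calc η i * w i ≤ 1 * w i :=
              mul_le_mul_of_nonneg_right (hη2 i hi).le (hw0 i)
          _ = w i := one_mul _
    have hsx : ∑ i, |x i| = ∑ i, x i := Finset.sum_congr rfl fun i _ => abs_of_nonneg (hx i)
    have hsw : ∑ i, |w i| = ∑ i, w i := Finset.sum_congr rfl fun i _ => abs_of_nonneg (hw0 i)
    rw [hsx, hsw]
    have hηx : ∑ i, η i * x i = ∑ i, x i := Finset.sum_congr rfl fun i _ => hxe i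
    have hηw : ∑ i, η i * w i = ∑ i, x i := by
      rw [hkey w hAw, ← hkey x hAx, hηx]
    by_contra hcon
    push_neg at hcon
    -- then equality termwise
    have hsum0 : ∑ i, (w i - η i * w i) = 0 := by
      have h1 : ∑ i, (w i - η i * w i) = ∑ i, w i - ∑ i, η i * w i := by
        rw [Finset.sum_sub_distrib]
      have h2 : ∑ i, w i - ∑ i, x i ≤ 0 := by linarith
      have h3 : 0 ≤ ∑ i, (w i - η i * w i) :=
        Finset.sum_nonneg fun i _ => by linarith [hwle i]
      rw [h1, hηw]
      linarith
    have hterm : ∀ i, w i - η i * w i = 0 := by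
      intro i
      have := (Finset.sum_eq_zero_iff_of_nonneg
        (fun i _ => by linarith [hwle i] : ∀ i ∈ univ, (0:ℝ) ≤ w i - η i * w i)).1 hsum0
      exact this i (mem_univ i)
    have hwzero : ∀ i, ¬ 0 < x i → w i = 0 := by
      intro i hi
      have h1 := hterm i
      have h2 : (1 - η i) * w i = 0 := by linear_combination h1
      rcases mul_eq_zero.1 h2 with h | h
      · exfalso; have := hη2 i hi; linarith
      · exact h
    -- now w = x by linear independence
    apply hwx
    have hwd : ∀ l : {i : Fin n // 0 < x i}, w l.1 - x l.1 = 0 := by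
      have hdep : ∑ l : {i : Fin n // 0 < x i},
          (w l.1 - x l.1) • (fun k : Fin m => A k l.1) = 0 := by
        funext k
        rw [Finset.sum_apply]
        simp only [Pi.smul_apply, smul_eq_mul, Pi.zero_apply]
        have h1 : ∑ i, (w i - x i) * A k i
            = ∑ l : {i : Fin n // 0 < x i}, (w l.1 - x l.1) * A k l.1 :=
          sum_subtype_eq' (fun i => 0 < x i) (fun i => (w i - x i) * A k i) (fun i hi => by
            show (w i - x i) * A k i = 0
            have hx0 : x i = 0 := le_antisymm (not_lt.1 hi) (hx i)
            rw [hwzero i hi, hx0]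
            ring)
        rw [← h1]
        have h2 : ∑ i, (w i - x i) * A k i = (A.mulVec w) k - (A.mulVec x) k := by
          show _ = (∑ i, A k i * w i) - ∑ i, A k i * x i
          rw [← Finset.sum_sub_distrib]
          exact Finset.sum_congr rfl fun i _ => by ring
        rw [h2, hAw, hAx, sub_self]
      exact fun l => Fintype.linearIndependent_iff.1 hli _ hdep l
    funext i
    by_cases hi : 0 < x i
    · have := hwd ⟨i, hi⟩; linarith
    · rw [hwzero i hi, le_antisymm (not_lt.1 hi) (hx i)]
end

section
/- Let A be a real m×n matrix and b ∈ ℝ^m. If x is the unique least ℓ1-norm nonnegative solution to the system Ax = b, then x is m-sparse, i.e., ‖x‖₀ = |{i : xᵢ ≠ 0}| ≤ m. -/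
open Matrix

/-- If `x` is the unique least ℓ1-norm nonnegative solution to `A x = b`, then
`x` is `m`-sparse: `‖x‖₀ = |{i : x i ≠ 0}| ≤ m`. -/
theorem stmt_7 {m n : ℕ} (A : Matrix (Fin m) (Fin n) ℝ) (b : Fin m → ℝ)
    (x : Fin n → ℝ) (h : uniqueLeastL1 A b x) :
    {i : Fin n | x i ≠ 0}.ncard ≤ m := by
  obtain ⟨hAx, hx0, hmin⟩ := h
  by_contra hcard
  push_neg at hcard
  set S : Finset (Fin n) := Finset.univ.filter (fun i => x i ≠ 0) with hS
  have hSset : {i : Fin n | x i ≠ 0} = ↑S := by ext i; simp [hS]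
  have hScard : m < S.card := by rwa [hSset, Set.ncard_coe_finset] at hcard
  have hxpos : ∀ i ∈ S, 0 < x i := by
    intro i hi
    have : x i ≠ 0 := by simpa [hS] using hi
    exact lt_of_le_of_ne (hx0 i) (Ne.symm this)
  -- the columns of A indexed by S are linearly dependent
  have hdep : ¬ LinearIndependent ℝ (fun i : S => (fun j => A j i : Fin m → ℝ)) := by
    intro hli
    have hle := hli.fintype_card_le_finrank
    rw [Module.finrank_pi ℝ] at hle
    simp [Fintype.card_coe] at hle
    omega
  rw [Fintype.not_linearIndependent_iff] at hdep
  obtain ⟨g, hg0, i0, hgi0⟩ := hdep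
  set z : Fin n → ℝ := fun i => if h : i ∈ S then g ⟨i, h⟩ else 0 with hz
  have hzS : ∀ i ∉ S, z i = 0 := by intro i hi; simp [hz, hi]
  have hzi0 : z (i0 : Fin n) ≠ 0 := by simpa [hz, i0.2] using hgi0
  have hAz : A.mulVec z = 0 := by
    funext j
    simp only [Pi.zero_apply]
    have hgj := congrFun hg0 j
    simp only [Finset.sum_apply, Pi.smul_apply, smul_eq_mul, Pi.zero_apply] at hgj
    have : A.mulVec z j = ∑ i ∈ S, A j i * z i := by
      rw [show A.mulVec z j = ∑ i, A j i * z i from rfl,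
        ← Finset.sum_subset (Finset.subset_univ S)]
      intro i _ hi; simp [hzS i hi]
    rw [this, ← Finset.sum_attach S (fun i => A j i * z i)]
    rw [← hgj]
    apply Finset.sum_congr rfl
    intro i _
    simp [hz, i.2, mul_comm]
  -- choose the perturbation size
  have hSne : S.Nonempty := ⟨i0, i0.2⟩
  set δ : ℝ := S.inf' hSne x with hδ
  have hδpos : 0 < δ := by
    rw [hδ, Finset.lt_inf'_iff]
    exact hxpos
  have hδle : ∀ i ∈ S, δ ≤ x i := fun i hi => Finset.inf'_le x hi
  set M : ℝ := ∑ i, |z i| with hM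
  have hMle : ∀ i, |z i| ≤ M := by
    intro i
    exact Finset.single_le_sum (fun j _ => abs_nonneg (z j)) (Finset.mem_univ i)
  have hMpos : 0 < M := lt_of_lt_of_le (abs_pos.mpr hzi0) (hMle _)
  set t0 : ℝ := δ / M with ht0
  have ht0pos : 0 < t0 := div_pos hδpos hMpos
  set σ : ℝ := ∑ i, z i with hσ
  set t : ℝ := if σ ≤ 0 then t0 else -t0 with ht
  have htne : t ≠ 0 := by
    rw [ht]; split <;> [exact ne_of_gt ht0pos; exact neg_ne_zero.mpr (ne_of_gt ht0pos)]
  have habs_t : |t| = t0 := by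
    rw [ht]; split <;> simp [abs_of_pos ht0pos]
  have htσ : t * σ ≤ 0 := by
    rw [ht]; split
    · exact mul_nonpos_of_nonneg_of_nonpos (le_of_lt ht0pos) (by assumption)
    · exact mul_nonpos_of_nonpos_of_nonneg (by linarith) (by linarith [not_le.mp (by assumption)])
  -- bound on the perturbation
  have hbound : ∀ i, |t * z i| ≤ δ := by
    intro i
    rw [abs_mul, habs_t, ht0]
    rw [div_mul_eq_mul_div, div_le_iff₀ hMpos]
    have := hMle i
    nlinarith [abs_nonneg (z i)]
  set w : Fin n → ℝ := x + t • z with hw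
  have hw0 : 0 ≤ w := by
    intro i
    by_cases hi : i ∈ S
    · have h1 := hbound i
      have h2 := hδle i hi
      have := neg_abs_le (t * z i)
      simp only [hw, Pi.add_apply, Pi.smul_apply, smul_eq_mul, Pi.zero_apply]
      linarith
    · simpa [hw, hzS i hi] using hx0 i
  have hAw : A.mulVec w = b := by
    rw [hw, Matrix.mulVec_add, Matrix.mulVec_smul, hAz, hAx]
    simp
  have hwne : w ≠ x := by
    intro hwx
    have := congrFun hwx (i0 : Fin n)
    simp only [hw, Pi.add_apply, Pi.smul_apply, smul_eq_mul] at this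
    have : t * z (i0 : Fin n) = 0 := by linarith
    rcases mul_eq_zero.mp this with h' | h'
    · exact htne h'
    · exact hzi0 h'
  have hlt := hmin w hAw hw0 hwne
  have hsum : ∑ i, |w i| ≤ ∑ i, |x i| := by
    have e1 : ∑ i, |w i| = ∑ i, w i :=
      Finset.sum_congr rfl (fun i _ => abs_of_nonneg (hw0 i))
    have e2 : ∑ i, |x i| = ∑ i, x i :=
      Finset.sum_congr rfl (fun i _ => abs_of_nonneg (hx0 i))
    have e3 : ∑ i, w i = (∑ i, x i) + t * σ := by
      simp [hw, Finset.sum_add_distrib, hσ, Finset.mul_sum]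
    rw [e1, e2, e3]
    linarith
  linarith
end

section
/- Let A be a real m×n matrix and b ∈ ℝ^m. If x is a sparsest nonnegative solution to the system Ax = b, then the matrix M obtained by appending the all-ones row e_{J₊}ᵀ below the column submatrix A_{J₊} has full column rank, where J₊ = {i : xᵢ > 0}. -/
open Matrix

theorem stmt_8 {m n : ℕ} (A : Matrix (Fin m) (Fin n) ℝ) (b : Fin m → ℝ)
    (x : Fin n → ℝ) (hAx : A.mulVec x = b) (hx : 0 ≤ x)
    (hsparsest : ∀ w : Fin n → ℝ, A.mulVec w = b → 0 ≤ w →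
      {i : Fin n | x i ≠ 0}.ncard ≤ {i : Fin n | w i ≠ 0}.ncard) :
    LinearIndependent ℝ (fun j : {i : Fin n // 0 < x i} =>
      (Sum.elim (fun k : Fin m => A k j.1) (fun _ : Unit => (1 : ℝ)) :
        Fin m ⊕ Unit → ℝ)) := by
  classical
  rw [Fintype.linearIndependent_iff]
  intro c hc
  by_contra hne
  push_neg at hne
  obtain ⟨j₁, hj₁⟩ := hne
  set z : Fin n → ℝ := fun i => if h : 0 < x i then c ⟨i, h⟩ else 0 with hzdef
  have hzsupp : ∀ i, ¬ 0 < x i → z i = 0 := by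
    intro i hi; simp [hzdef, hi]
  have hzval : ∀ j : {i : Fin n // 0 < x i}, z j.1 = c j := by
    intro j; simp [hzdef, j.2]
  have hsub : ∀ f : Fin n → ℝ, (∀ i, ¬ 0 < x i → f i = 0) →
      ∑ i, f i = ∑ j : {i : Fin n // 0 < x i}, f j.1 := by
    intro f hf
    rw [← Finset.sum_filter_of_ne (p := fun i => 0 < x i)
      (by intro i _ h; by_contra hp; exact h (hf i hp))]
    exact Finset.sum_subtype _ (by simp) f
  -- sum of z is 0
  have hsum : ∑ i, z i = 0 := by
    have h1 := congrFun hc (Sum.inr ())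
    simp only [Finset.sum_apply, Pi.smul_apply, Sum.elim_inr, smul_eq_mul, mul_one,
      Pi.zero_apply] at h1
    rw [hsub z hzsupp]
    simpa [hzval] using h1
  -- A z = 0
  have hAz : A.mulVec z = 0 := by
    funext k
    have h1 := congrFun hc (Sum.inl k)
    simp only [Finset.sum_apply, Pi.smul_apply, Sum.elim_inl, smul_eq_mul,
      Pi.zero_apply] at h1
    simp only [Matrix.mulVec, dotProduct, Pi.zero_apply]
    rw [hsub (fun i => A k i * z i) (by intro i hi; simp [hzsupp i hi])]
    simp only [hzval]
    exact (Finset.sum_congr rfl fun j _ => mul_comm _ _).trans h1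
  -- there is a positive entry of z
  have hz₁ : z j₁.1 ≠ 0 := by rw [hzval]; exact hj₁
  have hpos : ∃ i, 0 < z i := by
    by_contra h
    push_neg at h
    exact hz₁ ((Finset.sum_eq_zero_iff_of_nonpos (by intro i _; exact h i)).mp hsum
      j₁.1 (Finset.mem_univ _))
  set P : Finset (Fin n) := Finset.univ.filter (fun i => 0 < z i) with hP
  have hPne : P.Nonempty := by
    obtain ⟨i, hi⟩ := hpos
    exact ⟨i, by simp [hP, hi]⟩
  obtain ⟨j₀, hj₀P, hj₀min⟩ := Finset.exists_min_image P (fun i => x i / z i) hPne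
  have hzj₀ : 0 < z j₀ := by simpa [hP] using hj₀P
  have hxj₀ : 0 < x j₀ := by
    by_contra h
    rw [hzsupp j₀ h] at hzj₀; exact lt_irrefl 0 hzj₀
  set t : ℝ := x j₀ / z j₀ with ht
  have htpos : 0 < t := div_pos hxj₀ hzj₀
  set w : Fin n → ℝ := fun i => x i - t * z i with hw
  have hw1 : A.mulVec w = b := by
    have : w = x - t • z := by funext i; simp [hw]
    rw [this, Matrix.mulVec_sub, Matrix.mulVec_smul, hAz, hAx]
    simp
  have hw2 : 0 ≤ w := by
    intro i
    simp only [hw, Pi.zero_apply]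
    by_cases hzi : 0 < z i
    · have hiP : i ∈ P := by simp [hP, hzi]
      have := hj₀min i hiP
      have h2 : t * z i ≤ x i := by
        rw [ht]
        calc x j₀ / z j₀ * z i ≤ x i / z i * z i := by
              exact mul_le_mul_of_nonneg_right this (le_of_lt hzi)
          _ = x i := div_mul_cancel₀ _ (ne_of_gt hzi)
      linarith
    · push_neg at hzi
      have : t * z i ≤ 0 := mul_nonpos_of_nonneg_of_nonpos (le_of_lt htpos) hzi
      have hxi : (0:ℝ) ≤ x i := hx i
      linarith
  have hwj₀ : w j₀ = 0 := by
    simp only [hw, ht]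
    rw [div_mul_cancel₀ _ (ne_of_gt hzj₀)]
    ring
  have hssub : {i : Fin n | w i ≠ 0} ⊂ {i : Fin n | x i ≠ 0} := by
    constructor
    · intro i hi
      simp only [Set.mem_setOf_eq] at hi ⊢
      intro hxi
      apply hi
      have hzi : z i = 0 := hzsupp i (by rw [hxi]; exact lt_irrefl 0)
      simp [hw, hxi, hzi]
    · intro hsub2
      exact (hsub2 (by simp only [Set.mem_setOf_eq]; exact ne_of_gt hxj₀) :
        w j₀ ≠ 0) hwj₀
  have hlt := Set.ncard_lt_ncard hssub (Set.toFinite _)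
  have hle := hsparsest w hw1 hw2
  omega
end

section
/- Let A be a real m×n matrix, b ∈ ℝ^m, and let x be a sparsest nonnegative solution to the system Ax = b with J₊ = {i : xᵢ > 0}. Then x is the unique least ℓ1-norm nonnegative solution to Ax = b if and only if there exists η ∈ R(Aᵀ) with ηᵢ = 1 for all i ∈ J₊ and ηᵢ < 1 for all i ∉ J₊. -/
open Finset

variable {E : Type*} [NormedAddCommGroup E] [NormedSpace ℝ E]
  {ι : Type*} [Fintype ι] [DecidableEq ι]

lemma sum_ext_zero (g : ι → E) (c : ι → ℝ) (d : ι → ℝ)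
    (h : ∀ i, c i = 0 → d i = 0) :
    ∑ i, d i • g i = ∑ i : {i // c i ≠ 0}, d i.1 • g i.1 := by
  rw [← Finset.sum_subtype (univ.filter (fun i => c i ≠ 0))
    (by simp) (fun i => d i • g i)]
  symm
  apply Finset.sum_subset (subset_univ _)
  intro i _ hi
  simp only [mem_filter, mem_univ, true_and, not_not] at hi
  rw [h i hi, zero_smul]

lemma cone_caratheodory (g : ι → E) :
    ∀ (N : ℕ) (c : ι → ℝ), (univ.filter (fun i => c i ≠ 0)).card ≤ N → 0 ≤ c →
      ∃ c' : ι → ℝ, 0 ≤ c' ∧ ∑ i, c' i • g i = ∑ i, c i • g i ∧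
        LinearIndependent ℝ (fun i : {i // c' i ≠ 0} => g i) := by
  intro N
  induction N with
  | zero =>
    intro c hcard hc
    refine ⟨c, hc, rfl, ?_⟩
    have hz : ∀ i, c i = 0 := by
      intro i
      by_contra h
      have hmem : i ∈ univ.filter (fun i => c i ≠ 0) := by simp [h]
      have := card_pos.mpr ⟨i, hmem⟩
      omega
    have : IsEmpty {i // c i ≠ 0} := ⟨fun ⟨i, hi⟩ => hi (hz i)⟩
    exact linearIndependent_empty_type
  | succ N ih =>
    intro c hcard hc
    by_cases hli : LinearIndependent ℝ (fun i : {i // c i ≠ 0} => g i)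
    · exact ⟨c, hc, rfl, hli⟩
    obtain ⟨f, hf0, i₀, hi₀⟩ := Fintype.not_linearIndependent_iff.mp hli
    set d : ι → ℝ := fun i => if h : c i ≠ 0 then f ⟨i, h⟩ else 0 with hd
    have hdc : ∀ i, c i = 0 → d i = 0 := by
      intro i hi; simp [hd, hi]
    have hdsum : ∑ i, d i • g i = 0 := by
      rw [sum_ext_zero g c d hdc, ← hf0]
      apply Finset.sum_congr rfl
      intro ⟨i, hi⟩ _
      simp [hd, hi]
    have hdne : d i₀.1 ≠ 0 := by
      simpa [hd, i₀.2] using hi₀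
    -- WLOG some positive entry: choose sign σ so that σ • d has a positive entry
    obtain ⟨e, hesum, hedc, j₀, hj₀⟩ :
        ∃ e : ι → ℝ, ∑ i, e i • g i = 0 ∧ (∀ i, c i = 0 → e i = 0) ∧
          ∃ j, 0 < e j := by
      rcases lt_or_gt_of_ne hdne with hneg | hpos
      · exact ⟨-d, by simpa using hdsum, fun i hi => by simp [hdc i hi],
          i₀.1, by simpa using hneg⟩
      · exact ⟨d, hdsum, hdc, i₀.1, hpos⟩
    -- t = min over positive entries of e of c i / e i
    set T : Finset ι := univ.filter (fun i => 0 < e i) with hT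
    have hTne : T.Nonempty := ⟨j₀, by simp [hT, hj₀]⟩
    set q : ι → ℝ := fun i => c i / e i with hq
    obtain ⟨i₁, hi₁T, hi₁min⟩ := T.exists_min_image q hTne
    set t : ℝ := q i₁ with ht
    have hei₁ : 0 < e i₁ := by simpa [hT] using hi₁T
    have ht0 : 0 ≤ t := div_nonneg (hc i₁) hei₁.le
    set c' : ι → ℝ := fun i => c i - t * e i with hc'
    have hc'0 : 0 ≤ c' := by
      intro i
      simp only [hc', Pi.zero_apply]
      rcases le_or_gt (e i) 0 with he | he
      · have h1 : t * e i ≤ 0 := mul_nonpos_of_nonneg_of_nonpos ht0 he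
        have h2 := hc i
        simp only [Pi.zero_apply] at h2
        linarith
      · have hmin := hi₁min i (by simp [hT, he])
        rw [ht, hq] at hmin
        rw [div_le_div_iff₀ hei₁ he] at hmin
        rw [sub_nonneg, ht, hq, div_mul_eq_mul_div, div_le_iff₀ hei₁]
        linarith
    have hc'sum : ∑ i, c' i • g i = ∑ i, c i • g i := by
      simp only [hc', sub_smul, mul_smul, Finset.sum_sub_distrib]
      rw [← Finset.smul_sum, hesum, smul_zero, sub_zero]
    have hc'supp : ∀ i, c i = 0 → c' i = 0 := by
      intro i hi; simp [hc', hi, hedc i hi]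
    have hc'i₁ : c' i₁ = 0 := by
      simp only [hc', ht, hq]
      field_simp
      ring
    have hci₁ : c i₁ ≠ 0 := by
      intro h
      exact absurd (hedc i₁ h) hei₁.ne'
    have hsubset : univ.filter (fun i => c' i ≠ 0) ⊂ univ.filter (fun i => c i ≠ 0) := by
      constructor
      · intro i hi
        simp only [mem_filter, mem_univ, true_and] at *
        intro h; exact hi (hc'supp i h)
      · intro h
        have := h (by simp [hci₁] : i₁ ∈ univ.filter (fun i => c i ≠ 0))
        simp [hc'i₁] at this
    have hcard' : (univ.filter (fun i => c' i ≠ 0)).card ≤ N := by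
      have := Finset.card_lt_card hsubset
      omega
    obtain ⟨c'', h1, h2, h3⟩ := ih c' hcard' hc'0
    exact ⟨c'', h1, h2.trans hc'sum, h3⟩

lemma indep_cone_closed {E : Type*} [NormedAddCommGroup E] [NormedSpace ℝ E]
    [CompleteSpace E] {ι : Type*} [Fintype ι] (v : ι → E)
    (hli : LinearIndependent ℝ v) :
    IsClosed {x : E | ∃ c : ι → ℝ, 0 ≤ c ∧ x = ∑ i, c i • v i} := by
  set V := Submodule.span ℝ (Set.range v) with hV
  haveI : FiniteDimensional ℝ V := FiniteDimensional.span_of_finite ℝ (Set.finite_range v)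
  set B : Module.Basis ι ℝ V := Module.Basis.span hli with hB
  have hVmem : ∀ (c : ι → ℝ), (∑ i, c i • v i) ∈ V := by
    intro c
    exact Submodule.sum_mem _ fun i _ =>
      Submodule.smul_mem _ _ (Submodule.subset_span ⟨i, rfl⟩)
  have key : {x : E | ∃ c : ι → ℝ, 0 ≤ c ∧ x = ∑ i, c i • v i} =
      Subtype.val '' (⋂ i : ι, (fun y : V => B.repr y i) ⁻¹' Set.Ici 0) := by
    ext x
    constructor
    · rintro ⟨c, hc, rfl⟩
      refine ⟨⟨_, hVmem c⟩, ?_, rfl⟩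
      have hxB : (⟨∑ i, c i • v i, hVmem c⟩ : V) = ∑ i, c i • B i := by
        apply Subtype.ext
        push_cast
        exact Finset.sum_congr rfl fun i _ => by rw [hB, Module.Basis.span_apply]
      simp only [Set.mem_iInter, Set.mem_preimage, Set.mem_Ici]
      intro i
      rw [hxB, Module.Basis.repr_sum_self]
      exact hc i
    · rintro ⟨y, hy, rfl⟩
      simp only [Set.mem_iInter, Set.mem_preimage, Set.mem_Ici] at hy
      refine ⟨fun i => B.repr y i, hy, ?_⟩
      conv_lhs => rw [← B.sum_repr y]
      push_cast
      exact Finset.sum_congr rfl fun i _ => by rw [hB, Module.Basis.span_apply]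
  rw [key]
  have hclosedV : IsClosed (V : Set E) := Submodule.closed_of_finiteDimensional V
  apply hclosedV.isClosedEmbedding_subtypeVal.isClosedMap
  apply isClosed_iInter
  intro i
  have hcont : Continuous (fun y : V => B.repr y i) := by
    exact LinearMap.continuous_of_finiteDimensional
      ((LinearMap.proj i ∘ₗ (Finsupp.lcoeFun.comp (B.repr : V →ₗ[ℝ] (ι →₀ ℝ)))))
  exact isClosed_Ici.preimage hcont

lemma fg_cone_closed {E : Type*} [NormedAddCommGroup E] [NormedSpace ℝ E]
    [CompleteSpace E] {ι : Type*} [Fintype ι] [DecidableEq ι] (g : ι → E) :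
    IsClosed {x : E | ∃ c : ι → ℝ, 0 ≤ c ∧ x = ∑ i, c i • g i} := by
  have key : {x : E | ∃ c : ι → ℝ, 0 ≤ c ∧ x = ∑ i, c i • g i} =
      ⋃ (S : Finset ι) (_h : LinearIndependent ℝ (fun i : S => g i)),
        {x : E | ∃ c : S → ℝ, 0 ≤ c ∧ x = ∑ i, c i • g i} := by
    ext x
    simp only [Set.mem_iUnion, Set.mem_setOf_eq]
    constructor
    · rintro ⟨c, hc, rfl⟩
      obtain ⟨c', hc', hsum, hli⟩ := cone_caratheodory g
        (Finset.univ.filter (fun i => c i ≠ 0)).card c le_rfl hc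
      set S : Finset ι := Finset.univ.filter (fun i => c' i ≠ 0) with hS
      have hmemS : ∀ i, i ∈ S ↔ c' i ≠ 0 := by intro i; simp [hS]
      refine ⟨S, ?_, fun i => c' i.1, fun i => hc' i.1, ?_⟩
      · have h := hli.comp (Equiv.subtypeEquivRight hmemS) (Equiv.injective _)
        have heq : ((fun i : {i // c' i ≠ 0} => g ↑i) ∘ ⇑(Equiv.subtypeEquivRight hmemS))
            = fun i : {i // i ∈ S} => g ↑i := by
          funext j
          rfl
        rwa [heq] at h
      · rw [← hsum]
        rw [Finset.sum_coe_sort S (fun i => c' i • g i)]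
        symm
        apply Finset.sum_subset (Finset.subset_univ _)
        intro i _ hi
        rw [hmemS] at hi
        simp only [not_not] at hi
        rw [hi, zero_smul]
    · rintro ⟨S, hli, c, hc, rfl⟩
      refine ⟨fun i => if h : i ∈ S then c ⟨i, h⟩ else 0, ?_, ?_⟩
      · intro i
        by_cases h : i ∈ S
        · simpa [h] using hc ⟨i, h⟩
        · simp [h]
      · rw [show (∑ i : ι, (if h : i ∈ S then c ⟨i, h⟩ else 0) • g i)
            = ∑ i ∈ S, (if h : i ∈ S then c ⟨i, h⟩ else 0) • g i from
            (Finset.sum_subset (Finset.subset_univ S)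
              (fun i _ hi => by rw [dif_neg hi, zero_smul])).symm,
          ← Finset.sum_coe_sort S (fun i => (if h : i ∈ S then c ⟨i, h⟩ else 0) • g i)]
        exact Finset.sum_congr rfl fun ⟨i, hi⟩ _ => by rw [dif_pos hi]
  rw [key]
  apply isClosed_iUnion_of_finite
  intro S
  apply isClosed_iUnion_of_finite
  intro hli
  exact indep_cone_closed (fun i : S => g i) hli

open scoped InnerProductSpace in
lemma farkas_s9 {E : Type*} [NormedAddCommGroup E] [InnerProductSpace ℝ E]
    [CompleteSpace E] {ι : Type*} [Fintype ι] [DecidableEq ι] (g : ι → E) (b : E)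
    (hb : ¬ ∃ c : ι → ℝ, 0 ≤ c ∧ b = ∑ i, c i • g i) :
    ∃ y : E, (∀ i, 0 ≤ ⟪g i, y⟫_ℝ) ∧ ⟪y, b⟫_ℝ < 0 := by
  set K : ConvexCone ℝ E :=
    { carrier := {x : E | ∃ c : ι → ℝ, 0 ≤ c ∧ x = ∑ i, c i • g i}
      smul_mem' := by
        rintro t ht x ⟨c, hc, rfl⟩
        refine ⟨fun i => t * c i, fun i => mul_nonneg ht.le (hc i), ?_⟩
        rw [Finset.smul_sum]
        exact Finset.sum_congr rfl fun i _ => by rw [smul_smul]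
      add_mem' := by
        rintro x ⟨c, hc, rfl⟩ y ⟨d, hd, rfl⟩
        refine ⟨fun i => c i + d i, fun i => add_nonneg (hc i) (hd i), ?_⟩
        rw [← Finset.sum_add_distrib]
        exact Finset.sum_congr rfl fun i _ => by rw [add_smul] } with hK
  have hne : (K : Set E).Nonempty := ⟨0, ⟨0, le_rfl, by simp⟩⟩
  have hcl : IsClosed (K : Set E) := fg_cone_closed g
  have hpt : K.Pointed := ⟨0, le_rfl, by simp⟩
  obtain ⟨y, hy1, hy2⟩ :=
    ProperCone.hyperplane_separation' (⟨K.toPointedCone hpt, hcl⟩ : ProperCone ℝ E) (x₀ := b) hb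
  refine ⟨y, ?_, by rwa [real_inner_comm] at hy2⟩
  intro i
  apply hy1
  show ∃ c : ι → ℝ, 0 ≤ c ∧ g i = ∑ j, c j • g j
  refine ⟨Pi.single i 1, ?_, ?_⟩
  · intro j
    by_cases h : j = i <;> simp [Pi.single_apply, h]
  · simp [Pi.single_apply]

open scoped InnerProductSpace

section App

variable {m n : ℕ}

/-- coordinate extraction in EuclideanSpace -/
lemma eucl_coord {κ : Type*} [Fintype κ] [DecidableEq κ]
    (v : EuclideanSpace ℝ κ) (r : κ) :
    ⟪v, EuclideanSpace.single r (1:ℝ)⟫_ℝ = v r := by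
  simp [PiLp.inner_apply, EuclideanSpace.single_apply]

lemma sum_smul_coord {κ ι : Type*} [Fintype κ] [DecidableEq κ] [Fintype ι]
    (G : ι → EuclideanSpace ℝ κ) (c : ι → ℝ) (r : κ) :
    ⟪∑ i, c i • G i, EuclideanSpace.single r (1:ℝ)⟫_ℝ = ∑ i, c i * G i r := by
  rw [sum_inner]
  apply Finset.sum_congr rfl
  intro i _
  rw [real_inner_smul_left, eucl_coord]

/-- existence of a positive step size keeping nonnegativity -/
lemma exists_pos_step (x lam : Fin n → ℝ) (hx : 0 ≤ x)
    (h : ∀ i, lam i < 0 → 0 < x i) :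
    ∃ t : ℝ, 0 < t ∧ ∀ i, 0 ≤ x i + t * lam i := by
  classical
  set F : Finset ℝ :=
    insert 1 ((Finset.univ.filter (fun i => lam i < 0)).image
      (fun i => x i / (-lam i))) with hF
  have hFne : F.Nonempty := ⟨1, Finset.mem_insert_self _ _⟩
  have hpos : 0 < F.min' hFne := by
    rw [Finset.lt_min'_iff]
    intro t ht
    rw [hF, Finset.mem_insert] at ht
    rcases ht with rfl | ht
    · norm_num
    · obtain ⟨i, hi, rfl⟩ := Finset.mem_image.mp ht
      simp only [Finset.mem_filter, Finset.mem_univ, true_and] at hi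
      exact div_pos (h i hi) (by linarith)
  refine ⟨F.min' hFne, hpos, ?_⟩
  intro i
  rcases le_or_gt 0 (lam i) with hl | hl
  · have h1 := hx i
    simp only [Pi.zero_apply] at h1
    nlinarith [mul_nonneg hpos.le hl]
  · have hmem : x i / (-lam i) ∈ F := by
      rw [hF, Finset.mem_insert]
      right
      exact Finset.mem_image.mpr ⟨i, by simp [hl], rfl⟩
    have hle := F.min'_le _ hmem
    have h2 : F.min' hFne * (-lam i) ≤ x i :=
      (le_div_iff₀ (by linarith : (0:ℝ) < -lam i)).mp hle
    linarith

open Matrix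

lemma improve (A : Matrix (Fin m) (Fin n) ℝ) (b : Fin m → ℝ) (x : Fin n → ℝ)
    (hu : uniqueLeastL1 A b x) (lam : Fin n → ℝ)
    (hAlam : A.mulVec lam = 0)
    (hlam : ∀ i, lam i < 0 → 0 < x i)
    (hsum : ∑ i, lam i ≤ 0)
    (hne : (∑ i, lam i < 0) ∨ ∃ j, ¬ 0 < x j ∧ 0 < lam j) : False := by
  obtain ⟨hAx, hx, hmin⟩ := hu
  obtain ⟨t, ht, hw0'⟩ := exists_pos_step x lam hx hlam
  set w : Fin n → ℝ := fun i => x i + t * lam i with hw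
  have hw0 : 0 ≤ w := hw0'
  have hweq : w = x + t • lam := by funext i; simp [hw, mul_comm]
  have hAw : A.mulVec w = b := by
    rw [hweq, Matrix.mulVec_add, Matrix.mulVec_smul, hAlam, hAx]
    simp
  have hsumw : ∑ i, w i = ∑ i, x i + t * ∑ i, lam i := by
    simp [hw, Finset.sum_add_distrib, Finset.mul_sum]
  have hwne : w ≠ x := by
    rcases hne with hlt | ⟨j, hj, hlj⟩
    · intro h
      rw [h] at hsumw
      nlinarith
    · intro h
      have hxj : x j = 0 := le_antisymm (not_lt.mp hj) (hx j)
      have : w j = x j := congrFun h j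
      rw [hw] at this
      simp only [hxj] at this
      nlinarith
  have hlt := hmin w hAw hw0 hwne
  rw [Finset.sum_congr rfl (fun i _ => abs_of_nonneg (hx i)),
    Finset.sum_congr rfl (fun i _ => abs_of_nonneg (hw0 i))] at hlt
  rw [hsumw] at hlt
  nlinarith

lemma eta_dot (A : Matrix (Fin m) (Fin n) ℝ) (u : Fin m → ℝ) (w : Fin n → ℝ) :
    ∑ i, (A.transpose.mulVec u) i * w i = ∑ r, u r * A.mulVec w r := by
  simp only [Matrix.mulVec, dotProduct, Matrix.transpose_apply,
    Finset.sum_mul, Finset.mul_sum]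
  rw [Finset.sum_comm]
  exact Finset.sum_congr rfl fun i _ => Finset.sum_congr rfl fun r _ => by ring

def Gvec (A : Matrix (Fin m) (Fin n) ℝ) (i : Fin n) : EuclideanSpace ℝ (Fin m ⊕ Unit) :=
  WithLp.toLp 2 (Sum.elim (fun r => A r i) (fun _ => -1))

def Evec (m : ℕ) : EuclideanSpace ℝ (Fin m ⊕ Unit) :=
  WithLp.toLp 2 (Sum.elim (fun _ => (0:ℝ)) (fun _ => -1))

noncomputable def Gfam (A : Matrix (Fin m) (Fin n) ℝ) (x : Fin n → ℝ) :
    Fin n ⊕ (Fin n ⊕ Unit) → EuclideanSpace ℝ (Fin m ⊕ Unit) :=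
  Sum.elim (fun i => Gvec A i)
    (Sum.elim (fun i => if 0 < x i then -(Gvec A i) else 0) (fun _ => Evec m))

lemma cone_mem_coords (A : Matrix (Fin m) (Fin n) ℝ) (x : Fin n → ℝ)
    (c : Fin n ⊕ (Fin n ⊕ Unit) → ℝ) (p : EuclideanSpace ℝ (Fin m ⊕ Unit))
    (heq : -p = ∑ i, c i • Gfam A x i) :
    (∀ r : Fin m, A.mulVec (fun i => c (Sum.inl i) -
        (if 0 < x i then c (Sum.inr (Sum.inl i)) else 0)) r = -(p (Sum.inl r))) ∧
      (∑ i, (c (Sum.inl i) - (if 0 < x i then c (Sum.inr (Sum.inl i)) else 0)))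
        = p (Sum.inr ()) - c (Sum.inr (Sum.inr ())) := by
  have key : ∀ s : Fin m ⊕ Unit,
      -(p s) = ∑ i, c i * (Gfam A x i) s := by
    intro s
    have hc := congrArg (fun v => ⟪v, EuclideanSpace.single s (1:ℝ)⟫_ℝ) heq
    rw [inner_neg_left, eucl_coord, sum_smul_coord] at hc
    exact hc
  constructor
  · intro r
    have h := key (Sum.inl r)
    rw [Fintype.sum_sum_type, Fintype.sum_sum_type] at h
    simp only [Gfam, Sum.elim_inl, Sum.elim_inr] at h
    have h1 : ∀ i : Fin n, (Gvec A i) (Sum.inl r) = A r i := fun i => rfl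
    have h2 : ∀ i : Fin n,
        ((if 0 < x i then -(Gvec A i) else 0) : EuclideanSpace ℝ (Fin m ⊕ Unit)) (Sum.inl r)
          = -(if 0 < x i then A r i else 0) := by
      intro i
      by_cases hxi : 0 < x i
      · rw [if_pos hxi, if_pos hxi]
        show -((Gvec A i) (Sum.inl r)) = -(A r i)
        rw [h1 i]
      · rw [if_neg hxi, if_neg hxi]
        show (0:ℝ) = -0
        norm_num
    have h3 : (Evec m) (Sum.inl r) = 0 := rfl
    simp only [h1, h2, h3, mul_zero, Finset.sum_const_zero, add_zero, mul_neg] at h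
    simp only [Matrix.mulVec, dotProduct]
    rw [h, ← Finset.sum_add_distrib]
    apply Finset.sum_congr rfl
    intro i _
    by_cases hxi : 0 < x i
    · rw [if_pos hxi, if_pos hxi]; ring
    · rw [if_neg hxi, if_neg hxi]; ring
  · have h := key (Sum.inr ())
    rw [Fintype.sum_sum_type, Fintype.sum_sum_type] at h
    simp only [Gfam, Sum.elim_inl, Sum.elim_inr] at h
    have h1 : ∀ i : Fin n, (Gvec A i) (Sum.inr ()) = -1 := fun i => rfl
    have h2 : ∀ i : Fin n,
        ((if 0 < x i then -(Gvec A i) else 0) : EuclideanSpace ℝ (Fin m ⊕ Unit)) (Sum.inr ())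
          = (if 0 < x i then 1 else 0) := by
      intro i
      by_cases hxi : 0 < x i
      · rw [if_pos hxi, if_pos hxi]
        show -((Gvec A i) (Sum.inr ())) = 1
        rw [h1 i]; norm_num
      · rw [if_neg hxi, if_neg hxi]
        rfl
    have h3 : (Evec m) (Sum.inr ()) = -1 := rfl
    simp only [h1, h2, h3, mul_neg, mul_one, Finset.sum_neg_distrib,
      Fintype.sum_unique] at h
    rw [Finset.sum_sub_distrib]
    have hsplit : ∑ i, (if 0 < x i then c (Sum.inr (Sum.inl i)) else 0)
        = ∑ i, c (Sum.inr (Sum.inl i)) * (if 0 < x i then 1 else 0) := by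
      apply Finset.sum_congr rfl
      intro i _
      by_cases hxi : 0 < x i
      · rw [if_pos hxi, if_pos hxi]; ring
      · rw [if_neg hxi, if_neg hxi]; ring
    rw [hsplit]
    linarith [h]

lemma inner_Gvec (A : Matrix (Fin m) (Fin n) ℝ) (i : Fin n)
    (y : EuclideanSpace ℝ (Fin m ⊕ Unit)) :
    ⟪Gvec A i, y⟫_ℝ = (∑ r, A r i * y (Sum.inl r)) - y (Sum.inr ()) := by
  simp only [PiLp.inner_apply, RCLike.inner_apply, conj_trivial, Fintype.sum_sum_type,
    Fintype.sum_unique]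
  have h1 : ∀ r : Fin m, (Gvec A i) (Sum.inl r) = A r i := fun r => rfl
  have h2 : (Gvec A i) (Sum.inr ()) = -1 := rfl
  simp only [h1, h2]
  rw [show (default : Unit) = () from rfl]
  simp only [mul_comm]
  ring

lemma inner_Evec (y : EuclideanSpace ℝ (Fin m ⊕ Unit)) :
    ⟪Evec m, y⟫_ℝ = -y (Sum.inr ()) := by
  simp only [PiLp.inner_apply, RCLike.inner_apply, conj_trivial, Fintype.sum_sum_type,
    Fintype.sum_unique]
  have h1 : ∀ r : Fin m, (Evec m) (Sum.inl r) = 0 := fun r => rfl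
  have h2 : (Evec m) (Sum.inr ()) = -1 := rfl
  simp only [h1, h2, zero_mul, Finset.sum_const_zero]
  simp

lemma claim_base (A : Matrix (Fin m) (Fin n) ℝ) (b : Fin m → ℝ) (x : Fin n → ℝ)
    (hu : uniqueLeastL1 A b x) :
    ∃ (u : Fin m → ℝ) (t : ℝ), 0 < t ∧ (∀ i, 0 < x i → ∑ r, A r i * u r = t) ∧
      (∀ i, ∑ r, A r i * u r ≤ t) := by
  by_cases hmem : ∃ c : (Fin n ⊕ (Fin n ⊕ Unit)) → ℝ, 0 ≤ c ∧
      (-(Evec m) : EuclideanSpace ℝ (Fin m ⊕ Unit)) = ∑ i, c i • Gfam A x i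
  · exfalso
    obtain ⟨c, hc, heq⟩ := hmem
    obtain ⟨hco1, hco2⟩ := cone_mem_coords A x c (Evec m) heq
    set lam : Fin n → ℝ :=
      fun i => c (Sum.inl i) - (if 0 < x i then c (Sum.inr (Sum.inl i)) else 0) with hlamdef
    have hEinl : ∀ r : Fin m, (Evec m) (Sum.inl r) = 0 := fun r => rfl
    have hEinr : (Evec m) (Sum.inr ()) = -1 := rfl
    have hce : 0 ≤ c (Sum.inr (Sum.inr ())) := hc _
    apply improve A b x hu lam
    · funext r
      rw [hco1 r, hEinl r]
      simp
    · intro i hi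
      by_contra hxi
      rw [hlamdef] at hi
      simp only [if_neg hxi, sub_zero] at hi
      have h1 : (0:ℝ) ≤ c (Sum.inl i) := hc (Sum.inl i)
      linarith
    · rw [hco2, hEinr]; linarith
    · left
      rw [hco2, hEinr]; linarith
  · obtain ⟨y, hy1, hy2⟩ := farkas_s9 (Gfam A x) (-(Evec m)) hmem
    refine ⟨fun r => -y (Sum.inl r), -y (Sum.inr ()), ?_, ?_, ?_⟩
    · rw [inner_neg_right, real_inner_comm, inner_Evec] at hy2
      linarith
    · intro i hxi
      have ha := hy1 (Sum.inl i)
      have hb := hy1 (Sum.inr (Sum.inl i))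
      simp only [Gfam, Sum.elim_inl, Sum.elim_inr, if_pos hxi, inner_neg_left] at ha hb
      rw [inner_Gvec] at ha hb
      simp only [mul_neg, Finset.sum_neg_distrib]
      linarith
    · intro i
      have ha := hy1 (Sum.inl i)
      simp only [Gfam, Sum.elim_inl] at ha
      rw [inner_Gvec] at ha
      simp only [mul_neg, Finset.sum_neg_distrib]
      linarith

lemma claim_off (A : Matrix (Fin m) (Fin n) ℝ) (b : Fin m → ℝ) (x : Fin n → ℝ)
    (hu : uniqueLeastL1 A b x) (j : Fin n) (hj : ¬ 0 < x j) :
    ∃ (u : Fin m → ℝ) (t : ℝ), 0 ≤ t ∧ (∀ i, 0 < x i → ∑ r, A r i * u r = t) ∧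
      (∀ i, ∑ r, A r i * u r ≤ t) ∧ (∑ r, A r j * u r < t) := by
  by_cases hmem : ∃ c : (Fin n ⊕ (Fin n ⊕ Unit)) → ℝ, 0 ≤ c ∧
      (-(Gvec A j) : EuclideanSpace ℝ (Fin m ⊕ Unit)) = ∑ i, c i • Gfam A x i
  · exfalso
    obtain ⟨c, hc, heq⟩ := hmem
    obtain ⟨hco1, hco2⟩ := cone_mem_coords A x c (Gvec A j) heq
    set lam0 : Fin n → ℝ :=
      fun i => c (Sum.inl i) - (if 0 < x i then c (Sum.inr (Sum.inl i)) else 0) with hlam0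
    set lam : Fin n → ℝ := fun i => lam0 i + (if i = j then 1 else 0) with hlamdef
    have hGinl : ∀ r : Fin m, (Gvec A j) (Sum.inl r) = A r j := fun r => rfl
    have hGinr : (Gvec A j) (Sum.inr ()) = -1 := rfl
    have hce : 0 ≤ c (Sum.inr (Sum.inr ())) := hc _
    apply improve A b x hu lam
    · have hsplit : lam = lam0 + (fun i => if i = j then 1 else 0) := rfl
      funext r
      rw [hsplit, Matrix.mulVec_add, Pi.add_apply, hco1 r, hGinl r]
      have : A.mulVec (fun i => if i = j then (1:ℝ) else 0) r = A r j := by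
        simp only [Matrix.mulVec, dotProduct, mul_ite, mul_one, mul_zero]
        rw [Finset.sum_ite_eq' Finset.univ j (fun i => A r i)]
        simp
      rw [this]
      simp
    · intro i hi
      by_contra hxi
      rw [hlamdef, hlam0] at hi
      simp only [if_neg hxi] at hi
      have h1 : (0:ℝ) ≤ c (Sum.inl i) := hc (Sum.inl i)
      by_cases hij : i = j
      · simp only [if_pos hij] at hi; linarith [h1]
      · simp only [if_neg hij] at hi; linarith [h1]
    · rw [hlamdef]
      rw [Finset.sum_add_distrib, hco2, hGinr]
      rw [Finset.sum_ite_eq' Finset.univ j (fun _ => (1:ℝ))]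
      simp only [Finset.mem_univ, if_pos]
      linarith
    · right
      refine ⟨j, hj, ?_⟩
      have h2 : lam j = c (Sum.inl j) + 1 := by
        rw [hlamdef, hlam0]
        simp [hj]
      have h1 : (0:ℝ) ≤ c (Sum.inl j) := hc (Sum.inl j)
      rw [h2]
      linarith
  · obtain ⟨y, hy1, hy2⟩ := farkas_s9 (Gfam A x) (-(Gvec A j)) hmem
    refine ⟨fun r => -y (Sum.inl r), -y (Sum.inr ()), ?_, ?_, ?_, ?_⟩
    · have ha := hy1 (Sum.inr (Sum.inr ()))
      simp only [Gfam, Sum.elim_inr] at ha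
      rw [inner_Evec] at ha
      linarith
    · intro i hxi
      have ha := hy1 (Sum.inl i)
      have hb := hy1 (Sum.inr (Sum.inl i))
      simp only [Gfam, Sum.elim_inl, Sum.elim_inr, if_pos hxi, inner_neg_left] at ha hb
      rw [inner_Gvec] at ha hb
      simp only [mul_neg, Finset.sum_neg_distrib]
      linarith
    · intro i
      have ha := hy1 (Sum.inl i)
      simp only [Gfam, Sum.elim_inl] at ha
      rw [inner_Gvec] at ha
      simp only [mul_neg, Finset.sum_neg_distrib]
      linarith
    · rw [inner_neg_right, real_inner_comm, inner_Gvec] at hy2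
      simp only [mul_neg, Finset.sum_neg_distrib]
      linarith

lemma forward_dir (A : Matrix (Fin m) (Fin n) ℝ) (b : Fin m → ℝ) (x : Fin n → ℝ)
    (hu : uniqueLeastL1 A b x) :
    ∃ η : Fin n → ℝ, (∃ u : Fin m → ℝ, A.transpose.mulVec u = η) ∧
      (∀ i, 0 < x i → η i = 1) ∧ (∀ i, ¬ 0 < x i → η i < 1) := by
  obtain ⟨u0, t0, ht0, he0, hle0⟩ := claim_base A b x hu
  have H : ∀ j : Fin n, ∃ (u : Fin m → ℝ) (t : ℝ), 0 ≤ t ∧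
      (∀ i, 0 < x i → ∑ r, A r i * u r = t) ∧ (∀ i, ∑ r, A r i * u r ≤ t) ∧
      (¬ 0 < x j → ∑ r, A r j * u r < t) := by
    intro j
    by_cases hj : 0 < x j
    · exact ⟨u0, t0, ht0.le, he0, hle0, fun h => absurd hj h⟩
    · obtain ⟨u, t, h1, h2, h3, h4⟩ := claim_off A b x hu j hj
      exact ⟨u, t, h1, h2, h3, fun _ => h4⟩
  choose uf tf htf hef hlef hstf using H
  set U : Fin m → ℝ := fun r => u0 r + ∑ j, uf j r with hU
  set T : ℝ := t0 + ∑ j, tf j with hT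
  have hsumtf : 0 ≤ ∑ j, tf j := Finset.sum_nonneg fun j _ => htf j
  have hTpos : 0 < T := by rw [hT]; linarith
  have hdot : ∀ i, ∑ r, A r i * U r
      = (∑ r, A r i * u0 r) + ∑ j, ∑ r, A r i * uf j r := by
    intro i
    rw [hU]
    simp only [mul_add, Finset.sum_add_distrib, Finset.mul_sum]
    rw [Finset.sum_comm]
  refine ⟨fun i => (∑ r, A r i * U r) / T, ⟨T⁻¹ • U, ?_⟩, ?_, ?_⟩
  · funext i
    simp only [Matrix.mulVec, dotProduct, Matrix.transpose_apply, Pi.smul_apply,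
      smul_eq_mul]
    rw [Finset.sum_div]
    apply Finset.sum_congr rfl
    intro r _
    rw [div_eq_mul_inv]
    ring
  · intro i hxi
    have hsum2 : ∑ j, ∑ r, A r i * uf j r = ∑ j, tf j :=
      Finset.sum_congr rfl fun j _ => hef j i hxi
    simp only
    rw [hdot i, he0 i hxi, hsum2, ← hT, div_self hTpos.ne']
  · intro i hxi
    simp only
    rw [div_lt_one hTpos, hdot i]
    have h2 : ∑ j, ∑ r, A r i * uf j r < ∑ j, tf j :=
      Finset.sum_lt_sum (fun j _ => hlef j i) ⟨i, Finset.mem_univ i, hstf i hxi⟩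
    have h3 := hle0 i
    rw [hT]
    linarith

lemma backward_dir (A : Matrix (Fin m) (Fin n) ℝ) (b : Fin m → ℝ) (x : Fin n → ℝ)
    (hAx : A.mulVec x = b) (hx : 0 ≤ x)
    (hsparsest : ∀ w : Fin n → ℝ, A.mulVec w = b → 0 ≤ w →
      {i : Fin n | x i ≠ 0}.ncard ≤ {i : Fin n | w i ≠ 0}.ncard)
    (η : Fin n → ℝ) (u : Fin m → ℝ) (hη : A.transpose.mulVec u = η)
    (h1 : ∀ i, 0 < x i → η i = 1) (h2 : ∀ i, ¬ 0 < x i → η i < 1) :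
    uniqueLeastL1 A b x := by
  classical
  refine ⟨hAx, hx, ?_⟩
  intro w hAw hw0 hwne
  have hid : ∀ v : Fin n → ℝ, A.mulVec v = b → ∑ i, η i * v i = ∑ r, u r * b r := by
    intro v hv
    rw [← hη, eta_dot A u v, hv]
  have hxabs : ∑ i, |x i| = ∑ i, x i :=
    Finset.sum_congr rfl fun i _ => abs_of_nonneg (hx i)
  have hwabs : ∑ i, |w i| = ∑ i, w i :=
    Finset.sum_congr rfl fun i _ => abs_of_nonneg (hw0 i)
  rw [hxabs, hwabs]
  have hx_eq : ∑ i, η i * x i = ∑ i, x i := by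
    apply Finset.sum_congr rfl
    intro i _
    by_cases hxi : 0 < x i
    · rw [h1 i hxi, one_mul]
    · have hz : x i = 0 := le_antisymm (not_lt.mp hxi) (hx i)
      rw [hz, mul_zero]
  have hkey : ∑ i, η i * w i = ∑ i, x i := by
    rw [hid w hAw, ← hid x hAx, hx_eq]
  have hle : ∀ i, η i * w i ≤ w i := by
    intro i
    by_cases hxi : 0 < x i
    · rw [h1 i hxi, one_mul]
    · have hwi : (0:ℝ) ≤ w i := hw0 i
      nlinarith [h2 i hxi]
  by_cases hcase : ∀ k, ¬ 0 < x k → w k = 0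
  · by_contra hcon
    push_neg at hcon
    have hge : ∑ i, x i ≤ ∑ i, w i := by
      rw [← hkey]
      exact Finset.sum_le_sum fun i _ => hle i
    have hsumeq : ∑ i, w i = ∑ i, x i := le_antisymm hcon hge
    set d : Fin n → ℝ := fun i => w i - x i with hd
    have hdeq : d = w - x := rfl
    have hAd : A.mulVec d = 0 := by
      rw [hdeq, Matrix.mulVec_sub, hAw, hAx, sub_self]
    have hdsupp : ∀ i, ¬ 0 < x i → d i = 0 := by
      intro i hi
      have hwi : w i = 0 := hcase i hi
      have hxi : x i = 0 := le_antisymm (not_lt.mp hi) (hx i)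
      simp [hd, hwi, hxi]
    have hdsum : ∑ i, d i = 0 := by
      simp only [hd, Finset.sum_sub_distrib, hsumeq, sub_self]
    have hneg : ∃ i, d i < 0 := by
      by_contra hno
      push_neg at hno
      have hall : ∀ i ∈ Finset.univ, d i = 0 :=
        (Finset.sum_eq_zero_iff_of_nonneg (fun i _ => hno i)).mp hdsum
      apply hwne
      funext i
      have := hall i (Finset.mem_univ i)
      simp only [hd] at this
      linarith
    obtain ⟨i0, hi0⟩ := hneg
    set Tset := Finset.univ.filter (fun i => d i < 0) with hTset
    have hTne : Tset.Nonempty := ⟨i0, by simp [hTset, hi0]⟩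
    obtain ⟨istar, histarT, hmin⟩ := Tset.exists_min_image (fun i => x i / (-d i)) hTne
    have hdstar : d istar < 0 := by
      simpa [hTset] using histarT
    set tstar := x istar / (-d istar) with htstar
    have hxstar : 0 < x istar := by
      by_contra h
      exact absurd (hdsupp istar h) hdstar.ne
    have htpos : 0 < tstar := div_pos hxstar (by linarith)
    set x' : Fin n → ℝ := fun i => x i + tstar * d i with hx'
    have hAx' : A.mulVec x' = b := by
      have hx'eq : x' = x + tstar • d := by
        funext i; simp [hx', mul_comm]
      rw [hx'eq, Matrix.mulVec_add, Matrix.mulVec_smul, hAd, hAx]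
      simp
    have hx'0 : 0 ≤ x' := by
      intro i
      show (0:ℝ) ≤ x i + tstar * d i
      rcases le_or_gt 0 (d i) with hdi | hdi
      · have hxi : (0:ℝ) ≤ x i := hx i
        nlinarith [mul_nonneg htpos.le hdi]
      · have hmem : i ∈ Tset := by simp [hTset, hdi]
        have hle' := hmin i hmem
        have h2' : tstar * (-d i) ≤ x i :=
          (le_div_iff₀ (by linarith : (0:ℝ) < -d i)).mp hle'
        linarith
    have hzero_star : x' istar = 0 := by
      have hne0 : d istar ≠ 0 := hdstar.ne
      have hmul : tstar * d istar = -x istar := by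
        rw [htstar, div_mul_eq_mul_div, div_neg, mul_div_cancel_right₀ _ hne0]
      show x istar + tstar * d istar = 0
      rw [hmul]; ring
    have hsupp' : ∀ i, x i = 0 → x' i = 0 := by
      intro i hxi
      have hdi : d i = 0 := hdsupp i (by rw [hxi]; exact lt_irrefl 0)
      show x i + tstar * d i = 0
      rw [hxi, hdi]; ring
    have hssub : {i : Fin n | x' i ≠ 0} ⊂ {i : Fin n | x i ≠ 0} := by
      constructor
      · intro i hi
        simp only [Set.mem_setOf_eq] at *
        intro h
        exact hi (hsupp' i h)
      · intro hcontra
        have h1' : istar ∈ {i : Fin n | x i ≠ 0} := hxstar.ne'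
        have h2' := hcontra h1'
        exact h2' hzero_star
    have hcard := Set.ncard_lt_ncard hssub (Set.toFinite _)
    have := hsparsest x' hAx' hx'0
    omega
  · push_neg at hcase
    obtain ⟨k, hk, hwk⟩ := hcase
    have hwkpos : 0 < w k := lt_of_le_of_ne (hw0 k) (Ne.symm hwk)
    have hstrict : η k * w k < w k := by nlinarith [h2 k (not_lt.mpr hk)]
    have hlt : ∑ i, η i * w i < ∑ i, w i :=
      Finset.sum_lt_sum (fun i _ => hle i) ⟨k, Finset.mem_univ k, hstrict⟩
    calc ∑ i, x i = ∑ i, η i * w i := hkey.symm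
    _ < ∑ i, w i := hlt

end App

theorem stmt_9 {m n : ℕ} (A : Matrix (Fin m) (Fin n) ℝ) (b : Fin m → ℝ)
    (x : Fin n → ℝ) (hAx : A.mulVec x = b) (hx : 0 ≤ x)
    (hsparsest : ∀ w : Fin n → ℝ, A.mulVec w = b → 0 ≤ w →
      {i : Fin n | x i ≠ 0}.ncard ≤ {i : Fin n | w i ≠ 0}.ncard) :
    uniqueLeastL1 A b x ↔
      ∃ η : Fin n → ℝ, (∃ u : Fin m → ℝ, A.transpose.mulVec u = η) ∧
        (∀ i, 0 < x i → η i = 1) ∧ (∀ i, ¬ 0 < x i → η i < 1) := by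
  constructor
  · intro hu
    exact forward_dir A b x hu
  · rintro ⟨η, ⟨u, hη⟩, h1, h2⟩
    exact backward_dir A b x hAx hx hsparsest η u hη h1 h2
end

section
/- Let A be a real m×n matrix and b ∈ ℝ^m. There exists at most one sparsest nonnegative solution x to the system Ax = b at which the RSP of Aᵀ holds, i.e., if x and x' are both sparsest nonnegative solutions and the RSP of Aᵀ holds at both x and x', then x = x'. -/
open Matrix

/-- `x` is a sparsest nonnegative solution to `A x = b`. -/
def sparsestNonnegSol {m n : ℕ} (A : Matrix (Fin m) (Fin n) ℝ) (b : Fin m → ℝ)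
    (x : Fin n → ℝ) : Prop :=
  A.mulVec x = b ∧ 0 ≤ x ∧
    ∀ w : Fin n → ℝ, A.mulVec w = b → 0 ≤ w →
      {i : Fin n | x i ≠ 0}.ncard ≤ {i : Fin n | w i ≠ 0}.ncard

/-- The RSP of `Aᵀ` holds at `x`. -/
def RSPat {m n : ℕ} (A : Matrix (Fin m) (Fin n) ℝ) (x : Fin n → ℝ) : Prop :=
  ∃ η : Fin n → ℝ, (∃ u : Fin m → ℝ, A.transpose.mulVec u = η) ∧
    (∀ i, 0 < x i → η i = 1) ∧ (∀ i, x i = 0 → η i < 1)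

/-- If RSP holds at a nonneg solution `x` and `x'` is another nonneg solution,
then `∑ x ≤ ∑ x'`. -/
lemma aux_sum_le {m n : ℕ} (A : Matrix (Fin m) (Fin n) ℝ) (b : Fin m → ℝ)
    (x x' : Fin n → ℝ) (hxb : A.mulVec x = b) (hxpos : 0 ≤ x)
    (hx'b : A.mulVec x' = b) (hx'pos : 0 ≤ x')
    (hrsp : RSPat A x) : ∑ i, x i ≤ ∑ i, x' i := by
  obtain ⟨η, ⟨u, hu⟩, h1, h2⟩ := hrsp
  have hdx : η ⬝ᵥ x = u ⬝ᵥ b := by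
    rw [← hu, Matrix.mulVec_transpose, ← Matrix.dotProduct_mulVec, hxb]
  have hdx' : η ⬝ᵥ x' = u ⬝ᵥ b := by
    rw [← hu, Matrix.mulVec_transpose, ← Matrix.dotProduct_mulVec, hx'b]
  have hηx : η ⬝ᵥ x = ∑ i, x i := by
    unfold dotProduct
    refine Finset.sum_congr rfl fun i _ => ?_
    rcases (hxpos i).lt_or_eq with h | h
    · rw [h1 i h, one_mul]
    · simp [← h]
  have hle : η ⬝ᵥ x' ≤ ∑ i, x' i := by
    unfold dotProduct
    refine Finset.sum_le_sum fun i _ => ?_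
    have hη1 : η i ≤ 1 := by
      rcases (hxpos i).lt_or_eq with h | h
      · exact (h1 i h).le
      · exact (h2 i h.symm).le
    calc η i * x' i ≤ 1 * x' i := mul_le_mul_of_nonneg_right hη1 (hx'pos i)
      _ = x' i := one_mul _
  calc ∑ i, x i = η ⬝ᵥ x := hηx.symm
    _ = η ⬝ᵥ x' := by rw [hdx, hdx']
    _ ≤ ∑ i, x' i := hle

/-- If RSP holds at `x`, `x'` is a nonneg solution with `∑ x' ≤ ∑ x`,
then supp x' ⊆ supp x. -/
lemma aux_supp_subset {m n : ℕ} (A : Matrix (Fin m) (Fin n) ℝ) (b : Fin m → ℝ)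
    (x x' : Fin n → ℝ) (hxb : A.mulVec x = b) (hxpos : 0 ≤ x)
    (hx'b : A.mulVec x' = b) (hx'pos : 0 ≤ x')
    (hrsp : RSPat A x) (hsum : ∑ i, x' i ≤ ∑ i, x i) :
    {i : Fin n | x' i ≠ 0} ⊆ {i : Fin n | x i ≠ 0} := by
  obtain ⟨η, ⟨u, hu⟩, h1, h2⟩ := hrsp
  have hdx : η ⬝ᵥ x = u ⬝ᵥ b := by
    rw [← hu, Matrix.mulVec_transpose, ← Matrix.dotProduct_mulVec, hxb]
  have hdx' : η ⬝ᵥ x' = u ⬝ᵥ b := by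
    rw [← hu, Matrix.mulVec_transpose, ← Matrix.dotProduct_mulVec, hx'b]
  have hηx : η ⬝ᵥ x = ∑ i, x i := by
    unfold dotProduct
    refine Finset.sum_congr rfl fun i _ => ?_
    rcases (hxpos i).lt_or_eq with h | h
    · rw [h1 i h, one_mul]
    · simp [← h]
  -- ∑ (1 - η i) * x' i = ∑ x' - η⬝x' ≤ 0 but each term ≥ 0
  have hkey : ∑ i, (1 - η i) * x' i = 0 := by
    have hnn : ∀ i ∈ Finset.univ, 0 ≤ (1 - η i) * x' i := by
      intro i _
      have hη1 : η i ≤ 1 := by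
        rcases (hxpos i).lt_or_eq with h | h
        · exact (h1 i h).le
        · exact (h2 i h.symm).le
      exact mul_nonneg (by linarith) (hx'pos i)
    have hsum0 : ∑ i, (1 - η i) * x' i ≤ 0 := by
      have : ∑ i, (1 - η i) * x' i = (∑ i, x' i) - η ⬝ᵥ x' := by
        unfold dotProduct
        rw [← Finset.sum_sub_distrib]
        exact Finset.sum_congr rfl fun i _ => by ring
      rw [this, hdx', ← hdx, hηx]
      linarith
    exact le_antisymm hsum0 (Finset.sum_nonneg hnn)
  intro i hi
  simp only [Set.mem_setOf_eq] at hi ⊢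
  have := (Finset.sum_eq_zero_iff_of_nonneg (fun i _ => by
    have hη1 : η i ≤ 1 := by
      rcases (hxpos i).lt_or_eq with h | h
      · exact (h1 i h).le
      · exact (h2 i h.symm).le
    exact mul_nonneg (by linarith) (hx'pos i))).mp hkey i (Finset.mem_univ i)
  intro hxi
  have hηlt := h2 i hxi
  have : x' i = 0 := by
    rcases mul_eq_zero.mp this with h | h
    · linarith
    · exact h
  exact hi this

theorem stmt_10 {m n : ℕ} (A : Matrix (Fin m) (Fin n) ℝ) (b : Fin m → ℝ)
    (x x' : Fin n → ℝ)
    (hx : sparsestNonnegSol A b x) (hx' : sparsestNonnegSol A b x')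
    (hrsp : RSPat A x) (hrsp' : RSPat A x') :
    x = x' := by
  obtain ⟨hxb, hxpos, hxmin⟩ := hx
  obtain ⟨hx'b, hx'pos, hx'min⟩ := hx'
  have hs1 : ∑ i, x i ≤ ∑ i, x' i := aux_sum_le A b x x' hxb hxpos hx'b hx'pos hrsp
  have hs2 : ∑ i, x' i ≤ ∑ i, x i := aux_sum_le A b x' x hx'b hx'pos hxb hxpos hrsp'
  have hsub1 : {i : Fin n | x' i ≠ 0} ⊆ {i : Fin n | x i ≠ 0} :=
    aux_supp_subset A b x x' hxb hxpos hx'b hx'pos hrsp hs2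
  have hsub2 : {i : Fin n | x i ≠ 0} ⊆ {i : Fin n | x' i ≠ 0} :=
    aux_supp_subset A b x' x hx'b hx'pos hxb hxpos hrsp' hs1
  -- supports equal; now suppose x ≠ x' and derive contradiction by perturbation
  by_contra hne
  set d : Fin n → ℝ := fun i => x' i - x i with hd
  have hdne : ∃ i, d i ≠ 0 := by
    by_contra h
    push_neg at h
    exact hne (funext fun i => by have := h i; simp [hd] at this; linarith)
  -- choose i₀ minimizing x i / |d i| over T = {i | d i ≠ 0}
  set T : Finset (Fin n) := Finset.univ.filter (fun i => d i ≠ 0) with hT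
  have hTne : T.Nonempty := by
    obtain ⟨i, hi⟩ := hdne
    exact ⟨i, by simp [hT, hi]⟩
  obtain ⟨i₀, hi₀T, hi₀min⟩ := T.exists_min_image (fun i => x i / |d i|) hTne
  have hdi₀ : d i₀ ≠ 0 := by simpa [hT] using hi₀T
  -- every i with d i ≠ 0 has x i > 0
  have hTpos : ∀ i, d i ≠ 0 → 0 < x i := by
    intro i hi
    rcases (hxpos i).lt_or_eq with h | h
    · exact h
    · exfalso
      have hxi : x i = 0 := h.symm
      have : x' i = 0 := by
        by_contra h'
        exact (hsub1 h') hxi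
      simp [hd, hxi, this] at hi
  set c : ℝ := -(x i₀ / d i₀) with hc
  set y : Fin n → ℝ := fun i => x i + c * d i with hy
  have hcabs : |c| = x i₀ / |d i₀| := by
    rw [hc, abs_neg, abs_div, abs_of_nonneg (hxpos i₀)]
  have hybound : ∀ i, d i ≠ 0 → |c * d i| ≤ x i := by
    intro i hi
    rw [abs_mul, hcabs]
    have hmin := hi₀min i (by simp [hT, hi])
    have hdipos : 0 < |d i| := abs_pos.mpr hi
    calc x i₀ / |d i₀| * |d i| ≤ x i / |d i| * |d i| := by
          exact mul_le_mul_of_nonneg_right hmin hdipos.le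
      _ = x i := div_mul_cancel₀ _ hdipos.ne'
  have hypos : 0 ≤ y := by
    intro i
    by_cases hi : d i = 0
    · show (0:ℝ) ≤ x i + c * d i
      simp [hi]; exact hxpos i
    · have h1 := hybound i hi
      have h2 : -(x i) ≤ c * d i := by
        have := neg_abs_le (c * d i); linarith
      show (0:ℝ) ≤ x i + c * d i
      linarith
  have hyi₀ : y i₀ = 0 := by
    simp only [hy, hc]
    field_simp
    ring
  have hyb : A.mulVec y = b := by
    have hdsol : A.mulVec d = 0 := by
      have : d = x' - x := by funext i; simp [hd]
      rw [this, Matrix.mulVec_sub, hxb, hx'b, sub_self]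
    have : y = x + c • d := by funext i; simp [hy]
    rw [this, Matrix.mulVec_add, Matrix.mulVec_smul, hdsol, smul_zero, add_zero, hxb]
  -- support of y ⊆ supp x \ {i₀}
  have hsupp : {i : Fin n | y i ≠ 0} ⊆ {i : Fin n | x i ≠ 0} \ {i₀} := by
    intro i hi
    simp only [Set.mem_setOf_eq] at hi
    constructor
    · simp only [Set.mem_setOf_eq]
      intro hxi
      apply hi
      by_cases hdi : d i = 0
      · simp [hy, hdi, hxi]
      · exact absurd hxi (hTpos i hdi).ne'
    · simp only [Set.mem_singleton_iff]
      intro h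
      exact hi (h ▸ hyi₀)
  have hi₀S : i₀ ∈ {i : Fin n | x i ≠ 0} := (hTpos i₀ hdi₀).ne'
  have hlt : {i : Fin n | y i ≠ 0}.ncard < {i : Fin n | x i ≠ 0}.ncard := by
    calc {i : Fin n | y i ≠ 0}.ncard ≤ ({i : Fin n | x i ≠ 0} \ {i₀}).ncard :=
          Set.ncard_le_ncard hsupp (Set.toFinite _)
      _ < {i : Fin n | x i ≠ 0}.ncard := by
          apply Set.ncard_lt_ncard _ (Set.toFinite _)
          exact Set.sdiff_singleton_ssubset.mpr hi₀S
  exact absurd (hxmin y hyb hypos) (not_le.mpr hlt)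
end

section
/- Let A be a real m×n matrix, b ∈ ℝ^m, and let W = diag(w) where w ∈ ℝ^n with w > 0 componentwise. Let x be a nonnegative solution to Ax = b with J₊ = {i : xᵢ > 0}. Then x is the unique minimizer of ‖Wz‖₁ over {z : Az = b, z ≥ 0} if and only if (i) the column submatrix A_{J₊} has full column rank, and (ii) there exists η ∈ R(Aᵀ) such that ηᵢ = wᵢ for all i with xᵢ > 0 and ηᵢ < wᵢ for all i with xᵢ = 0. -/
open Matrix Finset

lemma mem_range_of_forall_dot {k l : ℕ} (g : (Fin k → ℝ) →ₗ[ℝ] (Fin l → ℝ)) (y : Fin l → ℝ)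
    (h : ∀ c : Fin l → ℝ, (∀ t, ∑ j, c j * g t j = 0) → ∑ j, c j * y j = 0) :
    ∃ t, g t = y := by
  classical
  set e : (Fin l → ℝ) ≃ₗ[ℝ] EuclideanSpace ℝ (Fin l) :=
    (WithLp.linearEquiv 2 ℝ (Fin l → ℝ)).symm with he
  set R : Submodule ℝ (EuclideanSpace ℝ (Fin l)) :=
    (LinearMap.range g).map (e : (Fin l → ℝ) →ₗ[ℝ] EuclideanSpace ℝ (Fin l)) with hR
  have hinner : ∀ a b : EuclideanSpace ℝ (Fin l), (inner ℝ a b : ℝ) = ∑ j, a j * b j := by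
    intro a b
    simp [PiLp.inner_apply, RCLike.inner_apply, mul_comm]
  have hy : e y ∈ Rᗮᗮ := by
    rw [Submodule.mem_orthogonal]
    intro c hc
    rw [Submodule.mem_orthogonal] at hc
    have hct : ∀ t, ∑ j, c j * g t j = 0 := by
      intro t
      have := hc (e (g t)) ⟨g t, ⟨t, rfl⟩, rfl⟩
      rw [hinner] at this
      simpa [he, WithLp.linearEquiv_symm_apply, mul_comm] using this
    have := h c hct
    rw [hinner]
    simpa [he, WithLp.linearEquiv_symm_apply, mul_comm] using this
  rw [Submodule.orthogonal_orthogonal] at hy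
  obtain ⟨z, ⟨t, rfl⟩, ht⟩ := hy
  exact ⟨t, e.injective ht⟩

lemma dot_swap {m n : ℕ} (A : Matrix (Fin m) (Fin n) ℝ) (c : Fin n → ℝ) (u : Fin m → ℝ) :
    ∑ i, c i * A.transpose.mulVec u i = ∑ k, u k * A.mulVec c k := by
  simp only [Matrix.mulVec, dotProduct, Matrix.transpose_apply, Finset.mul_sum]
  rw [Finset.sum_comm]
  exact Finset.sum_congr rfl fun k _ => Finset.sum_congr rfl fun i _ => by ring

lemma exists_eps {n : ℕ} (x v : Fin n → ℝ) (hx : 0 ≤ x) (hv : ∀ i, x i = 0 → 0 ≤ v i) :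
    ∃ ε : ℝ, 0 < ε ∧ ∀ i, 0 ≤ x i + ε * v i := by
  classical
  set F := Finset.univ.filter (fun i => v i < 0) with hF
  by_cases hne : F.Nonempty
  · have hεpos : 0 < F.inf' hne (fun i => x i / (-v i)) := by
      rw [Finset.lt_inf'_iff]
      intro i hi
      have hvi : v i < 0 := (Finset.mem_filter.1 hi).2
      have hxi : 0 < x i := by
        rcases lt_or_eq_of_le (hx i : (0:ℝ) ≤ x i) with h | h
        · exact h
        · exact absurd (hv i h.symm) (not_le.2 hvi)
      exact div_pos hxi (by linarith)
    refine ⟨F.inf' hne (fun i => x i / (-v i)), hεpos, fun i => ?_⟩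
    by_cases hvi : v i < 0
    · have hmem : i ∈ F := Finset.mem_filter.2 ⟨Finset.mem_univ i, hvi⟩
      have hle : F.inf' hne (fun i => x i / (-v i)) ≤ x i / (-v i) :=
        Finset.inf'_le _ hmem
      have h1 : 0 < -v i := by linarith
      have h2 : F.inf' hne (fun i => x i / (-v i)) * (-v i) ≤ x i / (-v i) * (-v i) :=
        mul_le_mul_of_nonneg_right hle h1.le
      rw [div_mul_cancel₀ _ h1.ne'] at h2
      nlinarith
    · have hxi : (0:ℝ) ≤ x i := hx i
      nlinarith [not_lt.1 hvi]
  · refine ⟨1, one_pos, fun i => ?_⟩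
    have h1 : ¬ v i < 0 := fun h => hne ⟨i, Finset.mem_filter.2 ⟨Finset.mem_univ i, h⟩⟩
    have hxi : (0:ℝ) ≤ x i := hx i
    nlinarith [not_lt.1 h1]

lemma sum_subtype_eq_mulVec {m n : ℕ} (A : Matrix (Fin m) (Fin n) ℝ) (x d : Fin n → ℝ)
    (hd : ∀ i, ¬ 0 < x i → d i = 0) :
    ∑ j : {i : Fin n // 0 < x i}, d j.1 • (fun k : Fin m => A k j.1) = A.mulVec d := by
  classical
  funext k
  rw [Finset.sum_apply]
  have h1 : ∀ j : {i : Fin n // 0 < x i},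
      (d j.1 • (fun k : Fin m => A k j.1)) k = d j.1 * A k j.1 := fun j => rfl
  rw [Finset.sum_congr rfl (fun j _ => h1 j),
    ← Finset.sum_subtype (Finset.univ.filter (fun i => 0 < x i)) (by simp)
      (fun i => d i * A k i),
    Finset.sum_subset (Finset.filter_subset _ _)
      (fun i _ hi => by rw [hd i (by simpa using hi)]; ring)]
  simp [Matrix.mulVec, dotProduct, mul_comm]

theorem stmt_11 {m n : ℕ} (A : Matrix (Fin m) (Fin n) ℝ) (b : Fin m → ℝ)
    (w : Fin n → ℝ) (hw : ∀ i, 0 < w i)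
    (x : Fin n → ℝ) (hAx : A.mulVec x = b) (hx : 0 ≤ x) :
    (∀ z : Fin n → ℝ, A.mulVec z = b → 0 ≤ z → z ≠ x →
        ∑ i, w i * |x i| < ∑ i, w i * |z i|) ↔
      (LinearIndependent ℝ (fun j : {i : Fin n // 0 < x i} =>
          fun k : Fin m => A k j.1) ∧
       ∃ η : Fin n → ℝ, (∃ u : Fin m → ℝ, A.transpose.mulVec u = η) ∧
         (∀ i, 0 < x i → η i = w i) ∧ (∀ i, x i = 0 → η i < w i)) := by
  classical
  have hx0 : ∀ i, ¬ 0 < x i → x i = 0 := fun i h => le_antisymm (not_lt.1 h) (hx i)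
  have hxabs : ∀ i, |x i| = x i := fun i => abs_of_nonneg (hx i)
  constructor
  · intro huniq
    -- Key consequence of uniqueness
    have hstar : ∀ v : Fin n → ℝ, A.mulVec v = 0 → (∀ i, x i = 0 → 0 ≤ v i) → v ≠ 0 →
        0 < ∑ i, w i * v i := by
      intro v hAv hvT hvne
      obtain ⟨ε, hε, hnn⟩ := exists_eps x v hx hvT
      have hfeas : A.mulVec (x + ε • v) = b := by
        rw [Matrix.mulVec_add, Matrix.mulVec_smul, hAx, hAv]
        simp
      have hznn : (0 : Fin n → ℝ) ≤ x + ε • v := by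
        intro i
        simpa using hnn i
      have hzne : x + ε • v ≠ x := by
        intro h
        have : ε • v = 0 := by
          have := congrArg (fun y => y - x) h
          simpa [add_sub_cancel_left] using this
        rcases smul_eq_zero.1 this with h' | h'
        · exact hε.ne' h'
        · exact hvne h'
      have hz := huniq (x + ε • v) hfeas hznn hzne
      have hsum : ∑ i, w i * |(x + ε • v) i| = ∑ i, w i * x i + ε * ∑ i, w i * v i := by
        rw [Finset.mul_sum, ← Finset.sum_add_distrib]
        refine Finset.sum_congr rfl fun i _ => ?_
        rw [abs_of_nonneg (hznn i)]
        simp only [Pi.add_apply, Pi.smul_apply, smul_eq_mul]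
        ring
      rw [hsum] at hz
      have hxsum : ∑ i, w i * |x i| = ∑ i, w i * x i :=
        Finset.sum_congr rfl fun i _ => by rw [hxabs i]
      rw [hxsum] at hz
      nlinarith
    have hLI : LinearIndependent ℝ (fun j : {i : Fin n // 0 < x i} =>
        fun k : Fin m => A k j.1) := by
      by_contra hnot
      rw [Fintype.not_linearIndependent_iff] at hnot
      obtain ⟨g, hg, j0, hj0⟩ := hnot
      set v : Fin n → ℝ := fun i => if h : 0 < x i then g ⟨i, h⟩ else 0 with hv
      have hvS : ∀ j : {i : Fin n // 0 < x i}, v j.1 = g j := by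
        intro j; simp [hv, j.2]
      have hv0 : ∀ i, ¬ 0 < x i → v i = 0 := by
        intro i h; simp [hv, h]
      have hAv : A.mulVec v = 0 := by
        rw [← sum_subtype_eq_mulVec A x v hv0, ← hg]
        exact Finset.sum_congr rfl fun j _ => by rw [hvS j]
      have hvne : v ≠ 0 := by
        intro h
        apply hj0
        rw [← hvS j0, h]
        rfl
      have h1 := hstar v hAv (fun i hi => (hv0 i (by rw [hi]; exact lt_irrefl 0)).ge) hvne
      have h2 := hstar (-v) (by rw [Matrix.mulVec_neg, hAv, neg_zero])
        (fun i hi => by rw [Pi.neg_apply, hv0 i (by rw [hi]; exact lt_irrefl 0), neg_zero])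
        (neg_ne_zero.2 hvne)
      have h3 : ∑ i, w i * (-v) i = -∑ i, w i * v i := by
        rw [← Finset.sum_neg_distrib]
        exact Finset.sum_congr rfl fun i _ => by simp [mul_comm]
      rw [h3] at h2
      linarith
    refine ⟨hLI, ?_⟩
    have hLI' := (Fintype.linearIndependent_iff).1 hLI
    -- Step A: find u₀ with (Aᵀu₀)ᵢ = wᵢ on the support
    obtain ⟨u₀, hu₀⟩ : ∃ u₀ : Fin m → ℝ, ∀ i, 0 < x i → A.transpose.mulVec u₀ i = w i := by
      set g : (Fin m → ℝ) →ₗ[ℝ] (Fin n → ℝ) :=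
        { toFun := fun u => fun i => if 0 < x i then A.transpose.mulVec u i else 0
          map_add' := by
            intro a b; funext i
            by_cases h : 0 < x i <;> simp [h, Matrix.mulVec_add]
          map_smul' := by
            intro c a; funext i
            by_cases h : 0 < x i <;> simp [h, Matrix.mulVec_smul] } with hgdef
      obtain ⟨u₀, hu₀⟩ := mem_range_of_forall_dot g (fun i => if 0 < x i then w i else 0) (by
        intro c hc
        set c' : Fin n → ℝ := fun i => if 0 < x i then c i else 0 with hc'def
        have hc'0 : ∀ i, ¬ 0 < x i → c' i = 0 := fun i h => by simp [hc'def, h]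
        have hAc' : A.mulVec c' = 0 := by
          funext k
          have h1 := hc (Pi.single k 1)
          have h2 : ∀ u : Fin m → ℝ, ∑ i, c i * g u i = ∑ k', u k' * A.mulVec c' k' := by
            intro u
            rw [← dot_swap]
            refine Finset.sum_congr rfl fun i _ => ?_
            by_cases h : 0 < x i <;>
              simp [hgdef, hc'def, h, LinearMap.coe_mk, AddHom.coe_mk]
          rw [h2] at h1
          have h4 : ∑ k', (Pi.single k 1 : Fin m → ℝ) k' * A.mulVec c' k' = A.mulVec c' k := by
            rw [Finset.sum_eq_single k]
            · simp
            · intro j _ hj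
              rw [Pi.single_apply, if_neg hj, zero_mul]
            · intro hk; exact absurd (Finset.mem_univ k) hk
          rw [h4] at h1
          exact h1
        have h3 := hLI' (fun j => c' j.1)
          (by rw [sum_subtype_eq_mulVec A x c' hc'0, hAc'])
        refine Finset.sum_eq_zero fun i _ => ?_
        by_cases h : 0 < x i
        · have h4 : c' i = 0 := h3 ⟨i, h⟩
          rw [hc'def] at h4
          simp only [h, if_true] at h4
          simp [h, h4]
        · simp [h])
      refine ⟨u₀, fun i hi => ?_⟩
      have h5 := congrFun hu₀ i
      simpa [hgdef, hi, LinearMap.coe_mk, AddHom.coe_mk] using h5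
    -- separation argument
    by_contra hG
    set s : Set (Fin n → ℝ) := {y | ∀ i, x i = 0 → y i < w i} with hs
    set t : Set (Fin n → ℝ) :=
      {y | ∃ u, A.transpose.mulVec u = y ∧ ∀ i, 0 < x i → y i = w i} with ht
    have hdisj : Disjoint s t := by
      rw [Set.disjoint_left]
      rintro y hys ⟨u, hyu, hyS⟩
      exact hG ⟨y, ⟨u, hyu⟩, hyS, fun i hi => hys i hi⟩
    have hsplit : s = ⋂ i, {y : Fin n → ℝ | x i = 0 → y i < w i} := by
      ext y; simp [hs, Set.mem_iInter]
    have hcase : ∀ i : Fin n, x i = 0 →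
        {y : Fin n → ℝ | x i = 0 → y i < w i} = {y | y i < w i} := by
      intro i h; ext y; simp [h]
    have hcase' : ∀ i : Fin n, ¬ x i = 0 →
        {y : Fin n → ℝ | x i = 0 → y i < w i} = Set.univ := by
      intro i h; ext y; simp [h]
    have hsopen : IsOpen s := by
      rw [hsplit]
      refine isOpen_iInter_of_finite fun i => ?_
      by_cases h : x i = 0
      · rw [hcase i h]
        exact isOpen_lt (continuous_apply i) continuous_const
      · rw [hcase' i h]
        exact isOpen_univ
    have hsconv : Convex ℝ s := by
      rw [hsplit]
      refine convex_iInter fun i => ?_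
      by_cases h : x i = 0
      · rw [hcase i h]
        exact convex_halfSpace_lt ⟨fun a b => rfl, fun c a => rfl⟩ _
      · rw [hcase' i h]
        exact convex_univ
    have htconv : Convex ℝ t := by
      rintro p ⟨u1, hp, hpS⟩ q ⟨u2, hq, hqS⟩ a c ha hc hac
      refine ⟨a • u1 + c • u2, ?_, ?_⟩
      · rw [Matrix.mulVec_add, Matrix.mulVec_smul, Matrix.mulVec_smul, hp, hq]
      · intro i hi
        have e1 := hpS i hi
        have e2 := hqS i hi
        simp only [Pi.add_apply, Pi.smul_apply, smul_eq_mul, e1, e2]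
        linear_combination (w i) * hac
    obtain ⟨f, cc, hfs, hft⟩ := geometric_hahn_banach_open hsconv hsopen htconv hdisj
    set v : Fin n → ℝ := fun i => f (Pi.single i 1 : Fin n → ℝ) with hvdef
    have hfv : ∀ y : Fin n → ℝ, f y = ∑ i, y i * v i := by
      intro y
      have hy : y = ∑ i, y i • (Pi.single i 1 : Fin n → ℝ) := by
        funext j
        rw [Finset.sum_apply]
        simp [Pi.single_apply, mul_ite]
      conv_lhs => rw [hy]
      rw [map_sum]
      exact Finset.sum_congr rfl fun i _ => by rw [_root_.map_smul]; rfl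
    have ha₀ : ∀ δ : ℝ, 0 < δ → f (fun i => w i - δ) < cc := by
      intro δ hδ
      exact hfs _ (fun i _ => by linarith)
    -- v vanishes on the support
    have hvS : ∀ i, 0 < x i → v i = 0 := by
      intro i hi
      by_contra hvi
      set M := (cc - f (fun j => w j - 1)) / v i with hM
      have hmem2 : ((fun j => w j - 1) + M • (Pi.single i 1 : Fin n → ℝ)) ∈ s := by
        intro j hj
        have hne : j ≠ i := by
          intro h
          rw [← h] at hi
          rw [hj] at hi
          exact lt_irrefl 0 hi
        have : (Pi.single i 1 : Fin n → ℝ) j = 0 := by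
          rw [Pi.single_apply, if_neg hne]
        simp only [Pi.add_apply, Pi.smul_apply, smul_eq_mul, this, mul_zero, add_zero]
        linarith
      have h6 := hfs _ hmem2
      rw [map_add, _root_.map_smul] at h6
      have h7 : f ((fun j => w j - 1)) + M * v i < cc := h6
      rw [hM, div_mul_cancel₀ _ hvi] at h7
      linarith
    -- v nonnegative off the support
    have hvT : ∀ i, x i = 0 → 0 ≤ v i := by
      intro i hi
      by_contra hvi
      push_neg at hvi
      have hfa : f (fun j => w j - 1) < cc := ha₀ 1 one_pos
      set M := (cc - f (fun j => w j - 1)) / v i with hM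
      have hM0 : M < 0 := div_neg_of_pos_of_neg (by linarith) hvi
      have hmem2 : ((fun j => w j - 1) + M • (Pi.single i 1 : Fin n → ℝ)) ∈ s := by
        intro j hj
        by_cases hne : j = i
        · subst hne
          simp only [Pi.add_apply, Pi.smul_apply, smul_eq_mul, Pi.single_eq_same, mul_one]
          linarith
        · have : (Pi.single i 1 : Fin n → ℝ) j = 0 := by
            rw [Pi.single_apply, if_neg hne]
          simp only [Pi.add_apply, Pi.smul_apply, smul_eq_mul, this, mul_zero, add_zero]
          linarith
      have h6 := hfs _ hmem2
      rw [map_add, _root_.map_smul] at h6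
      have h7 : f ((fun j => w j - 1)) + M * v i < cc := h6
      rw [hM, div_mul_cancel₀ _ (ne_of_lt hvi)] at h7
      linarith
    have hvnn : ∀ i, 0 ≤ v i := by
      intro i
      by_cases h : 0 < x i
      · rw [hvS i h]
      · exact hvT i (hx0 i h)
    -- f w ≤ cc
    have hfw : f w ≤ cc := by
      by_contra h
      push_neg at h
      set V₀ := ∑ i, v i with hV₀
      have hV₀nn : 0 ≤ V₀ := Finset.sum_nonneg fun i _ => hvnn i
      set δ := (f w - cc) / (V₀ + 1) with hδ
      have hδpos : 0 < δ := div_pos (by linarith) (by linarith)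
      have h8 := ha₀ δ hδpos
      rw [hfv] at h8
      have h9 : ∑ i, (w i - δ) * v i = (∑ i, w i * v i) - δ * V₀ := by
        rw [hV₀, Finset.mul_sum, ← Finset.sum_sub_distrib]
        exact Finset.sum_congr rfl fun i _ => by ring
      rw [h9] at h8
      have h10 : f w = ∑ i, w i * v i := hfv w
      have h11 : δ * V₀ ≤ δ * (V₀ + 1) := by nlinarith
      have h12 : δ * (V₀ + 1) = f w - cc := by
        rw [hδ, div_mul_cancel₀]
        linarith
      linarith
    -- f vanishes on the relevant kernel directions, and cc ≤ f (Aᵀu₀)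
    have htmem : ∀ (M : ℝ) (u' : Fin m → ℝ), (∀ i, 0 < x i → A.transpose.mulVec u' i = 0) →
        cc ≤ f (A.transpose.mulVec u₀) + M * f (A.transpose.mulVec u') := by
      intro M u' hu'
      have hmem3 : A.transpose.mulVec (u₀ + M • u') ∈ t := by
        refine ⟨u₀ + M • u', rfl, fun i hi => ?_⟩
        rw [Matrix.mulVec_add, Matrix.mulVec_smul]
        simp only [Pi.add_apply, Pi.smul_apply, smul_eq_mul]
        rw [hu₀ i hi, hu' i hi]
        ring
      have h6 := hft _ hmem3
      simp only [Matrix.mulVec_add, Matrix.mulVec_smul, map_add, _root_.map_smul,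
        smul_eq_mul] at h6
      exact h6
    have hcη₀ : cc ≤ f (A.transpose.mulVec u₀) := by
      have h6 := htmem 0 0 (fun i _ => by simp)
      simpa using h6
    have hker : ∀ u' : Fin m → ℝ, (∀ i, 0 < x i → A.transpose.mulVec u' i = 0) →
        f (A.transpose.mulVec u') = 0 := by
      intro u' hu'
      by_contra hne
      have h6 := htmem ((cc - 1 - f (A.transpose.mulVec u₀)) / f (A.transpose.mulVec u')) u' hu'
      rw [div_mul_cancel₀ _ hne] at h6
      linarith
    have hvne : v ≠ 0 := by
      intro h0
      have h1 := ha₀ 1 one_pos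
      have h2 := hcη₀
      rw [hfv] at h1 h2
      simp only [h0, Pi.zero_apply, mul_zero, Finset.sum_const_zero] at h1 h2
      linarith
    -- find ξ supported on the support with Aξ = -Av
    set g2 : (Fin n → ℝ) →ₗ[ℝ] (Fin m → ℝ) :=
      { toFun := fun d => A.mulVec (fun i => if 0 < x i then d i else 0)
        map_add' := by
          intro a c
          have h : (fun i => if 0 < x i then (a + c) i else 0)
              = (fun i => if 0 < x i then a i else 0) + (fun i => if 0 < x i then c i else 0) := by
            funext i; by_cases h : 0 < x i <;> simp [h]
          rw [h, Matrix.mulVec_add]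
        map_smul' := by
          intro r a
          have h : (fun i => if 0 < x i then (r • a) i else 0)
              = r • (fun i => if 0 < x i then a i else 0) := by
            funext i; by_cases h : 0 < x i <;> simp [h]
          rw [h, Matrix.mulVec_smul]
          rfl } with hg2
    obtain ⟨t₀, ht₀⟩ := mem_range_of_forall_dot g2 (-(A.mulVec v)) (by
      intro c' hc'
      have hAc' : ∀ i, 0 < x i → A.transpose.mulVec c' i = 0 := by
        intro i hi
        have h1 := hc' (Pi.single i 1)
        have h2 := dot_swap A (fun j => if 0 < x j then (Pi.single i 1 : Fin n → ℝ) j else 0) c'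
        have h2' : ∑ k, c' k * g2 (Pi.single i 1) k
            = ∑ j, (if 0 < x j then (Pi.single i 1 : Fin n → ℝ) j else 0) * A.transpose.mulVec c' j := by
          rw [h2]
          exact Finset.sum_congr rfl fun k _ => rfl
        rw [h2'] at h1
        have h3 : ∑ j, (if 0 < x j then (Pi.single i 1 : Fin n → ℝ) j else 0) * A.transpose.mulVec c' j
            = A.transpose.mulVec c' i := by
          rw [Finset.sum_eq_single i]
          · simp [hi]
          · intro j _ hj
            rw [Pi.single_apply, if_neg hj]
            simp
          · intro h; exact absurd (Finset.mem_univ i) h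
        rw [h3] at h1
        exact h1
      have h5 := hker c' hAc'
      rw [hfv] at h5
      have h6 := dot_swap A v c'
      have h7 : ∑ k, c' k * A.mulVec v k = 0 := by
        rw [← h6, ← h5]
        exact Finset.sum_congr rfl fun i _ => mul_comm _ _
      have h8 : ∑ j, c' j * (-(A.mulVec v)) j = -∑ k, c' k * A.mulVec v k := by
        rw [← Finset.sum_neg_distrib]
        exact Finset.sum_congr rfl fun i _ => by simp [mul_comm]
      rw [h8, h7, neg_zero])
    set ξ : Fin n → ℝ := fun i => if 0 < x i then t₀ i else 0 with hξdef
    have hAξ : A.mulVec ξ = -(A.mulVec v) := ht₀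
    set vv : Fin n → ℝ := v + ξ with hvvdef
    have hAvv : A.mulVec vv = 0 := by
      rw [hvvdef, Matrix.mulVec_add, hAξ]
      simp
    have hvvT : ∀ i, x i = 0 → 0 ≤ vv i := by
      intro i hi
      have hxi : ¬ 0 < x i := by rw [hi]; exact lt_irrefl 0
      have : ξ i = 0 := by simp [hξdef, hxi]
      simp only [hvvdef, Pi.add_apply, this, add_zero]
      exact hvT i hi
    have hvvne : vv ≠ 0 := by
      obtain ⟨i, hi⟩ := Function.ne_iff.1 hvne
      have hxi : ¬ 0 < x i := fun h => hi (by rw [hvS i h]; rfl)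
      intro h0
      have h1 := congrFun h0 i
      have h2 : ξ i = 0 := by simp [hξdef, hxi]
      simp only [hvvdef, Pi.add_apply, h2, add_zero, Pi.zero_apply] at h1
      exact hi (by simpa using h1)
    have hsum1 : ∑ i, (w i - A.transpose.mulVec u₀ i) * vv i
        = ∑ i, (w i - A.transpose.mulVec u₀ i) * v i := by
      refine Finset.sum_congr rfl fun i _ => ?_
      by_cases h : 0 < x i
      · rw [hu₀ i h]; ring
      · have : ξ i = 0 := by simp [hξdef, h]
        simp only [hvvdef, Pi.add_apply, this, add_zero]
    have hsum2 : ∑ i, A.transpose.mulVec u₀ i * vv i = 0 := by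
      have h6 := dot_swap A vv u₀
      rw [hAvv] at h6
      simp only [Pi.zero_apply, mul_zero, Finset.sum_const_zero] at h6
      rw [← h6]
      exact Finset.sum_congr rfl fun i _ => mul_comm _ _
    have hfw2 : ∑ i, (w i - A.transpose.mulVec u₀ i) * v i ≤ 0 := by
      have h10 : f w = ∑ i, w i * v i := hfv w
      have h11 : f (A.transpose.mulVec u₀) = ∑ i, A.transpose.mulVec u₀ i * v i :=
        hfv _
      have h12 : ∑ i, (w i - A.transpose.mulVec u₀ i) * v i
          = (∑ i, w i * v i) - ∑ i, A.transpose.mulVec u₀ i * v i := by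
        rw [← Finset.sum_sub_distrib]
        exact Finset.sum_congr rfl fun i _ => by ring
      rw [h12, ← h10, ← h11]
      linarith
    have hfinal : ∑ i, w i * vv i ≤ 0 := by
      have h13 : ∑ i, w i * vv i
          = ∑ i, (w i - A.transpose.mulVec u₀ i) * vv i
            + ∑ i, A.transpose.mulVec u₀ i * vv i := by
        rw [← Finset.sum_add_distrib]
        exact Finset.sum_congr rfl fun i _ => by ring
      rw [h13, hsum1, hsum2]
      linarith
    exact absurd (hstar vv hAvv hvvT hvvne) (not_lt.2 hfinal)
  · rintro ⟨hLI, η, ⟨u, hu⟩, hηS, hηT⟩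
    intro z hAz hz hzx
    have hzabs : ∀ i, |z i| = z i := fun i => abs_of_nonneg (hz i)
    have hηx : ∑ i, η i * x i = ∑ i, w i * x i := by
      refine Finset.sum_congr rfl fun i _ => ?_
      by_cases h : 0 < x i
      · rw [hηS i h]
      · rw [hx0 i h]; ring
    have hηz : ∑ i, η i * z i = ∑ i, η i * x i := by
      rw [← hu]
      have e1 : ∑ i, A.transpose.mulVec u i * z i = ∑ i, z i * A.transpose.mulVec u i :=
        Finset.sum_congr rfl fun i _ => mul_comm _ _
      have e2 : ∑ i, A.transpose.mulVec u i * x i = ∑ i, x i * A.transpose.mulVec u i :=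
        Finset.sum_congr rfl fun i _ => mul_comm _ _
      rw [e1, e2, dot_swap, dot_swap, hAz, hAx]
    by_cases hcase : ∀ i, x i = 0 → z i = 0
    · exfalso
      apply hzx
      have hd0 : ∀ i, ¬ 0 < x i → (z - x) i = 0 := by
        intro i h
        have := hx0 i h
        simp [hcase i this, this]
      have hAd : A.mulVec (z - x) = 0 := by
        rw [Matrix.mulVec_sub, hAz, hAx, sub_self]
      rw [Fintype.linearIndependent_iff] at hLI
      have hLI2 := hLI (fun j => (z - x) j.1)
        (by rw [sum_subtype_eq_mulVec A x (z - x) hd0, hAd])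
      funext i
      by_cases h : 0 < x i
      · have := hLI2 ⟨i, h⟩
        have h2 : z i - x i = 0 := this
        linarith
      · have := hd0 i h
        have h2 : z i - x i = 0 := this
        linarith
    · push_neg at hcase
      obtain ⟨i0, hxi0, hzi0⟩ := hcase
      have hzi0' : 0 < z i0 := lt_of_le_of_ne (hz i0) (Ne.symm hzi0)
      have hlt : ∑ i, η i * z i < ∑ i, w i * z i := by
        apply Finset.sum_lt_sum
        · intro i _
          by_cases h : 0 < x i
          · rw [hηS i h]
          · exact mul_le_mul_of_nonneg_right (hηT i (hx0 i h)).le (hz i)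
        · exact ⟨i0, Finset.mem_univ i0, mul_lt_mul_of_pos_right (hηT i0 hxi0) hzi0'⟩
      calc ∑ i, w i * |x i| = ∑ i, w i * x i :=
              Finset.sum_congr rfl fun i _ => by rw [hxabs i]
        _ = ∑ i, η i * z i := by rw [hηz, hηx]
        _ < ∑ i, w i * z i := hlt
        _ = ∑ i, w i * |z i| := Finset.sum_congr rfl fun i _ => by rw [hzabs i]
end

section
/- Let A be a real m×n matrix with m < n. If Aᵀ satisfies the range space property of order K, then any K columns of A are linearly independent; in particular K < Spark(A), the smallest number of linearly dependent columns of A. -/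
open Matrix

lemma key {m n : ℕ} (A : Matrix (Fin m) (Fin n) ℝ) (K : ℕ)
    (h : ∀ S : Finset (Fin n), S.card ≤ K →
      ∃ η : Fin n → ℝ, (∃ u : Fin m → ℝ, A.transpose.mulVec u = η) ∧
        (∀ i ∈ S, η i = 1) ∧ (∀ i ∉ S, η i < 1))
    (S : Finset (Fin n)) (hS : S.card ≤ K) :
    LinearIndependent ℝ (fun j : {i : Fin n // i ∈ S} => fun i : Fin m => A i j.1) := by
  by_contra hdep
  rw [Fintype.not_linearIndependent_iff] at hdep
  obtain ⟨g, hg0, j0, hj0⟩ := hdep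
  set x : Fin n → ℝ := fun i => if hi : i ∈ S then g ⟨i, hi⟩ else 0 with hx
  have hxA : A.mulVec x = 0 := by
    funext i
    have h1 := congrFun hg0 i
    simp only [Finset.sum_apply, Pi.smul_apply, smul_eq_mul, Pi.zero_apply] at h1
    have h2 : (A *ᵥ x) i = ∑ j : {i // i ∈ S}, g j * A i j.1 := by
      simp only [mulVec, dotProduct]
      have h3 : ∑ j ∈ S, A i j * x j = ∑ j : {i // i ∈ S}, g j * A i j.1 := by
        rw [← Finset.sum_attach S (fun j => A i j * x j)]
        exact Finset.sum_congr rfl fun j _ => by simp [hx, dif_pos j.2, mul_comm]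
      rw [← h3]
      exact (Finset.sum_subset (Finset.subset_univ S)
        (by intro j _ hj; simp [hx, dif_neg hj])).symm
    rw [Pi.zero_apply, h2, h1]
  have hdot : ∀ η : Fin n → ℝ, (∃ u : Fin m → ℝ, A.transpose.mulVec u = η) →
      ∑ i ∈ S, η i * x i = 0 := by
    rintro η ⟨u, rfl⟩
    have : (A.transpose.mulVec u) ⬝ᵥ x = 0 := by
      rw [mulVec_transpose, ← dotProduct_mulVec, hxA, dotProduct_zero]
    rw [← this, dotProduct]
    rw [Finset.sum_subset (Finset.subset_univ S)]
    intro j _ hj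
    simp [hx, dif_neg hj]
  set i0 : Fin n := j0.1
  have hi0 : i0 ∈ S := j0.2
  have hxi0 : x i0 ≠ 0 := by
    show (if hi : i0 ∈ S then g ⟨i0, hi⟩ else 0) ≠ 0
    rw [dif_pos hi0]; exact hj0
  obtain ⟨η, hη, h1, _⟩ := h S hS
  have hsum : ∑ i ∈ S, x i = 0 := by
    rw [← hdot η hη]
    exact Finset.sum_congr rfl fun i hi => by rw [h1 i hi, one_mul]
  obtain ⟨η', hη', h1', h2'⟩ := h (S.erase i0) (le_trans (Finset.card_le_card (Finset.erase_subset _ _)) hS)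
  have hsum' : ∑ i ∈ S, η' i * x i = 0 := hdot η' hη'
  rw [← Finset.sum_erase_add S _ hi0] at hsum hsum'
  have he : ∑ i ∈ S.erase i0, η' i * x i = ∑ i ∈ S.erase i0, x i :=
    Finset.sum_congr rfl fun i hi => by rw [h1' i hi, one_mul]
  rw [he] at hsum'
  have hlt : η' i0 < 1 := h2' i0 (Finset.notMem_erase i0 S)
  have : (η' i0 - 1) * x i0 = 0 := by linarith
  rcases mul_eq_zero.mp this with h' | h'
  · linarith
  · exact hxi0 h'

/-- `Aᵀ` satisfies the range space property of order `K`: for every subset `S`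
of the column indices with `|S| ≤ K` there is `η ∈ R(Aᵀ)` with `η i = 1` for
`i ∈ S` and `η i < 1` for `i ∉ S`. -/
def RSPorder {m n : ℕ} (A : Matrix (Fin m) (Fin n) ℝ) (K : ℕ) : Prop :=
  ∀ S : Finset (Fin n), S.card ≤ K →
    ∃ η : Fin n → ℝ, (∃ u : Fin m → ℝ, A.transpose.mulVec u = η) ∧
      (∀ i ∈ S, η i = 1) ∧ (∀ i ∉ S, η i < 1)

/-- `Spark A` is the smallest number of columns of `A` that are linearly dependent. -/
noncomputable def spark {m n : ℕ} (A : Matrix (Fin m) (Fin n) ℝ) : ℕ :=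
  sInf {k : ℕ | ∃ S : Finset (Fin n), S.card = k ∧
    ¬ LinearIndependent ℝ (fun j : {i : Fin n // i ∈ S} => fun i : Fin m => A i j.1)}

theorem stmt_13 {m n : ℕ} (hmn : m < n) (A : Matrix (Fin m) (Fin n) ℝ) (K : ℕ)
    (h : RSPorder A K) :
    (∀ S : Finset (Fin n), S.card = K →
      LinearIndependent ℝ (fun j : {i : Fin n // i ∈ S} => fun i : Fin m => A i j.1)) ∧
    K < spark A := by
  have hK := key A K h
  refine ⟨fun S hS => hK S hS.le, ?_⟩
  have hmem : n ∈ {k : ℕ | ∃ S : Finset (Fin n), S.card = k ∧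
      ¬ LinearIndependent ℝ (fun j : {i : Fin n // i ∈ S} => fun i : Fin m => A i j.1)} := by
    refine ⟨Finset.univ, by simp, fun hli => ?_⟩
    have := hli.fintype_card_le_finrank
    rw [Fintype.card_coe, Finset.card_univ, Fintype.card_fin, Module.finrank_pi,
      Fintype.card_fin] at this
    omega
  have hspark := Nat.sInf_mem (⟨n, hmem⟩ : Set.Nonempty _)
  obtain ⟨S, hScard, hSdep⟩ := hspark
  by_contra hle
  exact hSdep (hK S (by unfold spark at hle; omega))
end

section
/- Let A be a real m×n matrix with m < n. If Aᵀ satisfies the range space property of order K, then every x̂ ∈ ℝ^n with x̂ ≥ 0 and ‖x̂‖₀ ≤ K is both the unique least ℓ1-norm nonnegative solution and the unique sparsest nonnegative solution to the system Az = Ax̂. -/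
open Matrix

private lemma dot_id {m n : ℕ} (A : Matrix (Fin m) (Fin n) ℝ) (u : Fin m → ℝ)
    (w : Fin n → ℝ) : ∑ i, (A.transpose.mulVec u) i * w i = u ⬝ᵥ A.mulVec w := by
  rw [Matrix.mulVec_transpose]
  show Matrix.vecMul u A ⬝ᵥ w = u ⬝ᵥ A.mulVec w
  rw [Matrix.dotProduct_mulVec]

private lemma key_lemma {m n K : ℕ} (A : Matrix (Fin m) (Fin n) ℝ)
    (h : RSPorder A K) (x : Fin n → ℝ) (hx : 0 ≤ x)
    (hK : {i : Fin n | x i ≠ 0}.ncard ≤ K)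
    (z : Fin n → ℝ) (hz : A.mulVec z = A.mulVec x) (hznn : 0 ≤ z) (hne : z ≠ x) :
    ∑ i, x i < ∑ i, z i := by
  classical
  set S : Finset (Fin n) := Finset.univ.filter (fun i => x i ≠ 0) with hSdef
  have hScard : S.card ≤ K := by
    have hc : {i : Fin n | x i ≠ 0}.ncard = S.card := by
      rw [Set.ncard_eq_toFinset_card']
      congr 1
      ext i
      simp [hSdef]
    omega
  obtain ⟨η, ⟨u, hu⟩, hηS, hηS'⟩ := h S hScard
  have hη1 : ∀ i, η i ≤ 1 := by
    intro i
    by_cases hi : i ∈ S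
    · exact le_of_eq (hηS i hi)
    · exact (hηS' i hi).le
  have key1 : ∀ w : Fin n → ℝ, ∑ i, η i * w i = u ⬝ᵥ A.mulVec w := by
    intro w
    rw [← hu]
    exact dot_id A u w
  have hxz : ∑ i, η i * x i = ∑ i, x i := by
    apply Finset.sum_congr rfl
    intro i _
    by_cases hxi : x i = 0
    · simp [hxi]
    · rw [hηS i (by simp [hSdef, hxi]), one_mul]
  have hzsum : ∑ i, η i * z i = ∑ i, x i := by
    rw [key1 z, hz, ← key1 x, hxz]
  by_cases hcase : ∃ i, i ∉ S ∧ z i ≠ 0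
  · obtain ⟨i0, hi0S, hi0⟩ := hcase
    have hlt : ∑ i, η i * z i < ∑ i, z i := by
      apply Finset.sum_lt_sum
      · intro i _
        exact mul_le_of_le_one_left (hznn i) (hη1 i)
      · exact ⟨i0, Finset.mem_univ _,
          mul_lt_of_lt_one_left ((hznn i0).lt_of_ne (Ne.symm hi0)) (hηS' i0 hi0S)⟩
    linarith [hzsum]
  · push_neg at hcase
    have hAv : A.mulVec (z - x) = 0 := by
      rw [Matrix.mulVec_sub, hz, sub_self]
    set T : Finset (Fin n) := Finset.univ.filter (fun i => z i - x i < 0) with hTdef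
    have hTS : T ⊆ S := by
      intro i hi
      simp only [hTdef, Finset.mem_filter, Finset.mem_univ, true_and] at hi
      by_contra hiS
      have hx0 : x i = 0 := by
        by_contra hx0
        exact hiS (by simp [hSdef, hx0])
      have hz0 : z i = 0 := hcase i hiS
      rw [hx0, hz0] at hi
      simp at hi
    have memT : ∀ i, i ∈ T ↔ z i - x i < 0 := by
      intro i
      simp only [hTdef, Finset.mem_filter, Finset.mem_univ, true_and]
    obtain ⟨η', ⟨u', hu'⟩, hT1, hT2⟩ := h T (le_trans (Finset.card_le_card hTS) hScard)
    have hη'1 : ∀ i, η' i ≤ 1 := by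
      intro i
      by_cases hi : i ∈ T
      · exact le_of_eq (hT1 i hi)
      · exact (hT2 i hi).le
    have e2 : ∑ i, η' i * (z i - x i) = 0 := by
      have := dot_id A u' (z - x)
      rw [hu', hAv, dotProduct_zero] at this
      simpa using this
    have hpos : ∃ i, 0 < z i - x i := by
      by_contra hp
      push_neg at hp
      have e3 : ∑ i, (z i - x i) = 0 := by
        rw [← e2]
        apply Finset.sum_congr rfl
        intro i _
        rcases lt_or_eq_of_le (hp i) with h1 | h1
        · rw [hT1 i ((memT i).mpr h1), one_mul]
        · rw [h1, mul_zero]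
      have hall : ∀ i ∈ Finset.univ, z i - x i = 0 :=
        (Finset.sum_eq_zero_iff_of_nonpos (fun i _ => hp i)).mp e3
      apply hne
      funext i
      have := hall i (Finset.mem_univ i)
      linarith
    obtain ⟨i0, hi0⟩ := hpos
    have hlt : ∑ i, η' i * (z i - x i) < ∑ i, (z i - x i) := by
      apply Finset.sum_lt_sum
      · intro i _
        by_cases hv : z i - x i < 0
        · rw [hT1 i ((memT i).mpr hv), one_mul]
        · push_neg at hv
          exact mul_le_of_le_one_left hv (hη'1 i)
      · refine ⟨i0, Finset.mem_univ _, ?_⟩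
        have hi0T : i0 ∉ T := by rw [memT]; linarith
        exact mul_lt_of_lt_one_left hi0 (hT2 i0 hi0T)
    have hsub : ∑ i, (z i - x i) = ∑ i, z i - ∑ i, x i := Finset.sum_sub_distrib _ _
    linarith

theorem stmt_15 {m n : ℕ} (hmn : m < n) (A : Matrix (Fin m) (Fin n) ℝ) (K : ℕ)
    (h : RSPorder A K)
    (x : Fin n → ℝ) (hx : 0 ≤ x) (hK : {i : Fin n | x i ≠ 0}.ncard ≤ K) :
    (∀ z : Fin n → ℝ, A.mulVec z = A.mulVec x → 0 ≤ z → z ≠ x →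
        ∑ i, |x i| < ∑ i, |z i|) ∧
    (∀ z : Fin n → ℝ, A.mulVec z = A.mulVec x → 0 ≤ z → z ≠ x →
        {i : Fin n | x i ≠ 0}.ncard < {i : Fin n | z i ≠ 0}.ncard) := by
  constructor
  · intro z hz hznn hne
    have := key_lemma A h x hx hK z hz hznn hne
    calc ∑ i, |x i| = ∑ i, x i := by
          apply Finset.sum_congr rfl; intro i _; exact abs_of_nonneg (hx i)
      _ < ∑ i, z i := this
      _ = ∑ i, |z i| := by
          apply Finset.sum_congr rfl; intro i _; exact (abs_of_nonneg (hznn i)).symm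
  · intro z hz hznn hne
    by_contra hlt
    push_neg at hlt
    have h1 := key_lemma A h x hx hK z hz hznn hne
    have h2 := key_lemma A h z hznn (le_trans hlt hK) x hz.symm hx hne.symm
    linarith
end
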